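/- arXiv:1210.8424 — 9 statements merged into one kernel-verified Lean document; each statement's English description precedes it below -/
import Mathlib

section
/- If G is a simple digraph on n vertices with no directed cycles of length at most 2, then the number of induced 3-vertex directed paths in G is at most 2n^3/25. -/
/-- A digraph (given by its edge relation) is 2-free: no loops and no 2-cycles. -/
def TwoFree {V : Type*} (E : V → V → Prop) : Prop :=
  (∀ v, ¬ E v v) ∧ ∀ u v, ¬ (E u v ∧ E v u)

/-- `(u, w, v)` is an induced directed 3-vertex path. -/
def InducedP3 {V : Type*} (E : V → V → Prop) (u w v : V) : Prop :=
  u ≠ w ∧ w ≠ v ∧ u ≠ v ∧ E u w ∧ E w v ∧ ¬ E w u ∧ ¬ E v w ∧ ¬ E u v ∧ ¬ E v u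

instance {V : Type*} [DecidableEq V] (E : V → V → Prop) [DecidableRel E] (u w v : V) :
    Decidable (InducedP3 E u w v) := by unfold InducedP3; infer_instance

/-- The number of induced 3-vertex directed paths. -/
def p3Count (n : ℕ) (E : Fin n → Fin n → Prop) [DecidableRel E] : ℕ :=
  ((Finset.univ : Finset (Fin n × Fin n × Fin n)).filter
    (fun p => InducedP3 E p.1 p.2.1 p.2.2)).card

namespace BondyAux

open Finset

def chiZ (P : Prop) [Decidable P] : ℤ := if P then 1 else 0

variable {n : ℕ} (E : Fin n → Fin n → Prop) [DecidableRel E]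

def g1 (w x : Fin n) : ℤ := chiZ (E x w) - chiZ (E w x)

def g2 (w x : Fin n) : ℤ := chiZ (E w x) - 2 * chiZ (x ≠ w ∧ ¬ E x w ∧ ¬ E w x)

def FF (w x y : Fin n) : ℤ := 11 * (g1 E w x * g1 E w y) + g2 E w x * g2 E w y

def jj (u w v : Fin n) : ℤ := chiZ (InducedP3 E u w v)

lemma g1_self (w : Fin n) : g1 E w w = 0 := sub_self _

lemma g2_self (h2 : TwoFree E) (w : Fin n) : g2 E w w = 0 := by
  simp [g2, chiZ, h2.1 w]

lemma FF_left (h2 : TwoFree E) (α β : Fin n) : FF E α α β = 0 := by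
  simp [FF, g1_self, g2_self E h2]

lemma FF_right (h2 : TwoFree E) (α β : Fin n) : FF E α β α = 0 := by
  simp [FF, g1_self, g2_self E h2]

lemma FF_diag_le (h2 : TwoFree E) (w x : Fin n) : FF E w x x ≤ 12 := by
  by_cases h : E x w
  · have h' : ¬ E w x := fun h'' => h2.2 x w ⟨h, h''⟩
    simp [FF, g1, g2, chiZ, h, h']
  · by_cases h' : E w x
    · simp [FF, g1, g2, chiZ, h, h']
    · by_cases hx : x = w
      · subst hx; simp [FF, g1, g2, chiZ, h]
      · simp [FF, g1, g2, chiZ, h, h', hx]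

lemma jj_rep1 (u v : Fin n) : jj E u u v = 0 := by
  simp [jj, InducedP3, chiZ]

lemma jj_rep2 (u w : Fin n) : jj E u w w = 0 := by
  simp [jj, InducedP3, chiZ]

lemma jj_rep3 (u w : Fin n) : jj E u w u = 0 := by
  simp [jj, InducedP3, chiZ]

lemma tri (h2 : TwoFree E) (α β : Fin n) :
    (E α β ∧ ¬ E β α) ∨ (E β α ∧ ¬ E α β) ∨ (¬ E α β ∧ ¬ E β α) := by
  by_cases h : E α β
  · exact Or.inl ⟨h, fun h' => h2.2 α β ⟨h, h'⟩⟩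
  · by_cases h' : E β α
    · exact Or.inr (Or.inl ⟨h', h⟩)
    · exact Or.inr (Or.inr ⟨h, h'⟩)

lemma key (h2 : TwoFree E) (w x y : Fin n) :
    50 * (jj E w x y + jj E w y x + jj E x w y + jj E x y w + jj E y w x + jj E y x w)
      + (FF E w x y + FF E w y x + FF E x w y + FF E x y w + FF E y w x + FF E y x w)
      ≤ 24 := by
  by_cases hxy : x = y
  · subst hxy
    have hd := FF_diag_le E h2 w x
    simp only [jj_rep2, jj_rep3, jj_rep1, FF_left E h2, FF_right E h2]
    linarith
  · by_cases hwx : w = x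
    · subst hwx
      have hd := FF_diag_le E h2 y w
      simp only [jj_rep1, jj_rep2, jj_rep3, FF_left E h2, FF_right E h2]
      linarith
    · by_cases hwy : w = y
      · subst hwy
        have hd := FF_diag_le E h2 x w
        simp only [jj_rep1, jj_rep2, jj_rep3, FF_left E h2, FF_right E h2]
        linarith
      · have n1 : w ≠ x := hwx
        have n2 : x ≠ w := Ne.symm n1
        have n3 : w ≠ y := hwy
        have n4 : y ≠ w := Ne.symm n3
        have n5 : x ≠ y := hxy
        have n6 : y ≠ x := Ne.symm n5
        rcases tri E h2 x w with ⟨a1, a2⟩ | ⟨a1, a2⟩ | ⟨a1, a2⟩ <;>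
          rcases tri E h2 w y with ⟨b1, b2⟩ | ⟨b1, b2⟩ | ⟨b1, b2⟩ <;>
            rcases tri E h2 x y with ⟨c1, c2⟩ | ⟨c1, c2⟩ | ⟨c1, c2⟩ <;>
              simp [jj, FF, g1, g2, chiZ, InducedP3, a1, a2, b1, b2, c1, c2,
                n1, n2, n3, n4, n5, n6]

lemma sumFF_nonneg (h2 : TwoFree E) : 0 ≤ ∑ w, ∑ x, ∑ y, FF E w x y := by
  apply Finset.sum_nonneg
  intro w _
  have hexp : ∑ x, ∑ y, FF E w x y
      = 11 * ((∑ x, g1 E w x) * (∑ y, g1 E w y))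
        + (∑ x, g2 E w x) * (∑ y, g2 E w y) := by
    rw [Finset.sum_mul_sum, Finset.sum_mul_sum, Finset.mul_sum]
    rw [← Finset.sum_add_distrib]
    apply Finset.sum_congr rfl
    intro x _
    rw [Finset.mul_sum, ← Finset.sum_add_distrib]
    rfl
  rw [hexp]
  have h1 := mul_self_nonneg (∑ x, g1 E w x)
  have h2' := mul_self_nonneg (∑ x, g2 E w x)
  linarith

lemma sum3_swap12 (f : Fin n → Fin n → Fin n → ℤ) :
    ∑ a, ∑ b, ∑ c, f a b c = ∑ a, ∑ b, ∑ c, f b a c :=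
  Finset.sum_comm

lemma sum3_swap23 (f : Fin n → Fin n → Fin n → ℤ) :
    ∑ a, ∑ b, ∑ c, f a b c = ∑ a, ∑ b, ∑ c, f a c b :=
  Finset.sum_congr rfl fun _ _ => Finset.sum_comm

lemma sum3_swap13 (f : Fin n → Fin n → Fin n → ℤ) :
    ∑ a, ∑ b, ∑ c, f a b c = ∑ a, ∑ b, ∑ c, f c b a := by
  rw [sum3_swap12, sum3_swap23, sum3_swap12]

lemma sum3_cyc1 (f : Fin n → Fin n → Fin n → ℤ) :
    ∑ a, ∑ b, ∑ c, f a b c = ∑ a, ∑ b, ∑ c, f b c a :=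
  (sum3_swap23 f).trans (sum3_swap12 (fun a b c => f a c b))

lemma sum3_cyc2 (f : Fin n → Fin n → Fin n → ℤ) :
    ∑ a, ∑ b, ∑ c, f a b c = ∑ a, ∑ b, ∑ c, f c a b :=
  (sum3_swap12 f).trans (sum3_swap23 (fun a b c => f b a c))

end BondyAux

theorem bondy_bound (n : ℕ) (E : Fin n → Fin n → Prop) [DecidableRel E]
    (h2 : TwoFree E) :
    (p3Count n E : ℝ) ≤ 2 * (n : ℝ) ^ 3 / 25 := by
  classical
  open BondyAux in
  -- the integer count as a triple sum
  have hcount : (p3Count n E : ℤ) = ∑ u, ∑ m, ∑ v, jj E u m v := by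
    unfold p3Count
    rw [Finset.card_filter]
    push_cast
    rw [Fintype.sum_prod_type]
    apply Finset.sum_congr rfl
    intro u _
    rw [Fintype.sum_prod_type]
    apply Finset.sum_congr rfl
    intro m _
    apply Finset.sum_congr rfl
    intro v _
    simp [jj, chiZ, apply_ite (Nat.cast : ℕ → ℤ)]
  set Pz : ℤ := ∑ u, ∑ m, ∑ v, jj E u m v with hPz
  set SF : ℤ := ∑ w, ∑ x, ∑ y, FF E w x y with hSF
  -- sum the pointwise inequality
  have hbig : ∑ w, ∑ x, ∑ y,
      (50 * (jj E w x y + jj E w y x + jj E x w y + jj E x y w + jj E y w x + jj E y x w)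
        + (FF E w x y + FF E w y x + FF E x w y + FF E x y w + FF E y w x + FF E y x w))
      ≤ (n : ℤ) ^ 3 * 24 := by
    have h24 : ∑ w : Fin n, ∑ x : Fin n, ∑ y : Fin n, (24 : ℤ) = (n : ℤ) ^ 3 * 24 := by
      simp [Finset.sum_const, Finset.card_univ]
      ring
    rw [← h24]
    apply Finset.sum_le_sum
    intro w _
    apply Finset.sum_le_sum
    intro x _
    apply Finset.sum_le_sum
    intro y _
    exact key E h2 w x y
  -- expand the left side
  have hsplit : ∑ w, ∑ x, ∑ y,
      (50 * (jj E w x y + jj E w y x + jj E x w y + jj E x y w + jj E y w x + jj E y x w)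
        + (FF E w x y + FF E w y x + FF E x w y + FF E x y w + FF E y w x + FF E y x w))
      = 300 * Pz + 6 * SF := by
    have l1 : ∑ w, ∑ x, ∑ y, jj E w y x = Pz := (sum3_swap23 (jj E)).symm
    have l2 : ∑ w, ∑ x, ∑ y, jj E x w y = Pz := (sum3_swap12 (jj E)).symm
    have l3 : ∑ w, ∑ x, ∑ y, jj E x y w = Pz := (sum3_cyc1 (jj E)).symm
    have l4 : ∑ w, ∑ x, ∑ y, jj E y w x = Pz := (sum3_cyc2 (jj E)).symm
    have l5 : ∑ w, ∑ x, ∑ y, jj E y x w = Pz := (sum3_swap13 (jj E)).symm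
    have m1 : ∑ w, ∑ x, ∑ y, FF E w y x = SF := (sum3_swap23 (FF E)).symm
    have m2 : ∑ w, ∑ x, ∑ y, FF E x w y = SF := (sum3_swap12 (FF E)).symm
    have m3 : ∑ w, ∑ x, ∑ y, FF E x y w = SF := (sum3_cyc1 (FF E)).symm
    have m4 : ∑ w, ∑ x, ∑ y, FF E y w x = SF := (sum3_cyc2 (FF E)).symm
    have m5 : ∑ w, ∑ x, ∑ y, FF E y x w = SF := (sum3_swap13 (FF E)).symm
    simp only [mul_add, Finset.sum_add_distrib, Finset.mul_sum]
    simp only [← Finset.mul_sum]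
    rw [l1, l2, l3, l4, l5, m1, m2, m3, m4, m5, ← hPz, ← hSF]
    ring
  have hFFnn : (0 : ℤ) ≤ SF := sumFF_nonneg E h2
  have hmain : 50 * (p3Count n E : ℤ) ≤ 4 * (n : ℤ) ^ 3 := by
    rw [hcount]
    have h' : 300 * Pz + 6 * SF ≤ (n : ℤ) ^ 3 * 24 := by
      rw [← hsplit]; exact hbig
    linarith
  have hreal : 50 * (p3Count n E : ℝ) ≤ 4 * (n : ℝ) ^ 3 := by
    exact_mod_cast hmain
  linarith
end

section
/- Let n ≥ 4 and let β be an integer with −2 ≤ 8β − 3n ≤ 2. Suppose X and Y are finite sets with |X| + |Y| = n, and t is a nonnegative integer with t ≤ 2|X| and t ≤ 2|Y|. Then |X|·(8β − 3n) + t + n·(n − 2β − 1)·(2β − n/2 + 1) ≤ n^3/16. -/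
theorem key_numerical_inequality {α β' : Type*} (n b : ℤ) (hn : 4 ≤ n)
    (hb1 : -2 ≤ 8 * b - 3 * n) (hb2 : 8 * b - 3 * n ≤ 2)
    (X : Finset α) (Y : Finset β') (hcard : (X.card : ℤ) + (Y.card : ℤ) = n)
    (t : ℕ) (ht1 : (t : ℤ) ≤ 2 * X.card) (ht2 : (t : ℤ) ≤ 2 * Y.card) :
    (X.card : ℚ) * (8 * (b : ℚ) - 3 * (n : ℚ)) + (t : ℚ)
      + (n : ℚ) * ((n : ℚ) - 2 * b - 1) * (2 * (b : ℚ) - (n : ℚ) / 2 + 1)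
      ≤ (n : ℚ) ^ 3 / 16 := by
  have hnq : (4 : ℚ) ≤ (n : ℚ) := by exact_mod_cast hn
  have hb1q : (-2 : ℚ) ≤ 8 * (b : ℚ) - 3 * (n : ℚ) := by exact_mod_cast hb1
  have hb2q : 8 * (b : ℚ) - 3 * (n : ℚ) ≤ 2 := by exact_mod_cast hb2
  have hcardq : (X.card : ℚ) + (Y.card : ℚ) = (n : ℚ) := by exact_mod_cast hcard
  have ht1q : (t : ℚ) ≤ 2 * (X.card : ℚ) := by exact_mod_cast ht1
  have ht2q : (t : ℚ) ≤ 2 * (Y.card : ℚ) := by exact_mod_cast ht2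
  nlinarith [mul_nonneg (by linarith : (0:ℚ) ≤ 2 - (8 * (b:ℚ) - 3 * n))
      (by linarith : (0:ℚ) ≤ 2 * (X.card : ℚ) - t),
    mul_nonneg (by linarith : (0:ℚ) ≤ 8 * (b:ℚ) - 3 * n + 2)
      (by linarith : (0:ℚ) ≤ 2 * (Y.card : ℚ) - t),
    mul_nonneg (by linarith : (0:ℚ) ≤ (n:ℚ)) (sq_nonneg (8 * (b:ℚ) - 3 * n))]
end

section
/- Let n ≥ 4, and let δ be an integer with −2 ≤ δ ≤ 2. Suppose x, y, t are nonnegative integers with x + y = n, t ≤ 2x, and t ≤ 2y. Then 16·(x·δ + t) ≤ n·(δ + 4)^2. -/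
theorem simplified_integer_inequality (n x y t : ℕ) (δ : ℤ)
    (hn : 4 ≤ n) (hδ1 : -2 ≤ δ) (hδ2 : δ ≤ 2)
    (hxy : x + y = n) (ht1 : t ≤ 2 * x) (ht2 : t ≤ 2 * y) :
    16 * ((x : ℤ) * δ + (t : ℤ)) ≤ (n : ℤ) * (δ + 4) ^ 2 := by
  have h1 : (x : ℤ) + y = n := by exact_mod_cast hxy
  have h2 : (t : ℤ) ≤ 2 * x := by exact_mod_cast ht1
  have h3 : (t : ℤ) ≤ 2 * y := by exact_mod_cast ht2
  interval_cases δ <;> nlinarith [h1, h2, h3]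
end

section
/- In the circular interval digraph G_β on n vertices with n/2 > β ≥ 0, the number of induced 3-vertex directed paths equals n·(n − 2β − 1)·(2β − n/2 + 1) when 3β ≥ n − 2 (i.e., when this quantity is the correct count), where an induced 3-vertex path (u,w,v) requires uw, wv edges and u,v nonadjacent. -/
set_option linter.unusedSectionVars false

open scoped Fin.NatCast Fin.CommRing

/-- The clockwise circular distance from `u` to `v` on `Fin n`. -/
def cdist (n : ℕ) (u v : Fin n) : ℕ := ((v : ℕ) + n - (u : ℕ)) % n

/-- The circular interval digraph `G_β`: an edge from `u` to `v` iff `1 ≤ d(u,v) ≤ β`. -/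
def gbeta (n β : ℕ) (u v : Fin n) : Prop := 1 ≤ cdist n u v ∧ cdist n u v ≤ β

instance (n β : ℕ) : DecidableRel (gbeta n β) := fun u v => by
  unfold gbeta; infer_instance

section
variable {n : ℕ} [NeZero n]

lemma cdist_val (u v : Fin n) : cdist n u v = ((v - u : Fin n) : ℕ) := by
  have hu := u.isLt
  simp only [cdist, Fin.sub_def]
  congr 1
  omega

lemma cdist_cases (u v : Fin n) :
    cdist n u v = if (u : ℕ) ≤ (v : ℕ) then (v : ℕ) - (u : ℕ) else (v : ℕ) + n - (u : ℕ) := by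
  have hu := u.isLt; have hv := v.isLt
  unfold cdist
  rcases le_or_gt (u : ℕ) (v : ℕ) with h | h
  · rw [if_pos h, show (v : ℕ) + n - (u : ℕ) = ((v : ℕ) - (u : ℕ)) + n by omega,
      Nat.add_mod_right, Nat.mod_eq_of_lt (by omega)]
  · rw [if_neg (by omega), Nat.mod_eq_of_lt (by omega)]

lemma cdist_eq_zero {u v : Fin n} : cdist n u v = 0 ↔ u = v := by
  rw [cdist_cases, Fin.ext_iff]
  have hu := u.isLt; have hv := v.isLt
  split <;> omega

lemma cdist_lt (u v : Fin n) : cdist n u v < n := by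
  have hu := u.isLt; have hv := v.isLt
  rw [cdist_cases]; split <;> omega

lemma cdist_add_comm (u v : Fin n) (h : u ≠ v) : cdist n u v + cdist n v u = n := by
  have hu := u.isLt; have hv := v.isLt
  have : (u : ℕ) ≠ (v : ℕ) := fun hh => h (Fin.ext hh)
  rw [cdist_cases, cdist_cases]
  split <;> split <;> omega

lemma cdist_triangle (u w v : Fin n) (h : cdist n u w + cdist n w v < n) :
    cdist n u v = cdist n u w + cdist n w v := by
  rw [cdist_val, cdist_val, cdist_val] at *
  have hv : v - u = (w - u) + (v - w) := by ring
  rw [hv, Fin.val_add, Nat.mod_eq_of_lt h]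

lemma cdist_sub_nat (w : Fin n) (a : ℕ) (ha : a < n) : cdist n (w - (a : Fin n)) w = a := by
  rw [cdist_val, sub_sub_cancel, Fin.val_natCast, Nat.mod_eq_of_lt ha]

lemma cdist_add_nat (w : Fin n) (b : ℕ) (hb : b < n) : cdist n w (w + (b : Fin n)) = b := by
  rw [cdist_val, add_sub_cancel_left, Fin.val_natCast, Nat.mod_eq_of_lt hb]

end

lemma gauss (k : ℕ) : (∑ a ∈ Finset.Icc 1 k, a) * 2 = k * (k + 1) := by
  induction k with
  | zero => simp
  | succ k ih =>
    rw [Finset.sum_Icc_succ_top (by omega)]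
    nlinarith [ih]

theorem gbeta_p3_count (n β : ℕ) (h1 : 2 * β < n) (h2 : n ≤ 3 * β + 2) :
    ((((Finset.univ : Finset (Fin n × Fin n × Fin n)).filter
        (fun p => InducedP3 (gbeta n β) p.1 p.2.1 p.2.2)).card : ℚ)
      = (n : ℚ) * ((n : ℚ) - 2 * (β : ℚ) - 1) * (2 * (β : ℚ) - (n : ℚ) / 2 + 1)) := by
  haveI : NeZero n := ⟨by omega⟩
  obtain ⟨m, hm⟩ : ∃ m, n = 2 * β + 1 + m := ⟨n - 2 * β - 1, by omega⟩
  have hmβ : m ≤ β + 1 := by omega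
  set S : Finset (ℕ × ℕ) := (Finset.Icc 1 β ×ˢ Finset.Icc 1 β).filter
      (fun q => β + 1 ≤ q.1 + q.2 ∧ q.1 + q.2 + β + 1 ≤ n) with hS
  -- Step 1 : the bijection
  have key : ((Finset.univ : Finset (Fin n × Fin n × Fin n)).filter
        (fun p => InducedP3 (gbeta n β) p.1 p.2.1 p.2.2)).card
      = ((Finset.univ : Finset (Fin n)) ×ˢ S).card := by
    refine Finset.card_bij'
      (fun p _ => ((p.2.1, cdist n p.1 p.2.1, cdist n p.2.1 p.2.2) : Fin n × ℕ × ℕ))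
      (fun q _ => ((q.1 - ((q.2.1 : ℕ) : Fin n), q.1, q.1 + ((q.2.2 : ℕ) : Fin n)) :
        Fin n × Fin n × Fin n)) ?_ ?_ ?_ ?_
    · rintro ⟨u, w, v⟩ hp
      simp only [Finset.mem_filter, Finset.mem_univ, true_and] at hp
      obtain ⟨huw, hwv, huv, e1, e2, ne1, ne2, ne3, ne4⟩ := hp
      obtain ⟨ha1, ha2⟩ := e1
      obtain ⟨hb1, hb2⟩ := e2
      have htr : cdist n u v = cdist n u w + cdist n w v :=
        cdist_triangle u w v (by omega)
      have hsum : cdist n u v + cdist n v u = n := cdist_add_comm u v huv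
      simp only [Finset.mem_product, Finset.mem_univ, true_and, hS, Finset.mem_filter,
        Finset.mem_Icc]
      unfold gbeta at ne3 ne4
      push_neg at ne3 ne4
      refine ⟨⟨⟨ha1, ha2⟩, hb1, hb2⟩, ?_, ?_⟩ <;> omega
    · rintro ⟨w, a, b⟩ hq
      simp only [Finset.mem_product, Finset.mem_univ, true_and, hS, Finset.mem_filter,
        Finset.mem_Icc] at hq
      obtain ⟨⟨⟨ha1, ha2⟩, hb1, hb2⟩, hs1, hs2⟩ := hq
      have c1 : cdist n (w - (a : Fin n)) w = a := cdist_sub_nat w a (by omega)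
      have c2 : cdist n w (w + (b : Fin n)) = b := cdist_add_nat w b (by omega)
      have c3 : cdist n (w - (a : Fin n)) (w + (b : Fin n)) = a + b := by
        rw [cdist_triangle _ w _ (by omega), c1, c2]
      have huw : w - (a : Fin n) ≠ w := fun h => by
        have := cdist_eq_zero.mpr h; omega
      have hwv : w ≠ w + (b : Fin n) := fun h => by
        have := cdist_eq_zero.mpr h; omega
      have huv : w - (a : Fin n) ≠ w + (b : Fin n) := fun h => by
        have := cdist_eq_zero.mpr h; omega
      have c4 : cdist n w (w - (a : Fin n)) = n - a := by
        have := cdist_add_comm (w - (a : Fin n)) w huw; omega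
      have c5 : cdist n (w + (b : Fin n)) w = n - b := by
        have := cdist_add_comm w (w + (b : Fin n)) hwv; omega
      have c6 : cdist n (w + (b : Fin n)) (w - (a : Fin n)) = n - (a + b) := by
        have := cdist_add_comm (w - (a : Fin n)) (w + (b : Fin n)) huv; omega
      simp only [Finset.mem_filter, Finset.mem_univ, true_and]
      refine ⟨huw, hwv, huv, ?_, ?_, ?_, ?_, ?_, ?_⟩ <;>
        simp only [gbeta, c1, c2, c3, c4, c5, c6, not_and, not_le] <;> omega
    · rintro ⟨u, w, v⟩ hp
      simp only [Finset.mem_filter, Finset.mem_univ, true_and] at hp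
      have e1 : ((cdist n u w : ℕ) : Fin n) = w - u := by
        rw [cdist_val, Fin.cast_val_eq_self]
      have e2 : ((cdist n w v : ℕ) : Fin n) = v - w := by
        rw [cdist_val, Fin.cast_val_eq_self]
      simp only [e1, e2, sub_sub_cancel, add_sub_cancel]
    · rintro ⟨w, a, b⟩ hq
      simp only [Finset.mem_product, Finset.mem_univ, true_and, hS, Finset.mem_filter,
        Finset.mem_Icc] at hq
      obtain ⟨⟨⟨ha1, ha2⟩, hb1, hb2⟩, hs1, hs2⟩ := hq
      simp only [cdist_sub_nat w a (by omega : a < n), cdist_add_nat w b (by omega : b < n)]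
  -- Step 2 : count S
  have hScard : 2 * S.card + m * m = m * (2 * β + 1) := by
    have hfib : S.card = ∑ a ∈ Finset.Icc 1 β,
        (S.filter (fun q => q.1 = a)).card := by
      apply Finset.card_eq_sum_card_fiberwise (f := Prod.fst)
      intro q hq
      simp only [hS, Finset.mem_coe, Finset.mem_filter, Finset.mem_product] at hq
      exact hq.1.1
    have hfib2 : ∀ a ∈ Finset.Icc 1 β,
        (S.filter (fun q => q.1 = a)).card = if a ≤ m then a else m := by
      intro a ha
      simp only [Finset.mem_Icc] at ha
      have hbij : (S.filter (fun q => q.1 = a)).card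
          = (Finset.Icc (β + 1 - a) (min β (n - β - 1 - a))).card := by
        refine Finset.card_bij' (fun q _ => q.2) (fun b _ => (a, b)) ?_ ?_ ?_ ?_
        · rintro ⟨a', b⟩ hq
          simp only [hS, Finset.mem_filter, Finset.mem_product, Finset.mem_Icc,
            le_min_iff] at hq ⊢
          obtain ⟨⟨⟨⟨hx1, hx2⟩, hx3, hx4⟩, hx5, hx6⟩, hx7⟩ := hq
          obtain ⟨ha1, ha2⟩ := ha
          refine ⟨?_, ?_, ?_⟩ <;> omega
        · intro b hb
          simp only [Finset.mem_Icc, le_min_iff] at hb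
          obtain ⟨hb1, hb2, hb3⟩ := hb
          obtain ⟨ha1, ha2⟩ := ha
          simp only [hS, Finset.mem_filter, Finset.mem_product, Finset.mem_Icc]
          exact ⟨⟨⟨⟨by omega, by omega⟩, by omega, by omega⟩, by omega, by omega⟩, trivial⟩
        · rintro ⟨a', b⟩ hq
          simp only [hS, Finset.mem_filter] at hq
          simp [hq.2]
        · intro b _; rfl
      rw [hbij, Nat.card_Icc]
      rcases le_total β (n - β - 1 - a) with hc | hc
      · rw [min_eq_left hc]; split <;> omega
      · rw [min_eq_right hc]; split <;> omega
    rw [hfib, Finset.sum_congr rfl hfib2]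
    rcases le_or_gt m β with hmb | hmb
    · have hsplit : Finset.Icc 1 β = Finset.Icc 1 m ∪ Finset.Icc (m + 1) β := by
        ext x; simp only [Finset.mem_union, Finset.mem_Icc]; omega
      have hdisj : Disjoint (Finset.Icc 1 m) (Finset.Icc (m + 1) β) := by
        rw [Finset.disjoint_left]
        intro x hx hy
        simp only [Finset.mem_Icc] at hx hy; omega
      rw [hsplit, Finset.sum_union hdisj]
      have e1 : ∑ a ∈ Finset.Icc 1 m, (if a ≤ m then a else m) = ∑ a ∈ Finset.Icc 1 m, a := by
        apply Finset.sum_congr rfl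
        intro a ha; simp only [Finset.mem_Icc] at ha
        rw [if_pos (by omega)]
      have e2 : ∑ a ∈ Finset.Icc (m + 1) β, (if a ≤ m then a else m) = (β - m) * m := by
        have hcst : ∀ a ∈ Finset.Icc (m + 1) β, (if a ≤ m then a else m) = m := by
          intro a ha; simp only [Finset.mem_Icc] at ha
          rw [if_neg (by omega)]
        rw [Finset.sum_congr rfl hcst, Finset.sum_const, Nat.card_Icc, smul_eq_mul]
        congr 1; omega
      rw [e1, e2]
      have hg := gauss m
      obtain ⟨d, rfl⟩ : ∃ d, β = m + d := ⟨β - m, by omega⟩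
      have hd : m + d - m = d := by omega
      rw [hd]
      nlinarith [hg]
    · have hm2 : m = β + 1 := by omega
      have e1 : ∑ a ∈ Finset.Icc 1 β, (if a ≤ m then a else m)
          = ∑ a ∈ Finset.Icc 1 β, a := by
        apply Finset.sum_congr rfl
        intro a ha; simp only [Finset.mem_Icc] at ha
        rw [if_pos (by omega)]
      rw [e1]
      have hg := gauss β
      rw [hm2]
      nlinarith [hg]
  -- Step 3 : rational arithmetic
  rw [key, Finset.card_product, Finset.card_univ, Fintype.card_fin]
  have hq : (2 * S.card : ℚ) + (m : ℚ) * m = (m : ℚ) * (2 * β + 1) := by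
    exact_mod_cast congrArg (Nat.cast : ℕ → ℚ) hScard
  have hn : (n : ℚ) = 2 * β + 1 + m := by exact_mod_cast congrArg (Nat.cast : ℕ → ℚ) hm
  push_cast
  rw [hn]
  linear_combination ((2 * (β : ℚ) + 1 + m) / 2) * hq
end

section
/- If G is a 3-free digraph on n vertices, then S ≤ (3n/2)·T, where S is 24 times the number of directed 4-cycles of G and T is the number of induced 3-vertex directed paths of G. -/
/-- A digraph is 3-free: no directed cycles of length 1, 2 or 3. -/
def ThreeFree {V : Type*} (E : V → V → Prop) : Prop :=
  (∀ v, ¬ E v v) ∧ (∀ u v, ¬ (E u v ∧ E v u)) ∧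
    ∀ u v w, ¬ (E u v ∧ E v w ∧ E w u)

/-- `w, x, y, z` form a directed 4-vertex path. -/
def IsPath4 {V : Type*} (E : V → V → Prop) (w x y z : V) : Prop :=
  w ≠ x ∧ w ≠ y ∧ w ≠ z ∧ x ≠ y ∧ x ≠ z ∧ y ≠ z ∧ E w x ∧ E x y ∧ E y z

instance {V : Type*} [DecidableEq V] (E : V → V → Prop) [DecidableRel E] (w x y z : V) :
    Decidable (IsPath4 E w x y z) := by unfold IsPath4; infer_instance

/-- `w → x → y → z → w` is a directed 4-cycle. -/
def IsCycle4 {V : Type*} (E : V → V → Prop) (w x y z : V) : Prop :=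
  w ≠ x ∧ w ≠ y ∧ w ≠ z ∧ x ≠ y ∧ x ≠ z ∧ y ≠ z ∧ E w x ∧ E x y ∧ E y z ∧ E z w

instance {V : Type*} [DecidableEq V] (E : V → V → Prop) [DecidableRel E] (w x y z : V) :
    Decidable (IsCycle4 E w x y z) := by unfold IsCycle4; infer_instance

/-- The number of directed 4-vertex paths. -/
def p4Count (n : ℕ) (E : Fin n → Fin n → Prop) [DecidableRel E] : ℕ :=
  ((Finset.univ : Finset (Fin n × Fin n × Fin n × Fin n)).filter
    (fun p => IsPath4 E p.1 p.2.1 p.2.2.1 p.2.2.2)).card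

/-- `S`: the number of ordered 4-tuples of distinct vertices whose vertex set carries a
directed 4-cycle; equal to 24 times the number of directed 4-cycles of `G`. -/
def sCount (n : ℕ) (E : Fin n → Fin n → Prop) [DecidableRel E] : ℕ :=
  ((Finset.univ : Finset (Fin n × Fin n × Fin n × Fin n)).filter
    (fun p => p.1 ≠ p.2.1 ∧ p.1 ≠ p.2.2.1 ∧ p.1 ≠ p.2.2.2 ∧ p.2.1 ≠ p.2.2.1 ∧
      p.2.1 ≠ p.2.2.2 ∧ p.2.2.1 ≠ p.2.2.2 ∧
      ∃ w x y z : Fin n, IsCycle4 E w x y z ∧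
        ({w, x, y, z} : Finset (Fin n)) = {p.1, p.2.1, p.2.2.1, p.2.2.2})).card

/-- `|N|`: the number of ordered 4-tuples of vertices (repetitions allowed) whose vertex
set is not the vertex set of any directed 4-vertex path. -/
def nCount (n : ℕ) (E : Fin n → Fin n → Prop) [DecidableRel E] : ℕ :=
  ((Finset.univ : Finset (Fin n × Fin n × Fin n × Fin n)).filter
    (fun p => ¬ ∃ w x y z : Fin n, IsPath4 E w x y z ∧
        ({w, x, y, z} : Finset (Fin n)) = {p.1, p.2.1, p.2.2.1, p.2.2.2})).card

open Finset

namespace SqLeP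

variable {n : ℕ} (E : Fin n → Fin n → Prop) [DecidableRel E]

/-- midpoint set of a 2-path from `u` to `v` -/
def aF (u v : Fin n) : Finset (Fin n) := Finset.univ.filter fun w => E u w ∧ E w v

def aC (u v : Fin n) : ℕ := (aF E u v).card

/-- quadruples (u,v,m,z) with u→m→v→z→u -/
def QF : Finset (Fin n × Fin n × Fin n × Fin n) :=
  Finset.univ.filter fun q => E q.1 q.2.2.1 ∧ E q.2.2.1 q.2.1 ∧ E q.2.1 q.2.2.2 ∧ E q.2.2.2 q.1

lemma mem_QF' {q : Fin n × Fin n × Fin n × Fin n} (hq : q ∈ QF E) :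
    E q.1 q.2.2.1 ∧ E q.2.2.1 q.2.1 ∧ E q.2.1 q.2.2.2 ∧ E q.2.2.2 q.1 :=
  (mem_filter.mp hq).2

lemma hm_aux (x y : ℚ) (hx : 0 < x) (hy : 0 < y) : 4 / (x + y) ≤ 1 / x + 1 / y := by
  rw [div_add_div _ _ (ne_of_gt hx) (ne_of_gt hy), div_le_div_iff₀ (by positivity) (by positivity)]
  nlinarith [sq_nonneg (x - y)]

lemma keyq (h3 : ThreeFree E) {u v m z : Fin n}
    (e1 : E u m) (e2 : E m v) (e3 : E v z) (e4 : E z u) :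
    (16 : ℚ) ≤ (n : ℚ) * (1 / (aC E u v : ℚ) + 1 / (aC E v u : ℚ)
      + 1 / (aC E m z : ℚ) + 1 / (aC E z m : ℚ)) := by
  obtain ⟨hl, h2c, h3c⟩ := h3
  have hm' : m ∈ aF E u v := mem_filter.mpr ⟨mem_univ _, e1, e2⟩
  have hz' : z ∈ aF E v u := mem_filter.mpr ⟨mem_univ _, e3, e4⟩
  have hv' : v ∈ aF E m z := mem_filter.mpr ⟨mem_univ _, e2, e3⟩
  have hu' : u ∈ aF E z m := mem_filter.mpr ⟨mem_univ _, e4, e1⟩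
  have haFm : ∀ a b w, w ∈ aF E a b → E a w ∧ E w b := by
    intro a b w hw; exact (mem_filter.mp hw).2
  have d12 : Disjoint (aF E u v) (aF E v u) := by
    rw [Finset.disjoint_left]; intro w hw hw'
    exact h2c w v ⟨(haFm _ _ _ hw).2, (haFm _ _ _ hw').1⟩
  have d13 : Disjoint (aF E u v) (aF E m z) := by
    rw [Finset.disjoint_left]; intro w hw hw'
    exact h3c w z u ⟨(haFm _ _ _ hw').2, e4, (haFm _ _ _ hw).1⟩
  have d14 : Disjoint (aF E u v) (aF E z m) := by
    rw [Finset.disjoint_left]; intro w hw hw'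
    exact h3c z w v ⟨(haFm _ _ _ hw').1, (haFm _ _ _ hw).2, e3⟩
  have d23 : Disjoint (aF E v u) (aF E m z) := by
    rw [Finset.disjoint_left]; intro w hw hw'
    exact h3c w u m ⟨(haFm _ _ _ hw).2, e1, (haFm _ _ _ hw').1⟩
  have d24 : Disjoint (aF E v u) (aF E z m) := by
    rw [Finset.disjoint_left]; intro w hw hw'
    exact h3c w m v ⟨(haFm _ _ _ hw').2, e2, (haFm _ _ _ hw).1⟩
  have d34 : Disjoint (aF E m z) (aF E z m) := by
    rw [Finset.disjoint_left]; intro w hw hw'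
    exact h2c w z ⟨(haFm _ _ _ hw).2, (haFm _ _ _ hw').1⟩
  have dbig : Disjoint (aF E u v ∪ aF E v u) (aF E m z ∪ aF E z m) :=
    Finset.disjoint_union_left.mpr
      ⟨Finset.disjoint_union_right.mpr ⟨d13, d14⟩, Finset.disjoint_union_right.mpr ⟨d23, d24⟩⟩
  have hcard : aC E u v + aC E v u + (aC E m z + aC E z m) ≤ n := by
    rw [aC, aC, aC, aC, ← card_union_of_disjoint d12, ← card_union_of_disjoint d34,
      ← card_union_of_disjoint dbig]
    simpa using card_le_univ (aF E u v ∪ aF E v u ∪ (aF E m z ∪ aF E z m))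
  have p1 : 0 < aC E u v := card_pos.mpr ⟨m, hm'⟩
  have p2 : 0 < aC E v u := card_pos.mpr ⟨z, hz'⟩
  have p3 : 0 < aC E m z := card_pos.mpr ⟨v, hv'⟩
  have p4 : 0 < aC E z m := card_pos.mpr ⟨u, hu'⟩
  have hA : (0:ℚ) < (aC E u v : ℚ) := by exact_mod_cast p1
  have hB : (0:ℚ) < (aC E v u : ℚ) := by exact_mod_cast p2
  have hC : (0:ℚ) < (aC E m z : ℚ) := by exact_mod_cast p3
  have hD : (0:ℚ) < (aC E z m : ℚ) := by exact_mod_cast p4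
  have hsum : (aC E u v : ℚ) + (aC E v u : ℚ) + ((aC E m z : ℚ) + (aC E z m : ℚ)) ≤ (n : ℚ) := by
    exact_mod_cast hcard
  have k1 := hm_aux (aC E u v : ℚ) (aC E v u : ℚ) hA hB
  have k2 := hm_aux (aC E m z : ℚ) (aC E z m : ℚ) hC hD
  have k3 := hm_aux ((aC E u v : ℚ) + (aC E v u : ℚ)) ((aC E m z : ℚ) + (aC E z m : ℚ))
    (by linarith) (by linarith)
  have hs0 : (0:ℚ) < (aC E u v : ℚ) + (aC E v u : ℚ) + ((aC E m z : ℚ) + (aC E z m : ℚ)) := by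
    linarith
  have hn0 : (0:ℚ) < (n : ℚ) := lt_of_lt_of_le hs0 hsum
  have k4 : (16:ℚ) / (n : ℚ)
      ≤ 16 / ((aC E u v : ℚ) + (aC E v u : ℚ) + ((aC E m z : ℚ) + (aC E z m : ℚ))) := by
    rw [div_le_div_iff₀ hn0 hs0]; linarith
  have e16 : (16:ℚ) / ((aC E u v : ℚ) + (aC E v u : ℚ) + ((aC E m z : ℚ) + (aC E z m : ℚ)))
      = 4 * (4 / (((aC E u v : ℚ) + (aC E v u : ℚ)) + ((aC E m z : ℚ) + (aC E z m : ℚ)))) := by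
    ring
  have q1 : (4:ℚ) / ((aC E u v : ℚ) + (aC E v u : ℚ))
      = 4 * (1 / ((aC E u v : ℚ) + (aC E v u : ℚ))) := by ring
  have q2 : (4:ℚ) / ((aC E m z : ℚ) + (aC E z m : ℚ))
      = 4 * (1 / ((aC E m z : ℚ) + (aC E z m : ℚ))) := by ring
  have kfinal : (16:ℚ) / (n : ℚ)
      ≤ 1 / (aC E u v : ℚ) + 1 / (aC E v u : ℚ) + 1 / (aC E m z : ℚ) + 1 / (aC E z m : ℚ) := by
    rw [e16] at k4
    linarith [q1, q2]
  rw [div_le_iff₀ hn0] at kfinal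
  linarith [kfinal]

lemma p3sum (h3 : ThreeFree E) (s : Finset (Fin n × Fin n))
    (hs : ∀ p ∈ s, p.1 ≠ p.2 ∧ ¬E p.1 p.2 ∧ ¬E p.2 p.1) :
    ∑ p ∈ s, aC E p.1 p.2 ≤ p3Count n E := by
  classical
  obtain ⟨hl, h2c, h3c⟩ := h3
  have hinj : ∀ p : Fin n × Fin n,
      Function.Injective (fun w => (p.1, w, p.2) : Fin n → Fin n × Fin n × Fin n) := by
    intro p w w' h
    exact congrArg (fun x => x.2.1) h
  have hdisj : ∀ p ∈ s, ∀ p' ∈ s, p ≠ p' →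
      Disjoint ((aF E p.1 p.2).image fun w => (p.1, w, p.2))
               ((aF E p'.1 p'.2).image fun w => (p'.1, w, p'.2)) := by
    intro p _ p' _ hne
    rw [Finset.disjoint_left]
    rintro x hx hx'
    obtain ⟨w, _, rfl⟩ := mem_image.mp hx
    obtain ⟨w', _, heq⟩ := mem_image.mp hx'
    apply hne
    have h1 : p'.1 = p.1 := congrArg (fun y => y.1) heq
    have h2 : p'.2 = p.2 := congrArg (fun y => y.2.2) heq
    exact Prod.ext_iff.mpr ⟨h1.symm, h2.symm⟩
  have hcard : ∑ p ∈ s, aC E p.1 p.2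
      = (s.biUnion fun p => (aF E p.1 p.2).image fun w => (p.1, w, p.2)).card := by
    rw [card_biUnion hdisj]
    apply sum_congr rfl
    intro p _
    rw [card_image_of_injective _ (hinj p), aC]
  rw [hcard, p3Count]
  apply card_le_card
  intro t ht
  rw [mem_biUnion] at ht
  obtain ⟨p, hp, ht⟩ := ht
  obtain ⟨w, hw, rfl⟩ := mem_image.mp ht
  obtain ⟨-, ew1, ew2⟩ := mem_filter.mp hw
  obtain ⟨hne, hn12, hn21⟩ := hs p hp
  refine mem_filter.mpr ⟨mem_univ _, ?_⟩
  show InducedP3 E p.1 w p.2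
  refine ⟨?_, ?_, hne, ew1, ew2, ?_, ?_, hn12, hn21⟩
  · intro h; exact hl w (h ▸ ew1)
  · intro h; exact hl p.2 (h ▸ ew2)
  · intro h; exact h2c p.1 w ⟨ew1, h⟩
  · intro h; exact h2c w p.2 ⟨ew2, h⟩

lemma fiber1 (p : Fin n × Fin n) :
    ((QF E).filter fun q => (q.1, q.2.1) = p).card = aC E p.1 p.2 * aC E p.2 p.1 := by
  obtain ⟨u, v⟩ := p
  rw [aC, aC, ← card_product]
  apply card_nbij' (fun q => (q.2.2.1, q.2.2.2)) (fun r => (u, v, r.1, r.2))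
  · intro q hq
    obtain ⟨hQ, hp⟩ := mem_filter.mp hq
    obtain ⟨e1, e2, e3, e4⟩ := mem_QF' E hQ
    have h1 : q.1 = u := congrArg Prod.fst hp
    have h2 : q.2.1 = v := congrArg Prod.snd hp
    rw [mem_coe, mem_product]
    constructor
    · exact mem_filter.mpr ⟨mem_univ _, h1 ▸ e1, h2 ▸ e2⟩
    · exact mem_filter.mpr ⟨mem_univ _, h2 ▸ e3, h1 ▸ e4⟩
  · intro r hr
    rw [mem_coe, mem_product] at hr
    obtain ⟨-, f1, f2⟩ := mem_filter.mp hr.1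
    obtain ⟨-, f3, f4⟩ := mem_filter.mp hr.2
    rw [mem_coe, mem_filter]
    refine ⟨mem_filter.mpr ⟨mem_univ _, f1, f2, f3, f4⟩, rfl⟩
  · intro q hq
    obtain ⟨hQ, hp⟩ := mem_filter.mp hq
    have h1 : q.1 = u := congrArg Prod.fst hp
    have h2 : q.2.1 = v := congrArg Prod.snd hp
    exact Prod.ext_iff.mpr ⟨h1.symm, Prod.ext_iff.mpr ⟨h2.symm, rfl⟩⟩
  · intro r _
    rfl

lemma fiber2 (p : Fin n × Fin n) :
    ((QF E).filter fun q => (q.2.1, q.1) = p).card = aC E p.1 p.2 * aC E p.2 p.1 := by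
  have hpred : ((QF E).filter fun q => (q.2.1, q.1) = p)
      = ((QF E).filter fun q => (q.1, q.2.1) = (p.2, p.1)) := by
    apply filter_congr
    intro q _
    constructor
    · intro h
      have h1 : q.2.1 = p.1 := congrArg Prod.fst h
      have h2 : q.1 = p.2 := congrArg Prod.snd h
      exact Prod.ext_iff.mpr ⟨h2, h1⟩
    · intro h
      have h1 : q.1 = p.2 := congrArg Prod.fst h
      have h2 : q.2.1 = p.1 := congrArg Prod.snd h
      exact Prod.ext_iff.mpr ⟨h2, h1⟩
  rw [hpred, fiber1, mul_comm]

lemma fiber3 (p : Fin n × Fin n) :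
    ((QF E).filter fun q => (q.2.2.1, q.2.2.2) = p).card = aC E p.1 p.2 * aC E p.2 p.1 := by
  obtain ⟨m, z⟩ := p
  rw [aC, aC, ← card_product]
  apply card_nbij' (fun q => (q.2.1, q.1)) (fun r => (r.2, r.1, m, z))
  · intro q hq
    obtain ⟨hQ, hp⟩ := mem_filter.mp hq
    obtain ⟨e1, e2, e3, e4⟩ := mem_QF' E hQ
    have h1 : q.2.2.1 = m := congrArg Prod.fst hp
    have h2 : q.2.2.2 = z := congrArg Prod.snd hp
    rw [mem_coe, mem_product]
    constructor
    · exact mem_filter.mpr ⟨mem_univ _, h1 ▸ e2, h2 ▸ e3⟩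
    · exact mem_filter.mpr ⟨mem_univ _, h2 ▸ e4, h1 ▸ e1⟩
  · intro r hr
    rw [mem_coe, mem_product] at hr
    obtain ⟨-, f1, f2⟩ := mem_filter.mp hr.1
    obtain ⟨-, f3, f4⟩ := mem_filter.mp hr.2
    rw [mem_coe, mem_filter]
    refine ⟨mem_filter.mpr ⟨mem_univ _, f4, f1, f2, f3⟩, rfl⟩
  · intro q hq
    obtain ⟨hQ, hp⟩ := mem_filter.mp hq
    have h1 : q.2.2.1 = m := congrArg Prod.fst hp
    have h2 : q.2.2.2 = z := congrArg Prod.snd hp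
    exact Prod.ext_iff.mpr ⟨rfl, Prod.ext_iff.mpr ⟨rfl, Prod.ext_iff.mpr ⟨h1.symm, h2.symm⟩⟩⟩
  · intro r _
    rfl

lemma fiber4 (p : Fin n × Fin n) :
    ((QF E).filter fun q => (q.2.2.2, q.2.2.1) = p).card = aC E p.1 p.2 * aC E p.2 p.1 := by
  have hpred : ((QF E).filter fun q => (q.2.2.2, q.2.2.1) = p)
      = ((QF E).filter fun q => (q.2.2.1, q.2.2.2) = (p.2, p.1)) := by
    apply filter_congr
    intro q _
    constructor
    · intro h
      have h1 : q.2.2.2 = p.1 := congrArg Prod.fst h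
      have h2 : q.2.2.1 = p.2 := congrArg Prod.snd h
      exact Prod.ext_iff.mpr ⟨h2, h1⟩
    · intro h
      have h1 : q.2.2.1 = p.2 := congrArg Prod.fst h
      have h2 : q.2.2.2 = p.1 := congrArg Prod.snd h
      exact Prod.ext_iff.mpr ⟨h2, h1⟩
  rw [hpred, fiber3, mul_comm]

lemma hna1 (h3 : ThreeFree E) : ∀ q ∈ QF E, q.1 ≠ q.2.1 ∧ ¬E q.1 q.2.1 ∧ ¬E q.2.1 q.1 := by
  intro q hq
  obtain ⟨e1, e2, e3, e4⟩ := mem_QF' E hq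
  refine ⟨?_, ?_, ?_⟩
  · intro h; exact h3.2.1 q.1 q.2.2.1 ⟨e1, h.symm ▸ e2⟩
  · intro h; exact h3.2.2 q.1 q.2.1 q.2.2.2 ⟨h, e3, e4⟩
  · intro h; exact h3.2.2 q.2.1 q.1 q.2.2.1 ⟨h, e1, e2⟩

lemma hna3 (h3 : ThreeFree E) :
    ∀ q ∈ QF E, q.2.2.1 ≠ q.2.2.2 ∧ ¬E q.2.2.1 q.2.2.2 ∧ ¬E q.2.2.2 q.2.2.1 := by
  intro q hq
  obtain ⟨e1, e2, e3, e4⟩ := mem_QF' E hq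
  refine ⟨?_, ?_, ?_⟩
  · intro h; exact h3.2.1 q.2.1 q.2.2.2 ⟨e3, h ▸ e2⟩
  · intro h; exact h3.2.2 q.2.2.1 q.2.2.2 q.1 ⟨h, e4, e1⟩
  · intro h; exact h3.2.2 q.2.2.2 q.2.2.1 q.2.1 ⟨h, e2, e3⟩

lemma sum_le (h3 : ThreeFree E) (g : Fin n × Fin n × Fin n × Fin n → Fin n × Fin n)
    (hg : ∀ p, ((QF E).filter fun q => g q = p).card = aC E p.1 p.2 * aC E p.2 p.1)
    (hna : ∀ q ∈ QF E, (g q).1 ≠ (g q).2 ∧ ¬E (g q).1 (g q).2 ∧ ¬E (g q).2 (g q).1) :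
    ∑ q ∈ QF E, (1 / (aC E (g q).1 (g q).2 : ℚ)) ≤ (p3Count n E : ℚ) := by
  classical
  have hcomp : ∑ q ∈ QF E, (1 / (aC E (g q).1 (g q).2 : ℚ))
      = ∑ b ∈ (QF E).image g, ∑ q ∈ (QF E).filter (fun q => g q = b),
          (1 / (aC E b.1 b.2 : ℚ)) :=
    (Finset.sum_fiberwise_of_maps_to' (fun q hq => mem_image_of_mem g hq)
      (fun p => (1 / (aC E p.1 p.2 : ℚ)))).symm
  rw [hcomp]
  have hterm : ∀ b ∈ (QF E).image g,
      (∑ q ∈ (QF E).filter (fun q => g q = b), (1 / (aC E b.1 b.2 : ℚ)))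
        = (aC E b.2 b.1 : ℚ) := by
    intro b hb
    rw [sum_const, hg b, nsmul_eq_mul]
    have hpos : 0 < aC E b.1 b.2 := by
      obtain ⟨q, hq, rfl⟩ := mem_image.mp hb
      have h1 : 0 < ((QF E).filter fun q' => g q' = g q).card :=
        card_pos.mpr ⟨q, mem_filter.mpr ⟨hq, rfl⟩⟩
      rw [hg (g q)] at h1
      rcases Nat.eq_zero_or_pos (aC E (g q).1 (g q).2) with h0 | h
      · rw [h0, Nat.zero_mul] at h1; exact absurd h1 (lt_irrefl 0)
      · exact h
    have hA : ((aC E b.1 b.2 : ℚ)) ≠ 0 := by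
      have : (0:ℚ) < (aC E b.1 b.2 : ℚ) := by exact_mod_cast hpos
      exact ne_of_gt this
    push_cast
    field_simp
  rw [sum_congr rfl hterm, ← Nat.cast_sum, Nat.cast_le]
  have hswapinj : ∀ x ∈ (QF E).image g, ∀ y ∈ (QF E).image g,
      Prod.swap x = Prod.swap y → x = y :=
    fun x _ y _ h => Prod.swap_injective h
  have hrw : (∑ b ∈ (QF E).image g, aC E b.2 b.1)
      = ∑ p ∈ ((QF E).image g).image Prod.swap, aC E p.1 p.2 :=
    (sum_image (f := fun p => aC E p.1 p.2) hswapinj).symm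
  rw [hrw]
  apply p3sum E h3
  intro p hp
  obtain ⟨b, hb, rfl⟩ := mem_image.mp hp
  obtain ⟨q, hq, rfl⟩ := mem_image.mp hb
  obtain ⟨hne, h12, h21⟩ := hna q hq
  exact ⟨hne.symm, h21, h12⟩

lemma hQbound (h3 : ThreeFree E) :
    (16:ℚ) * ((QF E).card : ℚ) ≤ (n:ℚ) * (4 * (p3Count n E : ℚ)) := by
  classical
  have t1 : ∑ q ∈ QF E, (1 / (aC E q.1 q.2.1 : ℚ)) ≤ (p3Count n E : ℚ) :=
    sum_le E h3 (fun q => (q.1, q.2.1)) (fiber1 E) (hna1 E h3)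
  have t2 : ∑ q ∈ QF E, (1 / (aC E q.2.1 q.1 : ℚ)) ≤ (p3Count n E : ℚ) :=
    sum_le E h3 (fun q => (q.2.1, q.1)) (fiber2 E)
      (fun q hq => ⟨(hna1 E h3 q hq).1.symm, (hna1 E h3 q hq).2.2, (hna1 E h3 q hq).2.1⟩)
  have t3 : ∑ q ∈ QF E, (1 / (aC E q.2.2.1 q.2.2.2 : ℚ)) ≤ (p3Count n E : ℚ) :=
    sum_le E h3 (fun q => (q.2.2.1, q.2.2.2)) (fiber3 E) (hna3 E h3)
  have t4 : ∑ q ∈ QF E, (1 / (aC E q.2.2.2 q.2.2.1 : ℚ)) ≤ (p3Count n E : ℚ) :=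
    sum_le E h3 (fun q => (q.2.2.2, q.2.2.1)) (fiber4 E)
      (fun q hq => ⟨(hna3 E h3 q hq).1.symm, (hna3 E h3 q hq).2.2, (hna3 E h3 q hq).2.1⟩)
  have step : (16:ℚ) * ((QF E).card : ℚ) ≤ ∑ q ∈ QF E, (n:ℚ) *
      (1 / (aC E q.1 q.2.1 : ℚ) + 1 / (aC E q.2.1 q.1 : ℚ)
        + 1 / (aC E q.2.2.1 q.2.2.2 : ℚ) + 1 / (aC E q.2.2.2 q.2.2.1 : ℚ)) := by
    have hconst : ∑ _q ∈ QF E, (16:ℚ) = 16 * ((QF E).card : ℚ) := by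
      rw [sum_const, nsmul_eq_mul, mul_comm]
    rw [← hconst]
    apply sum_le_sum
    intro q hq
    obtain ⟨e1, e2, e3, e4⟩ := mem_QF' E hq
    exact keyq E h3 e1 e2 e3 e4
  rw [← mul_sum] at step
  have hsplit : (∑ q ∈ QF E,
      (1 / (aC E q.1 q.2.1 : ℚ) + 1 / (aC E q.2.1 q.1 : ℚ)
        + 1 / (aC E q.2.2.1 q.2.2.2 : ℚ) + 1 / (aC E q.2.2.2 q.2.2.1 : ℚ)))
      = (∑ q ∈ QF E, (1 / (aC E q.1 q.2.1 : ℚ)))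
        + (∑ q ∈ QF E, (1 / (aC E q.2.1 q.1 : ℚ)))
        + (∑ q ∈ QF E, (1 / (aC E q.2.2.1 q.2.2.2 : ℚ)))
        + (∑ q ∈ QF E, (1 / (aC E q.2.2.2 q.2.2.1 : ℚ))) := by
    rw [← sum_add_distrib, ← sum_add_distrib, ← sum_add_distrib]
  rw [hsplit] at step
  have hsnn : (0:ℚ) ≤ (n:ℚ) := Nat.cast_nonneg n
  calc (16:ℚ) * ((QF E).card : ℚ) ≤ _ := step
    _ ≤ (n:ℚ) * (4 * (p3Count n E : ℚ)) := by
      apply mul_le_mul_of_nonneg_left _ hsnn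
      linarith

open scoped Classical in
noncomputable def fchoice : (Fin n × Fin n × Fin n × Fin n) → (Fin n × Fin n × Fin n × Fin n) :=
  fun t =>
    if h : ∃ c : Fin n × Fin n × Fin n × Fin n, IsCycle4 E c.1 c.2.1 c.2.2.1 c.2.2.2 ∧
        ({c.1, c.2.1, c.2.2.1, c.2.2.2} : Finset (Fin n)) = {t.1, t.2.1, t.2.2.1, t.2.2.2} ∧
        c.1 = t.1
    then h.choose else t

lemma fchoice_spec (t : Fin n × Fin n × Fin n × Fin n)
    (h : ∃ c : Fin n × Fin n × Fin n × Fin n, IsCycle4 E c.1 c.2.1 c.2.2.1 c.2.2.2 ∧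
        ({c.1, c.2.1, c.2.2.1, c.2.2.2} : Finset (Fin n)) = {t.1, t.2.1, t.2.2.1, t.2.2.2} ∧
        c.1 = t.1) :
    IsCycle4 E (fchoice E t).1 (fchoice E t).2.1 (fchoice E t).2.2.1 (fchoice E t).2.2.2 ∧
      ({(fchoice E t).1, (fchoice E t).2.1, (fchoice E t).2.2.1, (fchoice E t).2.2.2} :
        Finset (Fin n)) = {t.1, t.2.1, t.2.2.1, t.2.2.2} ∧
      (fchoice E t).1 = t.1 := by
  rw [fchoice, dif_pos h]
  exact h.choose_spec

lemma part1 (h3 : ThreeFree E) : sCount n E ≤ 6 * (QF E).card := by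
  classical
  rw [sCount]
  set sF := ((Finset.univ : Finset (Fin n × Fin n × Fin n × Fin n)).filter
    (fun p => p.1 ≠ p.2.1 ∧ p.1 ≠ p.2.2.1 ∧ p.1 ≠ p.2.2.2 ∧ p.2.1 ≠ p.2.2.1 ∧
      p.2.1 ≠ p.2.2.2 ∧ p.2.2.1 ≠ p.2.2.2 ∧
      ∃ w x y z : Fin n, IsCycle4 E w x y z ∧
        ({w, x, y, z} : Finset (Fin n)) = {p.1, p.2.1, p.2.2.1, p.2.2.2})) with hsF
  have hrot : ∀ w x y z : Fin n, IsCycle4 E w x y z → IsCycle4 E x y z w := by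
    intro w x y z h
    obtain ⟨h1, h2, h3', h4, h5, h6, e1, e2, e3, e4⟩ := h
    exact ⟨h4, h5, h1.symm, h6, h2.symm, h3'.symm, e2, e3, e4, e1⟩
  have hsetrot : ∀ w x y z : Fin n, ({x, y, z, w} : Finset (Fin n)) = {w, x, y, z} := by
    intro w x y z
    ext a
    simp only [Finset.mem_insert, Finset.mem_singleton]
    tauto
  have hex : ∀ t ∈ sF, ∃ c : Fin n × Fin n × Fin n × Fin n,
      IsCycle4 E c.1 c.2.1 c.2.2.1 c.2.2.2 ∧
      ({c.1, c.2.1, c.2.2.1, c.2.2.2} : Finset (Fin n)) = {t.1, t.2.1, t.2.2.1, t.2.2.2} ∧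
      c.1 = t.1 := by
    intro t ht
    rw [hsF, mem_filter] at ht
    obtain ⟨-, d1, d2, d3, d4, d5, d6, w, x, y, z, hcyc, hset⟩ := ht
    have hm : t.1 ∈ ({w, x, y, z} : Finset (Fin n)) := by
      rw [hset]
      exact mem_insert_self _ _
    simp only [mem_insert, mem_singleton] at hm
    rcases hm with h | h | h | h
    · exact ⟨(w, x, y, z), hcyc, hset, h.symm⟩
    · exact ⟨(x, y, z, w), hrot _ _ _ _ hcyc, (hsetrot w x y z).trans hset, h.symm⟩
    · exact ⟨(y, z, w, x), hrot _ _ _ _ (hrot _ _ _ _ hcyc),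
        ((hsetrot x y z w).trans (hsetrot w x y z)).trans hset, h.symm⟩
    · exact ⟨(z, w, x, y), hrot _ _ _ _ (hrot _ _ _ _ (hrot _ _ _ _ hcyc)),
        (((hsetrot y z w x).trans (hsetrot x y z w)).trans (hsetrot w x y z)).trans hset, h.symm⟩
  have hfib : ∀ b ∈ sF.image (fchoice E), (sF.filter fun t => fchoice E t = b).card ≤ 6 := by
    intro b hb
    obtain ⟨t0, ht0, hbt0⟩ := mem_image.mp hb
    have hspec0 := fchoice_spec E t0 (hex t0 ht0)
    rw [hbt0] at hspec0
    obtain ⟨hcycb, -, -⟩ := hspec0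
    obtain ⟨n1, n2, n3, n4, n5, n6, -, -, -, -⟩ := hcycb
    have hK4card : ({b.1, b.2.1, b.2.2.1, b.2.2.2} : Finset (Fin n)).card = 4 := by
      rw [card_insert_of_notMem (by simp [n1, n2, n3]),
        card_insert_of_notMem (by simp [n4, n5]),
        card_insert_of_notMem (by simp [n6]), card_singleton]
    set K := ({b.1, b.2.1, b.2.2.1, b.2.2.2} : Finset (Fin n)).erase b.1 with hK
    have hKcard : K.card = 3 := by
      rw [hK, card_erase_of_mem (mem_insert_self _ _), hK4card]
    have hle : (sF.filter fun t => fchoice E t = b).card ≤ K.offDiag.card := by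
      apply card_le_card_of_injOn (fun t => (t.2.1, t.2.2.1))
      · intro t ht
        obtain ⟨htS, hfe⟩ := mem_filter.mp ht
        have hspec := fchoice_spec E t (hex t htS)
        rw [hfe] at hspec
        obtain ⟨-, hset, hfst⟩ := hspec
        have hd := (mem_filter.mp (hsF ▸ htS)).2
        obtain ⟨d1, d2, d3, d4, d5, d6, -⟩ := hd
        rw [mem_coe, mem_offDiag]
        refine ⟨?_, ?_, d4⟩
        · rw [hK, mem_erase]
          constructor
          · rw [hfst]; exact d1.symm
          · rw [hset]; simp
        · rw [hK, mem_erase]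
          constructor
          · rw [hfst]; exact d2.symm
          · rw [hset]; simp
      · intro t ht t' ht' heq
        simp only [coe_filter, Set.mem_setOf_eq] at ht ht'
        obtain ⟨htS, hfe⟩ := ht
        obtain ⟨htS', hfe'⟩ := ht'
        have hspec := fchoice_spec E t (hex t htS)
        rw [hfe] at hspec
        obtain ⟨-, hset, hfst⟩ := hspec
        have hspec' := fchoice_spec E t' (hex t' htS')
        rw [hfe'] at hspec'
        obtain ⟨-, hset', hfst'⟩ := hspec'
        have hd := (mem_filter.mp (hsF ▸ htS)).2
        obtain ⟨d1, d2, d3, d4, d5, d6, -⟩ := hd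
        have h1 : t.1 = t'.1 := by rw [← hfst, ← hfst']
        have heq' : (t.2.1, t.2.2.1) = (t'.2.1, t'.2.2.1) := heq
        obtain ⟨h2, h3'⟩ := Prod.ext_iff.mp heq'
        have h4 : t.2.2.2 = t'.2.2.2 := by
          have hmem : t.2.2.2 ∈ ({t'.1, t'.2.1, t'.2.2.1, t'.2.2.2} : Finset (Fin n)) := by
            rw [← hset', hset]
            simp
          simp only [mem_insert, mem_singleton] at hmem
          rcases hmem with h | h | h | h
          · exact absurd ((h.trans h1.symm).symm) d3
          · exact absurd ((h.trans h2.symm).symm) d5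
          · exact absurd ((h.trans h3'.symm).symm) d6
          · exact h
        exact Prod.ext_iff.mpr ⟨h1, Prod.ext_iff.mpr ⟨h2, Prod.ext_iff.mpr ⟨h3', h4⟩⟩⟩
    have hoff : K.offDiag.card = 6 := by
      rw [offDiag_card, hKcard]
    exact hoff ▸ hle
  have h6 : sF.card ≤ 6 * (sF.image (fchoice E)).card :=
    card_le_mul_card_image (f := fchoice E) sF 6 hfib
  have h7 : (sF.image (fchoice E)).card ≤ (QF E).card := by
    apply card_le_card_of_injOn (fun c => (c.1, c.2.2.1, c.2.1, c.2.2.2))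
    · intro c hc
      obtain ⟨t, ht, rfl⟩ := mem_image.mp hc
      obtain ⟨hcyc, -, -⟩ := fchoice_spec E t (hex t ht)
      obtain ⟨-, -, -, -, -, -, e1, e2, e3, e4⟩ := hcyc
      rw [mem_coe, QF, mem_filter]
      exact ⟨mem_univ _, e1, e2, e3, e4⟩
    · intro c _ c' _ heq
      have heq' : (c.1, c.2.2.1, c.2.1, c.2.2.2) = (c'.1, c'.2.2.1, c'.2.1, c'.2.2.2) := heq
      obtain ⟨h1, hrest⟩ := Prod.ext_iff.mp heq'
      obtain ⟨h2, hrest2⟩ := Prod.ext_iff.mp hrest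
      obtain ⟨h3', h4⟩ := Prod.ext_iff.mp hrest2
      exact Prod.ext_iff.mpr ⟨h1, Prod.ext_iff.mpr ⟨h3', Prod.ext_iff.mpr ⟨h2, h4⟩⟩⟩
  exact le_trans h6 (Nat.mul_le_mul_left 6 h7)

end SqLeP


theorem squares_le_paths (n : ℕ) (E : Fin n → Fin n → Prop) [DecidableRel E]
    (h3 : ThreeFree E) :
    (sCount n E : ℚ) ≤ 3 * (n : ℚ) / 2 * (p3Count n E : ℚ) := by
  have h6 : sCount n E ≤ 6 * (SqLeP.QF E).card := SqLeP.part1 E h3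
  have h16 : (16:ℚ) * ((SqLeP.QF E).card : ℚ) ≤ (n:ℚ) * (4 * (p3Count n E : ℚ)) :=
    SqLeP.hQbound E h3
  have h6' : (sCount n E : ℚ) ≤ 6 * ((SqLeP.QF E).card : ℚ) := by exact_mod_cast h6
  nlinarith [h16, h6']
end

section
/- If G is a 3-free digraph on n vertices, then |N| ≥ (2/3)·S, where S is 24 times the number of directed 4-cycles and N is the set of ordered 4-tuples (a,b,c,d) of vertices such that no directed 4-vertex path has vertex set {a,b,c,d}. -/
set_option linter.unusedSectionVars false
set_option maxHeartbeats 1000000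

namespace SSdev

open Finset

variable {n : ℕ} (E : Fin n → Fin n → Prop) [DecidableRel E]

/-- The set of "good" 4-tuples (no 4-path on their vertex set). -/
def Nfin : Finset (Fin n × Fin n × Fin n × Fin n) :=
  Finset.univ.filter (fun p => ¬ ∃ w x y z : Fin n, IsPath4 E w x y z ∧
        ({w, x, y, z} : Finset (Fin n)) = {p.1, p.2.1, p.2.2.1, p.2.2.2})

def Cfin : Finset (Fin n × Fin n × Fin n × Fin n) :=
  Finset.univ.filter (fun p => IsCycle4 E p.1 p.2.1 p.2.2.1 p.2.2.2)

def Sset (u v : Fin n) : Finset (Fin n) := Finset.univ.filter (fun x => E u x ∧ E x v)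

def ANCH (u v : Fin n) : Finset (Fin n × Fin n) :=
  Finset.univ.filter (fun p => (u, p.1, v, p.2) ∈ Nfin E)

def amu (u v : Fin n) : ℕ := (Sset E u v).card * (Sset E v u).card

lemma mem_Sset {u v x : Fin n} : x ∈ Sset E u v ↔ E u x ∧ E x v := by
  simp [Sset]

lemma mem_ANCH {u v : Fin n} {p : Fin n × Fin n} :
    p ∈ ANCH E u v ↔ (u, p.1, v, p.2) ∈ Nfin E := by
  simp [ANCH]

lemma mem_Nfin {p : Fin n × Fin n × Fin n × Fin n} :
    p ∈ Nfin E ↔ ¬ ∃ w x y z : Fin n, IsPath4 E w x y z ∧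
        ({w, x, y, z} : Finset (Fin n)) = {p.1, p.2.1, p.2.2.1, p.2.2.2} := by
  simp [Nfin]

section basics

lemma card3 (a b c : Fin n) : ({a, b, c} : Finset (Fin n)).card ≤ 3 := by
  apply le_trans (Finset.card_insert_le _ _)
  have : ({b, c} : Finset (Fin n)).card ≤ 2 := by
    apply le_trans (Finset.card_insert_le _ _); simp
  omega

lemma path4_card {w x y z : Fin n} (h : IsPath4 E w x y z) :
    ({w, x, y, z} : Finset (Fin n)).card = 4 := by
  obtain ⟨h1, h2, h3, h4, h5, h6, -, -, -⟩ := h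
  rw [Finset.card_insert_of_notMem (by simp [h1, h2, h3]),
      Finset.card_insert_of_notMem (by simp [h4, h5]),
      Finset.card_insert_of_notMem (by simp [h6]), Finset.card_singleton]

/-- tuples whose vertex set has at most 3 elements are good -/
lemma nok_of_small (a b c d : Fin n) (h : ({a, b, c, d} : Finset (Fin n)).card ≤ 3) :
    ¬ ∃ w x y z : Fin n, IsPath4 E w x y z ∧
        ({w, x, y, z} : Finset (Fin n)) = {a, b, c, d} := by
  rintro ⟨w, x, y, z, hp, he⟩
  have h4 := path4_card E hp
  rw [he] at h4
  omega

/-- no 4-path on a vertex set splitting into two nonadjacent halves -/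
lemma no_path_split (a₁ a₂ b₁ b₂ : Fin n)
    (h11 : ¬ E a₁ b₁) (h11' : ¬ E b₁ a₁) (h12 : ¬ E a₁ b₂) (h12' : ¬ E b₂ a₁)
    (h21 : ¬ E a₂ b₁) (h21' : ¬ E b₁ a₂) (h22 : ¬ E a₂ b₂) (h22' : ¬ E b₂ a₂) :
    ¬ ∃ w x y z : Fin n, IsPath4 E w x y z ∧
        ({w, x, y, z} : Finset (Fin n)) = {a₁, a₂, b₁, b₂} := by
  rintro ⟨w, x, y, z, ⟨hwx, hwy, hwz, hxy, hxz, hyz, e1, e2, e3⟩, he⟩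
  have hmem : ∀ t ∈ ({w, x, y, z} : Finset (Fin n)),
      (t = a₁ ∨ t = a₂) ∨ (t = b₁ ∨ t = b₂) := by
    intro t ht; rw [he] at ht; simp only [Finset.mem_insert, Finset.mem_singleton] at ht; tauto
  have hw := hmem w (by simp)
  have hx := hmem x (by simp)
  have hy := hmem y (by simp)
  have stepAB : ∀ p q : Fin n, E p q → (p = a₁ ∨ p = a₂) → (q = b₁ ∨ q = b₂) → False := by
    rintro p q hpq (rfl | rfl) (rfl | rfl) <;> tauto
  have stepBA : ∀ p q : Fin n, E p q → (p = b₁ ∨ p = b₂) → (q = a₁ ∨ q = a₂) → False := by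
    rintro p q hpq (rfl | rfl) (rfl | rfl) <;> tauto
  rcases hw with hwA | hwB
  · have hxA : x = a₁ ∨ x = a₂ := by
      rcases hx with h | h
      · exact h
      · exact absurd (stepAB w x e1 hwA h) (by simp)
    have hyA : y = a₁ ∨ y = a₂ := by
      rcases hy with h | h
      · exact h
      · exact absurd (stepAB x y e2 hxA h) (by simp)
    rcases hwA with rfl | rfl <;> rcases hxA with rfl | rfl <;> rcases hyA with rfl | rfl <;>
      simp_all
  · have hxB : x = b₁ ∨ x = b₂ := by
      rcases hx with h | h
      · exact absurd (stepBA w x e1 hwB h) (by simp)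
      · exact h
    have hyB : y = b₁ ∨ y = b₂ := by
      rcases hy with h | h
      · exact absurd (stepBA x y e2 hxB h) (by simp)
      · exact h
    rcases hwB with rfl | rfl <;> rcases hxB with rfl | rfl <;> rcases hyB with rfl | rfl <;>
      simp_all

/-- no 4-path on a vertex set with an isolated vertex `t` -/
lemma no_path_isolated (t a b c : Fin n)
    (h1 : ¬ E t a) (h1' : ¬ E a t) (h2 : ¬ E t b) (h2' : ¬ E b t)
    (h3 : ¬ E t c) (h3' : ¬ E c t) :
    ¬ ∃ w x y z : Fin n, IsPath4 E w x y z ∧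
        ({w, x, y, z} : Finset (Fin n)) = {t, a, b, c} := by
  rintro ⟨w, x, y, z, ⟨hwx, hwy, hwz, hxy, hxz, hyz, e1, e2, e3⟩, he⟩
  have hmem : ∀ s ∈ ({w, x, y, z} : Finset (Fin n)),
      s = t ∨ s = a ∨ s = b ∨ s = c := by
    intro s hs; rw [he] at hs; simp only [Finset.mem_insert, Finset.mem_singleton] at hs; tauto
  have ht : t ∈ ({w, x, y, z} : Finset (Fin n)) := by rw [he]; simp
  simp only [Finset.mem_insert, Finset.mem_singleton] at ht
  rcases ht with rfl | rfl | rfl | rfl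
  · rcases hmem x (by simp) with rfl | rfl | rfl | rfl
    · exact hwx rfl
    · exact h1 e1
    · exact h2 e1
    · exact h3 e1
  · rcases hmem w (by simp) with rfl | rfl | rfl | rfl
    · exact hwx rfl
    · exact h1' e1
    · exact h2' e1
    · exact h3' e1
  · rcases hmem z (by simp) with rfl | rfl | rfl | rfl
    · exact hyz rfl
    · exact h1 e3
    · exact h2 e3
    · exact h3 e3
  · rcases hmem y (by simp) with rfl | rfl | rfl | rfl
    · exact hyz rfl
    · exact h1' e3
    · exact h2' e3
    · exact h3' e3


lemma quad_eq_of (a b c : Fin n) (s : Finset (Fin n)) (h : s = {a, b, c}) : s.card ≤ 3 := by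
  rw [h]; exact card3 a b c

lemma quadA (a b c : Fin n) : ({a, a, b, c} : Finset (Fin n)).card ≤ 3 :=
  quad_eq_of a b c _ (by ext t; simp only [Finset.mem_insert, Finset.mem_singleton]; tauto)

lemma quadB (a b c : Fin n) : ({a, b, b, c} : Finset (Fin n)).card ≤ 3 :=
  quad_eq_of a b c _ (by ext t; simp only [Finset.mem_insert, Finset.mem_singleton]; tauto)

lemma quadC (a b c : Fin n) : ({a, b, c, a} : Finset (Fin n)).card ≤ 3 :=
  quad_eq_of a b c _ (by ext t; simp only [Finset.mem_insert, Finset.mem_singleton]; tauto)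

lemma quadD (a b c : Fin n) : ({a, b, c, c} : Finset (Fin n)).card ≤ 3 :=
  quad_eq_of a b c _ (by ext t; simp only [Finset.mem_insert, Finset.mem_singleton]; tauto)

lemma quadE (a b c : Fin n) : ({a, b, c, b} : Finset (Fin n)).card ≤ 3 :=
  quad_eq_of a b c _ (by ext t; simp only [Finset.mem_insert, Finset.mem_singleton]; tauto)

lemma perm24 (a b c d : Fin n) : ({a, b, c, d} : Finset (Fin n)) = {a, d, c, b} := by
  ext t; simp only [Finset.mem_insert, Finset.mem_singleton]; tauto

lemma perm3 (a b c d : Fin n) : ({a, b, c, d} : Finset (Fin n)) = {c, a, b, d} := by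
  ext t; simp only [Finset.mem_insert, Finset.mem_singleton]; tauto

end basics

end SSdev
set_option linter.unusedSectionVars false
set_option maxHeartbeats 1000000

namespace SSdev
open Finset

variable {n : ℕ} (E : Fin n → Fin n → Prop) [DecidableRel E]

lemma le_sq (k : ℕ) : k ≤ k * k := by
  rcases Nat.eq_zero_or_pos k with rfl | h
  · simp
  · exact Nat.le_mul_of_pos_left k h

lemma no2 (h3 : ThreeFree E) {a b : Fin n} (h : E a b) : ¬ E b a :=
  fun h' => h3.2.1 a b ⟨h, h'⟩

lemma no3 (h3 : ThreeFree E) {a b c : Fin n} (hab : E a b) (hbc : E b c) : ¬ E c a :=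
  fun h' => h3.2.2 a b c ⟨hab, hbc, h'⟩

lemma cross_nonadj (h3 : ThreeFree E) {x z : Fin n} :
    ∀ p ∈ Sset E z x, ∀ q ∈ Sset E x z, ¬ E p q ∧ ¬ E q p := by
  intro p hp q hq
  rw [mem_Sset] at hp hq
  exact ⟨fun h => no3 E h3 h hq.2 hp.1, fun h => no3 E h3 h hp.2 hq.1⟩

lemma Sset_disj (h3 : ThreeFree E) {x z : Fin n} : Disjoint (Sset E x z) (Sset E z x) := by
  rw [Finset.disjoint_left]
  intro t h1 h2
  rw [mem_Sset] at h1 h2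
  exact no2 E h3 h1.1 h2.2

/-- The main counting lemma: lower bound for the anchored good tuples at a diagonal. -/
lemma L1side (h3 : ThreeFree E) {u x v z : Fin n} (hc : IsCycle4 E u x v z) :
    ((Finset.univ : Finset (Fin n × Fin n)) \
        ((((Finset.univ : Finset (Fin n)).erase u).erase v).offDiag)).card
      + (((Sset E z x).erase u) ×ˢ ((Sset E x z).erase v)).card
      + (((Sset E x z).erase v) ×ˢ ((Sset E z x).erase u)).card
      + ((Sset E x z).erase v).offDiag.card
      + ((Sset E z x).erase u).offDiag.card ≤ (ANCH E u v).card := by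
  classical
  obtain ⟨hux, huv, huz, hxv, hxz, hvz, eux, exv, evz, ezu⟩ := hc
  set SA := Sset E x z with hSA
  set SB := Sset E z x with hSB
  set A' := SA.erase v with hA'
  set B' := SB.erase u with hB'
  set U' := ((Finset.univ : Finset (Fin n)).erase u).erase v with hU'
  set Deg := ((Finset.univ : Finset (Fin n × Fin n)) \ U'.offDiag) with hDeg
  have hvSA : v ∈ SA := (mem_Sset E).2 ⟨exv, evz⟩
  have huSB : u ∈ SB := (mem_Sset E).2 ⟨ezu, eux⟩
  have huv' : ¬ E u v := fun h => no3 E h3 h evz ezu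
  have hvu' : ¬ E v u := fun h => no3 E h3 h eux exv
  have hSAnu : ∀ t ∈ SA, t ≠ u := by
    intro t ht
    rw [hSA, mem_Sset] at ht
    rintro rfl
    exact no2 E h3 eux ht.1
  have hSBnv : ∀ t ∈ SB, t ≠ v := by
    intro t ht
    rw [hSB, mem_Sset] at ht
    rintro rfl
    exact no2 E h3 exv ht.2
  have hdisjS : Disjoint SA SB := Sset_disj E h3
  have hA'fact : ∀ t ∈ A', t ∈ SA ∧ t ≠ u ∧ t ≠ v := fun t ht =>
    ⟨Finset.mem_of_mem_erase ht, hSAnu t (Finset.mem_of_mem_erase ht),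
      Finset.ne_of_mem_erase ht⟩
  have hB'fact : ∀ t ∈ B', t ∈ SB ∧ t ≠ u ∧ t ≠ v := fun t ht =>
    ⟨Finset.mem_of_mem_erase ht, Finset.ne_of_mem_erase ht,
      hSBnv t (Finset.mem_of_mem_erase ht)⟩
  have hABne : ∀ p ∈ SA, ∀ q ∈ SB, p ≠ q := by
    intro p hp q hq
    rintro rfl
    exact (Finset.disjoint_left.1 hdisjS hp) hq
  -- subset proofs
  have hDegsub : Deg ⊆ ANCH E u v := by
    rintro ⟨w, w'⟩ h
    rw [hDeg, Finset.mem_sdiff] at h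
    have hdisj : w = u ∨ w = v ∨ w' = u ∨ w' = v ∨ w = w' := by
      by_contra hcon
      push_neg at hcon
      obtain ⟨h1, h2, h3', h4, h5⟩ := hcon
      exact h.2 (Finset.mem_offDiag.2
        ⟨by simp [hU', h1, h2], by simp [hU', h3', h4], h5⟩)
    rw [mem_ANCH, mem_Nfin]
    apply nok_of_small
    rcases hdisj with h | h | h | h | h <;> rw [h]
    · exact quadA u v w'
    · exact quadB u v w'
    · exact quadC u w v
    · exact quadD u w v
    · exact quadE u w' v
  have hF1sub : (B' ×ˢ A') ⊆ ANCH E u v := by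
    rintro ⟨p, q⟩ hpq
    rw [Finset.mem_product] at hpq
    obtain ⟨hpB, -, -⟩ := hB'fact p hpq.1
    obtain ⟨hqA, -, -⟩ := hA'fact q hpq.2
    rw [mem_ANCH, mem_Nfin]
    have c1 := cross_nonadj E h3 u huSB q hqA
    have c2 := cross_nonadj E h3 p hpB v hvSA
    have c3 := cross_nonadj E h3 p hpB q hqA
    exact no_path_split E u p v q huv' hvu' c1.1 c1.2 c2.1 c2.2 c3.1 c3.2
  have hF2sub : (A' ×ˢ B') ⊆ ANCH E u v := by
    rintro ⟨q, p⟩ hpq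
    rw [Finset.mem_product] at hpq
    obtain ⟨hqA, -, -⟩ := hA'fact q hpq.1
    obtain ⟨hpB, -, -⟩ := hB'fact p hpq.2
    rw [mem_ANCH, mem_Nfin]
    rw [perm24 u q v p]
    have c1 := cross_nonadj E h3 u huSB q hqA
    have c2 := cross_nonadj E h3 p hpB v hvSA
    have c3 := cross_nonadj E h3 p hpB q hqA
    exact no_path_split E u p v q huv' hvu' c1.1 c1.2 c2.1 c2.2 c3.1 c3.2
  have hF3sub : A'.offDiag ⊆ ANCH E u v := by
    rintro ⟨q, q'⟩ hqq
    rw [Finset.mem_offDiag] at hqq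
    obtain ⟨hq, hq', hne⟩ := hqq
    obtain ⟨hqA, -, -⟩ := hA'fact q hq
    obtain ⟨hq'A, -, -⟩ := hA'fact q' hq'
    rw [mem_ANCH, mem_Nfin]
    have c1 := cross_nonadj E h3 u huSB q hqA
    have c2 := cross_nonadj E h3 u huSB q' hq'A
    exact no_path_isolated E u q v q' c1.1 c1.2 huv' hvu' c2.1 c2.2
  have hF4sub : B'.offDiag ⊆ ANCH E u v := by
    rintro ⟨p, p'⟩ hpp
    rw [Finset.mem_offDiag] at hpp
    obtain ⟨hp, hp', hne⟩ := hpp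
    obtain ⟨hpB, -, -⟩ := hB'fact p hp
    obtain ⟨hp'B, -, -⟩ := hB'fact p' hp'
    rw [mem_ANCH, mem_Nfin]
    rw [perm3 u p v p']
    have c1 := cross_nonadj E h3 p hpB v hvSA
    have c2 := cross_nonadj E h3 p' hp'B v hvSA
    exact no_path_isolated E v u p p' hvu' huv' c1.2 c1.1 c2.2 c2.1
  -- "good pair" profiles of the F families
  have hGoodF : ∀ (w w' : Fin n),
      (w ≠ u ∧ w ≠ v) → (w' ≠ u ∧ w' ≠ v) → w ≠ w' → (w, w') ∈ U'.offDiag := by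
    intro w w' h1 h2 h5
    exact Finset.mem_offDiag.2 ⟨by simp [hU', h1.1, h1.2], by simp [hU', h2.1, h2.2], h5⟩
  -- disjointness
  have hd1 : Disjoint Deg (B' ×ˢ A') := by
    rw [Finset.disjoint_left]
    rintro ⟨p, q⟩ h1 h2
    rw [Finset.mem_product] at h2
    obtain ⟨hpB, hpu, hpv⟩ := hB'fact p h2.1
    obtain ⟨hqA, hqu, hqv⟩ := hA'fact q h2.2
    rw [hDeg, Finset.mem_sdiff] at h1
    exact h1.2 (hGoodF p q ⟨hpu, hpv⟩ ⟨hqu, hqv⟩ (hABne q hqA p hpB).symm)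
  have hd2 : Disjoint Deg (A' ×ˢ B') := by
    rw [Finset.disjoint_left]
    rintro ⟨q, p⟩ h1 h2
    rw [Finset.mem_product] at h2
    obtain ⟨hqA, hqu, hqv⟩ := hA'fact q h2.1
    obtain ⟨hpB, hpu, hpv⟩ := hB'fact p h2.2
    rw [hDeg, Finset.mem_sdiff] at h1
    exact h1.2 (hGoodF q p ⟨hqu, hqv⟩ ⟨hpu, hpv⟩ (hABne q hqA p hpB))
  have hd3 : Disjoint Deg A'.offDiag := by
    rw [Finset.disjoint_left]
    rintro ⟨q, q'⟩ h1 h2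
    rw [Finset.mem_offDiag] at h2
    obtain ⟨hqA, hqu, hqv⟩ := hA'fact q h2.1
    obtain ⟨hq'A, hq'u, hq'v⟩ := hA'fact q' h2.2.1
    rw [hDeg, Finset.mem_sdiff] at h1
    exact h1.2 (hGoodF q q' ⟨hqu, hqv⟩ ⟨hq'u, hq'v⟩ h2.2.2)
  have hd4 : Disjoint Deg B'.offDiag := by
    rw [Finset.disjoint_left]
    rintro ⟨p, p'⟩ h1 h2
    rw [Finset.mem_offDiag] at h2
    obtain ⟨hpB, hpu, hpv⟩ := hB'fact p h2.1
    obtain ⟨hp'B, hp'u, hp'v⟩ := hB'fact p' h2.2.1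
    rw [hDeg, Finset.mem_sdiff] at h1
    exact h1.2 (hGoodF p p' ⟨hpu, hpv⟩ ⟨hp'u, hp'v⟩ h2.2.2)
  have hd12 : Disjoint (B' ×ˢ A') (A' ×ˢ B') := by
    rw [Finset.disjoint_left]
    rintro ⟨p, q⟩ h1 h2
    rw [Finset.mem_product] at h1 h2
    exact hABne p ((hA'fact p h2.1).1) p ((hB'fact p h1.1).1) rfl
  have hd13 : Disjoint (B' ×ˢ A') A'.offDiag := by
    rw [Finset.disjoint_left]
    rintro ⟨p, q⟩ h1 h2
    rw [Finset.mem_product] at h1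
    rw [Finset.mem_offDiag] at h2
    exact hABne p ((hA'fact p h2.1).1) p ((hB'fact p h1.1).1) rfl
  have hd14 : Disjoint (B' ×ˢ A') B'.offDiag := by
    rw [Finset.disjoint_left]
    rintro ⟨p, q⟩ h1 h2
    rw [Finset.mem_product] at h1
    rw [Finset.mem_offDiag] at h2
    exact hABne q ((hA'fact q h1.2).1) q ((hB'fact q h2.2.1).1) rfl
  have hd23 : Disjoint (A' ×ˢ B') A'.offDiag := by
    rw [Finset.disjoint_left]
    rintro ⟨q, p⟩ h1 h2
    rw [Finset.mem_product] at h1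
    rw [Finset.mem_offDiag] at h2
    exact hABne p ((hA'fact p h2.2.1).1) p ((hB'fact p h1.2).1) rfl
  have hd24 : Disjoint (A' ×ˢ B') B'.offDiag := by
    rw [Finset.disjoint_left]
    rintro ⟨q, p⟩ h1 h2
    rw [Finset.mem_product] at h1
    rw [Finset.mem_offDiag] at h2
    exact hABne q ((hA'fact q h1.1).1) q ((hB'fact q h2.1).1) rfl
  have hd34 : Disjoint A'.offDiag B'.offDiag := by
    rw [Finset.disjoint_left]
    rintro ⟨q, q'⟩ h1 h2
    rw [Finset.mem_offDiag] at h1 h2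
    exact hABne q ((hA'fact q h1.1).1) q ((hB'fact q h2.1).1) rfl
  -- assemble : card of disjoint union
  have hsub : Deg ∪ ((B' ×ˢ A') ∪ ((A' ×ˢ B') ∪ (A'.offDiag ∪ B'.offDiag))) ⊆ ANCH E u v := by
    intro t ht
    rcases Finset.mem_union.1 ht with h | h
    · exact hDegsub h
    rcases Finset.mem_union.1 h with h | h
    · exact hF1sub h
    rcases Finset.mem_union.1 h with h | h
    · exact hF2sub h
    rcases Finset.mem_union.1 h with h | h
    · exact hF3sub h
    · exact hF4sub h
  have hcard := Finset.card_le_card hsub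
  rw [Finset.card_union_of_disjoint (by
        refine Finset.disjoint_union_right.2 ⟨hd1, ?_⟩
        refine Finset.disjoint_union_right.2 ⟨hd2, ?_⟩
        exact Finset.disjoint_union_right.2 ⟨hd3, hd4⟩),
      Finset.card_union_of_disjoint (by
        refine Finset.disjoint_union_right.2 ⟨hd12, ?_⟩
        exact Finset.disjoint_union_right.2 ⟨hd13, hd14⟩),
      Finset.card_union_of_disjoint (Finset.disjoint_union_right.2 ⟨hd23, hd24⟩),
      Finset.card_union_of_disjoint hd34] at hcard
  omega

end SSdev
namespace SSdev
open Finset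

variable {n : ℕ} (E : Fin n → Fin n → Prop) [DecidableRel E]

def rot (ρ : Fin n × Fin n × Fin n × Fin n) : Fin n × Fin n × Fin n × Fin n :=
  (ρ.2.1, ρ.2.2.1, ρ.2.2.2, ρ.1)

def sig (ρ : Fin n × Fin n × Fin n × Fin n) : ℚ :=
  ((ANCH E ρ.1 ρ.2.2.1).card : ℚ) / ((amu E ρ.1 ρ.2.2.1 : ℕ) : ℚ)

lemma cyc_rot {u x v z : Fin n} (hc : IsCycle4 E u x v z) : IsCycle4 E x v z u := by
  obtain ⟨h1, h2, h3, h4, h5, h6, e1, e2, e3, e4⟩ := hc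
  exact ⟨h4, h5, h1.symm, h6, h2.symm, h3.symm, e2, e3, e4, e1⟩

lemma rot_mem {ρ : Fin n × Fin n × Fin n × Fin n} (h : ρ ∈ Cfin E) : rot ρ ∈ Cfin E := by
  obtain ⟨a, b, c, d⟩ := ρ
  simp only [Cfin, Finset.mem_filter, Finset.mem_univ, true_and] at h ⊢
  exact cyc_rot E h

lemma rot_rot_rot_rot (ρ : Fin n × Fin n × Fin n × Fin n) :
    rot (rot (rot (rot ρ))) = ρ := by
  obtain ⟨a, b, c, d⟩ := ρ
  rfl

lemma sum_rot (f : (Fin n × Fin n × Fin n × Fin n) → ℚ) :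
    ∑ ρ ∈ Cfin E, f (rot ρ) = ∑ ρ ∈ Cfin E, f ρ := by
  apply Finset.sum_nbij' (i := fun ρ => rot ρ) (j := fun ρ => rot (rot (rot ρ)))
  · intro a ha; exact rot_mem E ha
  · intro a ha; exact rot_mem E (rot_mem E (rot_mem E ha))
  · intro a _; obtain ⟨p, q, r, s⟩ := a; rfl
  · intro a _; obtain ⟨p, q, r, s⟩ := a; rfl
  · intro a _; rfl

lemma amu_comm (u v : Fin n) : amu E u v = amu E v u := Nat.mul_comm _ _

lemma amu_pos (h3 : ThreeFree E) {u x v z : Fin n} (hc : IsCycle4 E u x v z) :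
    1 ≤ amu E u v := by
  obtain ⟨h1, h2, h3', h4, h5, h6, e1, e2, e3, e4⟩ := hc
  have hx : x ∈ Sset E u v := (mem_Sset E).2 ⟨e1, e2⟩
  have hz : z ∈ Sset E v u := (mem_Sset E).2 ⟨e3, e4⟩
  have c1 : 0 < (Sset E u v).card := Finset.card_pos.2 ⟨x, hx⟩
  have c2 : 0 < (Sset E v u).card := Finset.card_pos.2 ⟨z, hz⟩
  exact Nat.mul_pos c1 c2

/-- pure arithmetic core -/
lemma arith_core (a0 b0 k N : ℕ) (hn : N = a0 + b0 + 4 + k) :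
    8 * ((a0 + 1) * (b0 + 1)) ≤
      (N * N - ((N - 2) * (N - 2) - (N - 2))) + b0 * a0 + a0 * b0
        + (a0 * a0 - a0) + (b0 * b0 - b0)
      + ((N * N - ((N - 2) * (N - 2) - (N - 2))) + a0 * b0 + b0 * a0
        + (b0 * b0 - b0) + (a0 * a0 - a0)) := by
  have l1 : a0 ≤ a0 * a0 := le_sq a0
  have l2 : b0 ≤ b0 * b0 := le_sq b0
  have l3 : (N - 2) ≤ (N - 2) * (N - 2) := le_sq (N - 2)
  have l4 : (N - 2) * (N - 2) - (N - 2) ≤ N * N :=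
    le_trans (Nat.sub_le _ _) (Nat.mul_le_mul (Nat.sub_le _ _) (Nat.sub_le _ _))
  have h2 : (2 : ℕ) ≤ N := by omega
  zify [l1, l2, l3, l4, h2]
  subst hn
  push_cast
  nlinarith [sq_nonneg ((a0 : ℤ) - b0), sq_nonneg ((a0 : ℤ) + b0)]

/-- Key inequality: the two anchored counts at a diagonal dominate `8 ×` the number of
cycles on the other diagonal. -/
lemma Xbound (h3 : ThreeFree E) {u x v z : Fin n} (hc : IsCycle4 E u x v z) :
    8 * amu E x z ≤ (ANCH E u v).card + (ANCH E v u).card := by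
  classical
  have h1 := L1side E h3 hc
  have hc2 : IsCycle4 E v z u x := cyc_rot E (cyc_rot E hc)
  have h2 := L1side E h3 hc2
  obtain ⟨hux, huv, huz, hxv, hxz, hvz, eux, exv, evz, ezu⟩ := hc
  -- rewrite the two erase orders to agree
  have herase : ((Finset.univ : Finset (Fin n)).erase v).erase u
      = ((Finset.univ : Finset (Fin n)).erase u).erase v := by
    ext t; simp only [Finset.mem_erase, Finset.mem_univ, and_true]; tauto
  rw [herase] at h2
  -- cardinal values
  have hvSA : v ∈ Sset E x z := (mem_Sset E).2 ⟨exv, evz⟩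
  have huSB : u ∈ Sset E z x := (mem_Sset E).2 ⟨ezu, eux⟩
  have ha1 : 1 ≤ (Sset E x z).card := Finset.card_pos.2 ⟨v, hvSA⟩
  have hb1 : 1 ≤ (Sset E z x).card := Finset.card_pos.2 ⟨u, huSB⟩
  obtain ⟨a0, hA⟩ : ∃ a0, (Sset E x z).card = a0 + 1 := ⟨(Sset E x z).card - 1, by omega⟩
  obtain ⟨b0, hB⟩ : ∃ b0, (Sset E z x).card = b0 + 1 := ⟨(Sset E z x).card - 1, by omega⟩
  have hea : ((Sset E x z).erase v).card = a0 := by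
    rw [Finset.card_erase_of_mem hvSA, hA]; omega
  have heb : ((Sset E z x).erase u).card = b0 := by
    rw [Finset.card_erase_of_mem huSB, hB]; omega
  -- a + b + 2 ≤ n
  have habn0 : (Sset E x z).card + (Sset E z x).card + 2 ≤ n := by
    have hsub : Sset E x z ∪ Sset E z x ⊆
        ((Finset.univ : Finset (Fin n)).erase z).erase x := by
      intro t ht
      rcases Finset.mem_union.1 ht with h | h <;> rw [mem_Sset] at h <;>
        obtain ⟨hh1, hh2⟩ := h
      · exact Finset.mem_erase.2 ⟨fun he => h3.1 x (he ▸ hh1),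
          Finset.mem_erase.2 ⟨fun he => h3.1 z (he ▸ hh2), Finset.mem_univ t⟩⟩
      · exact Finset.mem_erase.2 ⟨fun he => h3.1 x (he ▸ hh2),
          Finset.mem_erase.2 ⟨fun he => h3.1 z (he ▸ hh1), Finset.mem_univ t⟩⟩
    have hdu : Disjoint (Sset E x z) (Sset E z x) := Sset_disj E h3
    have h1' := Finset.card_le_card hsub
    rw [Finset.card_union_of_disjoint hdu] at h1'
    have h2' : (((Finset.univ : Finset (Fin n)).erase z).erase x).card = n - 1 - 1 := by
      rw [Finset.card_erase_of_mem (Finset.mem_erase.2 ⟨hxz, Finset.mem_univ x⟩),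
          Finset.card_erase_of_mem (Finset.mem_univ z), Finset.card_univ, Fintype.card_fin]
    rw [h2'] at h1'
    have hn1 : 1 ≤ n := Nat.pos_of_ne_zero (by rintro rfl; exact absurd u.2 (by omega))
    omega
  have habn : a0 + b0 + 4 ≤ n := by omega
  -- value of the degenerate count
  have hDval : ((Finset.univ : Finset (Fin n × Fin n)) \
      ((((Finset.univ : Finset (Fin n)).erase u).erase v).offDiag)).card
      = n * n - ((n - 2) * (n - 2) - (n - 2)) := by
    have hTcard : (((Finset.univ : Finset (Fin n)).erase u).erase v).card = n - 2 := by
      rw [Finset.card_erase_of_mem (Finset.mem_erase.2 ⟨(Ne.symm huv), Finset.mem_univ v⟩),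
          Finset.card_erase_of_mem (Finset.mem_univ u), Finset.card_univ, Fintype.card_fin]
      omega
    rw [Finset.card_sdiff_of_subset (Finset.subset_univ _), Finset.offDiag_card, hTcard]
    congr 1
    rw [Finset.card_univ]
    simp [Fintype.card_prod]
  -- rewrite everything in h1, h2
  rw [hDval, Finset.card_product, Finset.card_product, Finset.offDiag_card,
      Finset.offDiag_card, hea, heb] at h1 h2
  -- final arithmetic
  obtain ⟨k, hk⟩ : ∃ k, n = a0 + b0 + 4 + k := ⟨n - (a0 + b0 + 4), by omega⟩
  have harith := arith_core a0 b0 k n hk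
  have hamu : amu E x z = (a0 + 1) * (b0 + 1) := by rw [amu, hA, hB]
  rw [hamu]
  exact le_trans harith (Nat.add_le_add h1 h2)

end SSdev
namespace SSdev
open Finset

variable {n : ℕ} (E : Fin n → Fin n → Prop) [DecidableRel E]

lemma orbit_bound (h3 : ThreeFree E) {ρ : Fin n × Fin n × Fin n × Fin n} (hρ : ρ ∈ Cfin E) :
    (16 : ℚ) ≤ sig E ρ + sig E (rot ρ) + sig E (rot (rot ρ)) + sig E (rot (rot (rot ρ))) := by
  obtain ⟨u, x, v, z⟩ := ρ
  have hc : IsCycle4 E u x v z := by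
    simpa [Cfin] using hρ
  have hX1 : 8 * amu E x z ≤ (ANCH E u v).card + (ANCH E v u).card := Xbound E h3 hc
  have hX2 : 8 * amu E v u ≤ (ANCH E x z).card + (ANCH E z x).card :=
    Xbound E h3 (cyc_rot E hc)
  have hμ1 : 1 ≤ amu E u v := amu_pos E h3 hc
  have hμ2 : 1 ≤ amu E x z := amu_pos E h3 (cyc_rot E hc)
  rw [amu_comm E v u] at hX2
  have h01 : (0 : ℚ) < ((amu E u v : ℕ) : ℚ) := by exact_mod_cast hμ1
  have h02 : (0 : ℚ) < ((amu E x z : ℕ) : ℚ) := by exact_mod_cast hμ2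
  have hX1' : (8 : ℚ) * ((amu E x z : ℕ) : ℚ)
      ≤ ((ANCH E u v).card : ℚ) + ((ANCH E v u).card : ℚ) := by exact_mod_cast hX1
  have hX2' : (8 : ℚ) * ((amu E u v : ℕ) : ℚ)
      ≤ ((ANCH E x z).card : ℚ) + ((ANCH E z x).card : ℚ) := by exact_mod_cast hX2
  simp only [sig, rot]
  rw [amu_comm E v u, amu_comm E z x]
  have e1 : (8 : ℚ) * ((amu E x z : ℕ) : ℚ) / ((amu E u v : ℕ) : ℚ)
      ≤ ((ANCH E u v).card : ℚ) / ((amu E u v : ℕ) : ℚ)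
        + ((ANCH E v u).card : ℚ) / ((amu E u v : ℕ) : ℚ) := by
    rw [← add_div]
    exact (div_le_div_iff_of_pos_right h01).2 hX1'
  have e2 : (8 : ℚ) * ((amu E u v : ℕ) : ℚ) / ((amu E x z : ℕ) : ℚ)
      ≤ ((ANCH E x z).card : ℚ) / ((amu E x z : ℕ) : ℚ)
        + ((ANCH E z x).card : ℚ) / ((amu E x z : ℕ) : ℚ) := by
    rw [← add_div]
    exact (div_le_div_iff_of_pos_right h02).2 hX2'
  have e3 : (16 : ℚ) ≤ (8 : ℚ) * ((amu E x z : ℕ) : ℚ) / ((amu E u v : ℕ) : ℚ)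
      + (8 : ℚ) * ((amu E u v : ℕ) : ℚ) / ((amu E x z : ℕ) : ℚ) := by
    rw [div_add_div _ _ (ne_of_gt h01) (ne_of_gt h02), le_div_iff₀ (mul_pos h01 h02)]
    nlinarith [sq_nonneg (((amu E u v : ℕ) : ℚ) - ((amu E x z : ℕ) : ℚ))]
  linarith

lemma fiber_card (h3 : ThreeFree E) (ε : Fin n × Fin n) :
    ((Cfin E).filter (fun ρ => (ρ.1, ρ.2.2.1) = ε)).card = amu E ε.1 ε.2 := by
  classical
  obtain ⟨u, v⟩ := ε
  rw [amu, ← Finset.card_product]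
  refine Finset.card_nbij' (i := fun ρ => (ρ.2.1, ρ.2.2.2))
    (j := fun p => (u, p.1, v, p.2)) ?_ ?_ ?_ ?_
  · rintro ⟨w1, w2, w3, w4⟩ hmem
    simp only [Finset.mem_coe, Finset.mem_filter, Cfin, Finset.mem_univ, true_and, Prod.mk.injEq] at hmem
    obtain ⟨hc, h1, h2⟩ := hmem
    subst h1; subst h2
    obtain ⟨-, -, -, -, -, -, e1, e2, e3, e4⟩ := hc
    rw [Finset.mem_coe, Finset.mem_product]
    exact ⟨(mem_Sset E).2 ⟨e1, e2⟩, (mem_Sset E).2 ⟨e3, e4⟩⟩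
  · rintro ⟨xx, zz⟩ hmem
    rw [Finset.mem_coe, Finset.mem_product] at hmem
    obtain ⟨hx, hz⟩ := hmem
    rw [mem_Sset] at hx hz
    obtain ⟨e1, e2⟩ := hx
    obtain ⟨e3, e4⟩ := hz
    have hcyc : IsCycle4 E u xx v zz := by
      refine ⟨?_, ?_, ?_, ?_, ?_, ?_, e1, e2, e3, e4⟩
      · rintro rfl; exact h3.1 u e1
      · rintro rfl; exact no2 E h3 e1 e2
      · rintro rfl; exact h3.1 u e4
      · rintro rfl; exact h3.1 xx e2
      · rintro rfl; exact no2 E h3 e2 e3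
      · rintro rfl; exact h3.1 v e3
    rw [Finset.mem_coe, Finset.mem_filter]
    refine ⟨?_, rfl⟩
    rw [Cfin, Finset.mem_filter]
    exact ⟨Finset.mem_univ _, hcyc⟩
  · rintro ⟨w1, w2, w3, w4⟩ hmem
    simp only [Finset.mem_coe, Finset.mem_filter, Prod.mk.injEq] at hmem
    obtain ⟨-, h1, h2⟩ := hmem
    simp [h1, h2]
  · rintro ⟨xx, zz⟩ _
    rfl

lemma anch_sum_le (I : Finset (Fin n × Fin n)) :
    ∑ ε ∈ I, (ANCH E ε.1 ε.2).card ≤ (Nfin E).card := by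
  classical
  have hinj : ∀ ε : Fin n × Fin n,
      Function.Injective (fun p : Fin n × Fin n => (ε.1, p.1, ε.2, p.2)) := by
    intro ε p q h
    have h1 : p.1 = q.1 := congrArg (fun t => t.2.1) h
    have h2 : p.2 = q.2 := congrArg (fun t => t.2.2.2) h
    exact Prod.ext h1 h2
  have hdisj : ∀ ε₁ ∈ I, ∀ ε₂ ∈ I, ε₁ ≠ ε₂ →
      Disjoint ((ANCH E ε₁.1 ε₁.2).image (fun p => (ε₁.1, p.1, ε₁.2, p.2)))
        ((ANCH E ε₂.1 ε₂.2).image (fun p => (ε₂.1, p.1, ε₂.2, p.2))) := by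
    intro ε₁ _ ε₂ _ hne
    rw [Finset.disjoint_left]
    rintro t ht1 ht2
    obtain ⟨p, -, rfl⟩ := Finset.mem_image.1 ht1
    obtain ⟨q, -, hq⟩ := Finset.mem_image.1 ht2
    have g1 : ε₂.1 = ε₁.1 := congrArg (fun t => t.1) hq
    have g2 : ε₂.2 = ε₁.2 := congrArg (fun t => t.2.2.1) hq
    exact hne (Prod.ext g1.symm g2.symm)
  calc ∑ ε ∈ I, (ANCH E ε.1 ε.2).card
      = ∑ ε ∈ I, ((ANCH E ε.1 ε.2).image (fun p => (ε.1, p.1, ε.2, p.2))).card := by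
        refine Finset.sum_congr rfl fun ε _ => ?_
        rw [Finset.card_image_of_injective _ (hinj ε)]
    _ = (I.biUnion (fun ε => (ANCH E ε.1 ε.2).image (fun p => (ε.1, p.1, ε.2, p.2)))).card :=
        (Finset.card_biUnion hdisj).symm
    _ ≤ (Nfin E).card := by
        apply Finset.card_le_card
        intro t ht
        obtain ⟨ε, -, ht⟩ := Finset.mem_biUnion.1 ht
        obtain ⟨p, hp, rfl⟩ := Finset.mem_image.1 ht
        exact (mem_ANCH E).1 hp

lemma sigma_le (h3 : ThreeFree E) :
    ∑ ρ ∈ Cfin E, sig E ρ ≤ ((Nfin E).card : ℚ) := by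
  classical
  have hmaps : ∀ ρ ∈ Cfin E,
      (ρ.1, ρ.2.2.1) ∈ (Cfin E).image (fun ρ => (ρ.1, ρ.2.2.1)) :=
    fun ρ h => Finset.mem_image_of_mem _ h
  rw [← Finset.sum_fiberwise_of_maps_to hmaps (fun ρ => sig E ρ)]
  have hstep : ∀ ε ∈ (Cfin E).image (fun ρ => (ρ.1, ρ.2.2.1)),
      (∑ ρ ∈ (Cfin E).filter (fun ρ => (ρ.1, ρ.2.2.1) = ε), sig E ρ)
        = ((ANCH E ε.1 ε.2).card : ℚ) := by
    intro ε hε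
    have hconst : ∀ ρ ∈ (Cfin E).filter (fun ρ => (ρ.1, ρ.2.2.1) = ε),
        sig E ρ = ((ANCH E ε.1 ε.2).card : ℚ) / ((amu E ε.1 ε.2 : ℕ) : ℚ) := by
      intro ρ hρ
      have hcond : (ρ.1, ρ.2.2.1) = ε := (Finset.mem_filter.1 hρ).2
      have c1 : ρ.1 = ε.1 := congrArg (fun t => t.1) hcond
      have c2 : ρ.2.2.1 = ε.2 := congrArg (fun t => t.2) hcond
      simp [sig, c1, c2]
    rw [Finset.sum_congr rfl hconst, Finset.sum_const, fiber_card E h3 ε]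
    have hpos : amu E ε.1 ε.2 ≠ 0 := by
      obtain ⟨ρ, hρ, hρε⟩ := Finset.mem_image.1 hε
      have hmem : ρ ∈ (Cfin E).filter (fun ρ => (ρ.1, ρ.2.2.1) = ε) :=
        Finset.mem_filter.2 ⟨hρ, hρε⟩
      have h1 : 0 < ((Cfin E).filter (fun ρ => (ρ.1, ρ.2.2.1) = ε)).card :=
        Finset.card_pos.2 ⟨ρ, hmem⟩
      rw [fiber_card E h3 ε] at h1
      omega
    rw [nsmul_eq_mul, mul_comm, div_mul_cancel₀]
    exact_mod_cast hpos
  rw [Finset.sum_congr rfl hstep]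
  have := anch_sum_le E ((Cfin E).image (fun ρ => (ρ.1, ρ.2.2.1)))
  exact_mod_cast this

end SSdev
namespace SSdev
open Finset

variable {n : ℕ} (E : Fin n → Fin n → Prop) [DecidableRel E]

def setOf4 (p : Fin n × Fin n × Fin n × Fin n) : Finset (Fin n) :=
  {p.1, p.2.1, p.2.2.1, p.2.2.2}

def Sfin : Finset (Fin n × Fin n × Fin n × Fin n) :=
  (Finset.univ : Finset (Fin n × Fin n × Fin n × Fin n)).filter
    (fun p => p.1 ≠ p.2.1 ∧ p.1 ≠ p.2.2.1 ∧ p.1 ≠ p.2.2.2 ∧ p.2.1 ≠ p.2.2.1 ∧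
      p.2.1 ≠ p.2.2.2 ∧ p.2.2.1 ≠ p.2.2.2 ∧
      ∃ w x y z : Fin n, IsCycle4 E w x y z ∧
        ({w, x, y, z} : Finset (Fin n)) = {p.1, p.2.1, p.2.2.1, p.2.2.2})

lemma rot_set (a b c d : Fin n) : ({b, c, d, a} : Finset (Fin n)) = {a, b, c, d} := by
  ext t; simp only [Finset.mem_insert, Finset.mem_singleton]; tauto

lemma mem_Cfin {ρ : Fin n × Fin n × Fin n × Fin n} :
    ρ ∈ Cfin E ↔ IsCycle4 E ρ.1 ρ.2.1 ρ.2.2.1 ρ.2.2.2 := by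
  rw [Cfin, Finset.mem_filter]
  simp

lemma Sfin_le : (Sfin E).card ≤ 6 * (Cfin E).card := by
  classical
  set P := ((Sfin E) ×ˢ (Cfin E)).filter
      (fun q => q.2.1 = q.1.1 ∧ setOf4 q.2 = setOf4 q.1) with hP
  have hfst : ∀ q ∈ P, q.1 ∈ Sfin E := by
    intro q hq; rw [hP, Finset.mem_filter, Finset.mem_product] at hq; exact hq.1.1
  have hsnd : ∀ q ∈ P, q.2 ∈ Cfin E := by
    intro q hq; rw [hP, Finset.mem_filter, Finset.mem_product] at hq; exact hq.1.2
  have hlow : (Sfin E).card ≤ P.card := by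
    rw [Finset.card_eq_sum_card_fiberwise hfst]
    rw [Finset.card_eq_sum_ones (Sfin E)]
    apply Finset.sum_le_sum
    intro t ht
    have ht' := ht
    rw [Sfin, Finset.mem_filter] at ht'
    obtain ⟨-, hd1, hd2, hd3, hd4, hd5, hd6, w, x, y, z, hc, hset⟩ := ht'
    have build : ∀ ρ : Fin n × Fin n × Fin n × Fin n, ρ ∈ Cfin E → ρ.1 = t.1 →
        setOf4 ρ = setOf4 t → 1 ≤ (P.filter (fun q => q.1 = t)).card := by
      intro ρ hC he hs
      apply Finset.card_pos.2
      refine ⟨(t, ρ), ?_⟩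
      rw [Finset.mem_filter]
      refine ⟨?_, rfl⟩
      rw [hP, Finset.mem_filter, Finset.mem_product]
      exact ⟨⟨ht, hC⟩, he, hs⟩
    have ht1 : t.1 ∈ ({w, x, y, z} : Finset (Fin n)) := by
      rw [hset]; simp [Finset.mem_insert]
    have hsetOf : setOf4 t = ({w, x, y, z} : Finset (Fin n)) := hset.symm
    simp only [Finset.mem_insert, Finset.mem_singleton] at ht1
    rcases ht1 with h | h | h | h
    · exact build (w, x, y, z) ((mem_Cfin E).2 hc) h.symm hsetOf.symm
    · refine build (x, y, z, w) ((mem_Cfin E).2 (cyc_rot E hc)) h.symm ?_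
      show ({x, y, z, w} : Finset (Fin n)) = setOf4 t
      rw [rot_set w x y z, hsetOf]
    · refine build (y, z, w, x) ((mem_Cfin E).2 (cyc_rot E (cyc_rot E hc))) h.symm ?_
      show ({y, z, w, x} : Finset (Fin n)) = setOf4 t
      rw [rot_set x y z w, rot_set w x y z, hsetOf]
    · refine build (z, w, x, y) ((mem_Cfin E).2 (cyc_rot E (cyc_rot E (cyc_rot E hc)))) h.symm ?_
      show ({z, w, x, y} : Finset (Fin n)) = setOf4 t
      rw [rot_set y z w x, rot_set x y z w, rot_set w x y z, hsetOf]
  have hup : P.card ≤ 6 * (Cfin E).card := by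
    rw [Finset.card_eq_sum_card_fiberwise hsnd]
    have hbound : ∀ ρ ∈ Cfin E, (P.filter (fun q => q.2 = ρ)).card ≤ 6 := by
      rintro ⟨r1, r2, r3, r4⟩ hρ
      have hcyc : IsCycle4 E r1 r2 r3 r4 := (mem_Cfin E).1 hρ
      obtain ⟨q12, q13, q14, q23, q24, q34, -, -, -, -⟩ := hcyc
      set R : Finset (Fin n) := {r2, r3, r4} with hR
      set T : Finset (Fin n × Fin n × Fin n) :=
        R.biUnion (fun a => (R.erase a).biUnion
          (fun b => (((R.erase a).erase b).image (fun c => (a, b, c))))) with hT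
      have hTcard : T.card ≤ 6 := by
        have hRcard : R.card ≤ 3 := card3 r2 r3 r4
        calc T.card ≤ ∑ a ∈ R, ((R.erase a).biUnion
              (fun b => (((R.erase a).erase b).image (fun c => (a, b, c))))).card :=
            Finset.card_biUnion_le
          _ ≤ ∑ _a ∈ R, 2 := by
              apply Finset.sum_le_sum
              intro a ha
              calc ((R.erase a).biUnion _).card
                  ≤ ∑ b ∈ R.erase a, (((R.erase a).erase b).image (fun c => (a, b, c))).card :=
                    Finset.card_biUnion_le
                _ ≤ ∑ b ∈ R.erase a, 1 := by
                    apply Finset.sum_le_sum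
                    intro b hb
                    calc (((R.erase a).erase b).image (fun c => (a, b, c))).card
                        ≤ ((R.erase a).erase b).card := Finset.card_image_le
                      _ ≤ 1 := by
                          rw [Finset.card_erase_of_mem hb, Finset.card_erase_of_mem ha]
                          omega
                _ = (R.erase a).card := by rw [Finset.sum_const, smul_eq_mul, mul_one]
                _ ≤ 2 := by rw [Finset.card_erase_of_mem ha]; omega
          _ = 2 * R.card := by rw [Finset.sum_const, smul_eq_mul, mul_comm]
          _ ≤ 6 := by omega
      have hmap : ∀ q ∈ P.filter (fun q => q.2 = (r1, r2, r3, r4)),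
          (q.1.2.1, q.1.2.2.1, q.1.2.2.2) ∈ T := by
        rintro ⟨⟨t1, t2, t3, t4⟩, ρ'⟩ hq
        rw [Finset.mem_filter] at hq
        obtain ⟨hqP, hq2⟩ := hq
        subst hq2
        rw [hP, Finset.mem_filter, Finset.mem_product] at hqP
        obtain ⟨⟨hqS, -⟩, hfe, hse⟩ := hqP
        have hfe' : r1 = t1 := hfe
        subst hfe'
        rw [Sfin, Finset.mem_filter] at hqS
        obtain ⟨-, hd1, hd2, hd3, hd4, hd5, hd6, -⟩ := hqS
        have hse' : ({r1, r2, r3, r4} : Finset (Fin n)) = {r1, t2, t3, t4} := hse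
        have hmem : ∀ s : Fin n, s ≠ r1 → s ∈ ({r1, t2, t3, t4} : Finset (Fin n)) → s ∈ R := by
          intro s hs hsmem
          rw [← hse'] at hsmem
          simp only [Finset.mem_insert, Finset.mem_singleton] at hsmem
          rw [hR]
          simp only [Finset.mem_insert, Finset.mem_singleton]
          tauto
        have m2 : t2 ∈ R := hmem t2 (Ne.symm hd1) (by simp)
        have m3 : t3 ∈ R := hmem t3 (Ne.symm hd2) (by simp)
        have m4 : t4 ∈ R := hmem t4 (Ne.symm hd3) (by simp)
        rw [hT]
        rw [Finset.mem_biUnion]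
        refine ⟨t2, m2, ?_⟩
        rw [Finset.mem_biUnion]
        refine ⟨t3, Finset.mem_erase.2 ⟨Ne.symm hd4, m3⟩, ?_⟩
        rw [Finset.mem_image]
        exact ⟨t4, Finset.mem_erase.2 ⟨Ne.symm hd6,
          Finset.mem_erase.2 ⟨Ne.symm hd5, m4⟩⟩, rfl⟩
      have hinj : Set.InjOn (fun q : (Fin n × Fin n × Fin n × Fin n) × (Fin n × Fin n × Fin n × Fin n) =>
          (q.1.2.1, q.1.2.2.1, q.1.2.2.2)) (P.filter (fun q => q.2 = (r1, r2, r3, r4))) := by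
        rintro ⟨⟨t1, t2, t3, t4⟩, ρ'⟩ hq ⟨⟨s1, s2, s3, s4⟩, ρ''⟩ hq' heq
        simp only [Finset.coe_filter, Set.mem_setOf_eq] at hq hq'
        obtain ⟨hqP, hq2⟩ := hq
        obtain ⟨hq'P, hq'2⟩ := hq'
        subst hq2; subst hq'2
        rw [hP, Finset.mem_filter, Finset.mem_product] at hqP hq'P
        have e1 : t1 = r1 := hqP.2.1.symm
        have e1' : s1 = r1 := hq'P.2.1.symm
        simp only [Prod.mk.injEq] at heq
        obtain ⟨f2, f3, f4⟩ := heq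
        subst e1; subst e1'; subst f2; subst f3; subst f4
        rfl
      calc (P.filter (fun q => q.2 = (r1, r2, r3, r4))).card ≤ T.card :=
          Finset.card_le_card_of_injOn _ hmap hinj
        _ ≤ 6 := hTcard
    calc ∑ ρ ∈ Cfin E, (P.filter (fun q => q.2 = ρ)).card ≤ ∑ _ρ ∈ Cfin E, 6 :=
        Finset.sum_le_sum hbound
      _ = 6 * (Cfin E).card := by rw [Finset.sum_const, smul_eq_mul, mul_comm]
  exact le_trans hlow hup

end SSdev

theorem nCount_ge (n : ℕ) (E : Fin n → Fin n → Prop) [DecidableRel E]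
    (h3 : ThreeFree E) :
    (2 : ℚ) / 3 * (sCount n E : ℚ) ≤ (nCount n E : ℚ) := by
  classical
  have hS : sCount n E = (SSdev.Sfin E).card := rfl
  have hN : nCount n E = (SSdev.Nfin E).card := rfl
  have h6 : (SSdev.Sfin E).card ≤ 6 * (SSdev.Cfin E).card := SSdev.Sfin_le E
  have hsum1 : ∑ ρ ∈ SSdev.Cfin E, (16 : ℚ)
      ≤ ∑ ρ ∈ SSdev.Cfin E, (SSdev.sig E ρ + SSdev.sig E (SSdev.rot ρ)
          + SSdev.sig E (SSdev.rot (SSdev.rot ρ))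
          + SSdev.sig E (SSdev.rot (SSdev.rot (SSdev.rot ρ)))) :=
    Finset.sum_le_sum (fun ρ hρ => SSdev.orbit_bound E h3 hρ)
  rw [Finset.sum_const, nsmul_eq_mul] at hsum1
  have e1 : ∑ ρ ∈ SSdev.Cfin E, SSdev.sig E (SSdev.rot ρ)
      = ∑ ρ ∈ SSdev.Cfin E, SSdev.sig E ρ :=
    SSdev.sum_rot E (fun ρ => SSdev.sig E ρ)
  have e2 : ∑ ρ ∈ SSdev.Cfin E, SSdev.sig E (SSdev.rot (SSdev.rot ρ))
      = ∑ ρ ∈ SSdev.Cfin E, SSdev.sig E (SSdev.rot ρ) :=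
    SSdev.sum_rot E (fun ρ => SSdev.sig E (SSdev.rot ρ))
  have e3 : ∑ ρ ∈ SSdev.Cfin E, SSdev.sig E (SSdev.rot (SSdev.rot (SSdev.rot ρ)))
      = ∑ ρ ∈ SSdev.Cfin E, SSdev.sig E (SSdev.rot (SSdev.rot ρ)) :=
    SSdev.sum_rot E (fun ρ => SSdev.sig E (SSdev.rot (SSdev.rot ρ)))
  rw [Finset.sum_add_distrib, Finset.sum_add_distrib, Finset.sum_add_distrib, e1, e2, e1, e3, e2, e1]
    at hsum1
  have hsig := SSdev.sigma_le E h3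
  have h6' : ((SSdev.Sfin E).card : ℚ) ≤ 6 * ((SSdev.Cfin E).card : ℚ) := by exact_mod_cast h6
  rw [hS, hN]
  linarith
end

section
/- If G is a 3-free digraph on n vertices, then 24·P_4(G) = n^4 + 3S − |N|, where P_4(G) is the number of directed 4-vertex paths, S is the number of ordered 4-tuples of distinct vertices forming a directed 4-cycle in order (so S is 24 times the number of 4-cycles), and N is the set of ordered 4-tuples of vertices whose vertex set carries no directed 4-vertex path. -/
set_option maxHeartbeats 2000000

open Finset

section Aux

variable {V : Type*} [DecidableEq V]

lemma path_struct (E : V → V → Prop) (h3 : ThreeFree E)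
    (a b c d : V) (hp : IsPath4 E a b c d) (w x y z : V) (hq : IsPath4 E w x y z)
    (hset : ({w, x, y, z} : Finset V) = {a, b, c, d}) :
    (w = a ∧ x = b ∧ y = c ∧ z = d) ∨
      (E d a ∧ ((w = b ∧ x = c ∧ y = d ∧ z = a) ∨ (w = c ∧ x = d ∧ y = a ∧ z = b) ∨
        (w = d ∧ x = a ∧ y = b ∧ z = c))) := by
  obtain ⟨hab, hac, had, hbc, hbd, hcd, eab, ebc, ecd⟩ := hp
  obtain ⟨hwx, hwy, hwz, hxy, hxz, hyz, ewx, exy, eyz⟩ := hq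
  obtain ⟨irr, no2, no3⟩ := h3
  have n1 : ¬ E b a := fun h => no2 a b ⟨eab, h⟩
  have n2 : ¬ E c b := fun h => no2 b c ⟨ebc, h⟩
  have n3 : ¬ E d c := fun h => no2 c d ⟨ecd, h⟩
  have n4 : ¬ E c a := fun h => no3 a b c ⟨eab, ebc, h⟩
  have n5 : ¬ E d b := fun h => no3 b c d ⟨ebc, ecd, h⟩
  have n6 : ¬ (E a d ∧ E d a) := fun h => no2 a d h
  have n8 : ¬ (E a c ∧ E d a) := fun h => no3 a c d ⟨h.1, ecd, h.2⟩
  have n9 : ¬ (E b d ∧ E d a) := fun h => no3 a b d ⟨eab, h.1, h.2⟩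
  have hw : w = a ∨ w = b ∨ w = c ∨ w = d := by
    have : w ∈ ({a, b, c, d} : Finset V) := hset ▸ (by simp)
    simpa using this
  have hx : x = a ∨ x = b ∨ x = c ∨ x = d := by
    have : x ∈ ({a, b, c, d} : Finset V) := hset ▸ (by simp)
    simpa using this
  have hy : y = a ∨ y = b ∨ y = c ∨ y = d := by
    have : y ∈ ({a, b, c, d} : Finset V) := hset ▸ (by simp)
    simpa using this
  have hz : z = a ∨ z = b ∨ z = c ∨ z = d := by
    have : z ∈ ({a, b, c, d} : Finset V) := hset ▸ (by simp)
    simpa using this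
  rcases hw with rfl | rfl | rfl | rfl <;> rcases hx with rfl | rfl | rfl | rfl <;>
    rcases hy with rfl | rfl | rfl | rfl <;> rcases hz with rfl | rfl | rfl | rfl <;> simp_all

lemma card_le3 (x y z : V) : ({x, y, z} : Finset V).card ≤ 3 := by
  have h1 := Finset.card_insert_le x ({y, z} : Finset V)
  have h2 := Finset.card_insert_le y ({z} : Finset V)
  simp only [Finset.card_singleton] at h1 h2
  omega

lemma card4 {a b c d : V} (hab : a ≠ b) (hac : a ≠ c) (had : a ≠ d) (hbc : b ≠ c)
    (hbd : b ≠ d) (hcd : c ≠ d) : ({a, b, c, d} : Finset V).card = 4 := by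
  rw [Finset.card_insert_of_notMem (by simp [hab, hac, had]),
    Finset.card_insert_of_notMem (by simp [hbc, hbd]),
    Finset.card_insert_of_notMem (by simp [hcd]), Finset.card_singleton]

lemma distinct_of_vset {p1 p2 p3 p4 a b c d : V} (hab : a ≠ b) (hac : a ≠ c) (had : a ≠ d)
    (hbc : b ≠ c) (hbd : b ≠ d) (hcd : c ≠ d)
    (h : ({p1, p2, p3, p4} : Finset V) = {a, b, c, d}) :
    p1 ≠ p2 ∧ p1 ≠ p3 ∧ p1 ≠ p4 ∧ p2 ≠ p3 ∧ p2 ≠ p4 ∧ p3 ≠ p4 := by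
  have hc : ({p1, p2, p3, p4} : Finset V).card = 4 := by
    rw [h]; exact card4 hab hac had hbc hbd hcd
  refine ⟨?_, ?_, ?_, ?_, ?_, ?_⟩ <;> intro he <;> subst he
  · have h1 : ({p1, p1, p3, p4} : Finset V) ⊆ {p1, p3, p4} := by
      intro t ht; simp at ht ⊢; tauto
    have := (Finset.card_le_card h1).trans (card_le3 p1 p3 p4); omega
  · have h1 : ({p1, p2, p1, p4} : Finset V) ⊆ {p1, p2, p4} := by
      intro t ht; simp at ht ⊢; tauto
    have := (Finset.card_le_card h1).trans (card_le3 p1 p2 p4); omega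
  · have h1 : ({p1, p2, p3, p1} : Finset V) ⊆ {p1, p2, p3} := by
      intro t ht; simp at ht ⊢; tauto
    have := (Finset.card_le_card h1).trans (card_le3 p1 p2 p3); omega
  · have h1 : ({p1, p2, p2, p4} : Finset V) ⊆ {p1, p2, p4} := by
      intro t ht; simp at ht ⊢; tauto
    have := (Finset.card_le_card h1).trans (card_le3 p1 p2 p4); omega
  · have h1 : ({p1, p2, p3, p2} : Finset V) ⊆ {p1, p2, p3} := by
      intro t ht; simp at ht ⊢; tauto
    have := (Finset.card_le_card h1).trans (card_le3 p1 p2 p3); omega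
  · have h1 : ({p1, p2, p3, p3} : Finset V) ⊆ {p1, p2, p3} := by
      intro t ht; simp at ht ⊢; tauto
    have := (Finset.card_le_card h1).trans (card_le3 p1 p2 p3); omega

lemma card_perm4 [Fintype V] (a b c d : V)
    (hab : a ≠ b) (hac : a ≠ c) (had : a ≠ d) (hbc : b ≠ c) (hbd : b ≠ d) (hcd : c ≠ d) :
    ((Finset.univ : Finset (V × V × V × V)).filter
      (fun p => ({p.1, p.2.1, p.2.2.1, p.2.2.2} : Finset V) = {a, b, c, d})).card = 24 := by
  set f : Fin 4 → V := fun i => if i = 0 then a else if i = 1 then b else if i = 2 then c else d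
    with hf
  set g : V → Fin 4 := fun v => if v = a then 0 else if v = b then 1 else if v = c then 2 else 3
    with hg
  have hfg : ∀ v, v = a ∨ v = b ∨ v = c ∨ v = d → f (g v) = v := by
    rintro v (rfl | rfl | rfl | rfl) <;> simp [hf, hg, hab, hac, had, hbc, hbd, hcd,
      hab.symm, hac.symm, had.symm, hbc.symm, hbd.symm, hcd.symm]
  have hgf : ∀ i : Fin 4, g (f i) = i := by
    intro i; fin_cases i <;> simp [hf, hg, hab, hac, had, hbc, hbd, hcd,
      hab.symm, hac.symm, had.symm, hbc.symm, hbd.symm, hcd.symm]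
  have key : ((Finset.univ : Finset (Fin 4 × Fin 4 × Fin 4 × Fin 4)).filter
      (fun r => ({r.1, r.2.1, r.2.2.1, r.2.2.2} : Finset (Fin 4)) = Finset.univ)).card = 24 := by
    decide
  rw [← key]
  apply Finset.card_nbij' (i := fun p => (g p.1, g p.2.1, g p.2.2.1, g p.2.2.2))
    (j := fun r => (f r.1, f r.2.1, f r.2.2.1, f r.2.2.2))
  · rintro ⟨p1, p2, p3, p4⟩ hp
    simp only [mem_coe, mem_filter, mem_univ, true_and] at hp ⊢
    have himg : ({g p1, g p2, g p3, g p4} : Finset (Fin 4)) =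
        ({p1, p2, p3, p4} : Finset V).image g := by
      simp [Finset.image_insert]
    rw [himg, hp]
    have h2 : ({a, b, c, d} : Finset V).image g = {g a, g b, g c, g d} := by
      simp [Finset.image_insert]
    rw [h2]
    have ga : g a = 0 := by simp [hg]
    have gb : g b = 1 := by simp [hg, hab.symm]
    have gc : g c = 2 := by simp [hg, hac.symm, hbc.symm]
    have gd : g d = 3 := by simp [hg, had.symm, hbd.symm, hcd.symm]
    rw [ga, gb, gc, gd]; decide
  · rintro ⟨r1, r2, r3, r4⟩ hr
    simp only [mem_coe, mem_filter, mem_univ, true_and] at hr ⊢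
    have himgf : ({f r1, f r2, f r3, f r4} : Finset V) =
        ({r1, r2, r3, r4} : Finset (Fin 4)).image f := by
      simp [Finset.image_insert]
    rw [himgf, hr]
    have h1 : (Finset.univ : Finset (Fin 4)) = {0, 1, 2, 3} := by decide
    rw [h1]
    have h2 : ({0, 1, 2, 3} : Finset (Fin 4)).image f = {f 0, f 1, f 2, f 3} := by
      simp [Finset.image_insert]
    rw [h2]
    simp [hf]
  · rintro ⟨p1, p2, p3, p4⟩ hp
    simp only [mem_coe, mem_filter, mem_univ, true_and] at hp
    have hmem : ∀ v : V, v ∈ ({p1, p2, p3, p4} : Finset V) →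
        v = a ∨ v = b ∨ v = c ∨ v = d := by
      intro v hv; rw [hp] at hv; simpa using hv
    simp only [Prod.mk.injEq]
    exact ⟨hfg p1 (hmem p1 (by simp)), hfg p2 (hmem p2 (by simp)),
      hfg p3 (hmem p3 (by simp)), hfg p4 (hmem p4 (by simp))⟩
  · rintro ⟨r1, r2, r3, r4⟩ hr
    simp only [Prod.mk.injEq]
    exact ⟨hgf r1, hgf r2, hgf r3, hgf r4⟩

def SPred {V : Type*} [DecidableEq V] (E : V → V → Prop) (p : V × V × V × V) : Prop :=
  p.1 ≠ p.2.1 ∧ p.1 ≠ p.2.2.1 ∧ p.1 ≠ p.2.2.2 ∧ p.2.1 ≠ p.2.2.1 ∧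
    p.2.1 ≠ p.2.2.2 ∧ p.2.2.1 ≠ p.2.2.2 ∧
    ∃ w x y z : V, IsCycle4 E w x y z ∧
      ({w, x, y, z} : Finset V) = {p.1, p.2.1, p.2.2.1, p.2.2.2}

def HPred {V : Type*} [DecidableEq V] (E : V → V → Prop) (p : V × V × V × V) : Prop :=
  ∃ w x y z : V, IsPath4 E w x y z ∧
    ({w, x, y, z} : Finset V) = {p.1, p.2.1, p.2.2.1, p.2.2.2}

instance {V : Type*} [DecidableEq V] [Fintype V] (E : V → V → Prop) [DecidableRel E]
    (p : V × V × V × V) : Decidable (SPred E p) := by unfold SPred; infer_instance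

instance {V : Type*} [DecidableEq V] [Fintype V] (E : V → V → Prop) [DecidableRel E]
    (p : V × V × V × V) : Decidable (HPred E p) := by unfold HPred; infer_instance

lemma sPred_imp_hPred {V : Type*} [DecidableEq V] (E : V → V → Prop) (p : V × V × V × V)
    (h : SPred E p) : HPred E p := by
  obtain ⟨-, -, -, -, -, -, w, x, y, z, hc, hs⟩ := h
  obtain ⟨a1, a2, a3, a4, a5, a6, b1, b2, b3, -⟩ := hc
  exact ⟨w, x, y, z, ⟨a1, a2, a3, a4, a5, a6, b1, b2, b3⟩, hs⟩

lemma fiber_eq {V : Type*} [DecidableEq V] [Fintype V] (E : V → V → Prop) [DecidableRel E]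
    (h3 : ThreeFree E) (p : V × V × V × V) :
    ((Finset.univ : Finset (V × V × V × V)).filter
      (fun q => IsPath4 E q.1 q.2.1 q.2.2.1 q.2.2.2 ∧
        ({q.1, q.2.1, q.2.2.1, q.2.2.2} : Finset V) = {p.1, p.2.1, p.2.2.1, p.2.2.2})).card =
    if SPred E p then 4 else if HPred E p then 1 else 0 := by
  obtain ⟨p1, p2, p3, p4⟩ := p
  by_cases hS : SPred E (p1, p2, p3, p4)
  · rw [if_pos hS]
    obtain ⟨-, -, -, -, -, -, a, b, c, d, hcyc, hset⟩ := hS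
    obtain ⟨nab, nac, nad, nbc, nbd, ncd, e1, e2, e3, e4⟩ := hcyc
    have hpath : IsPath4 E a b c d := ⟨nab, nac, nad, nbc, nbd, ncd, e1, e2, e3⟩
    have hrot1 : ({b, c, d, a} : Finset V) = {a, b, c, d} := by ext t; simp; tauto
    have hrot2 : ({c, d, a, b} : Finset V) = {a, b, c, d} := by ext t; simp; tauto
    have hrot3 : ({d, a, b, c} : Finset V) = {a, b, c, d} := by ext t; simp; tauto
    have hfil : ((Finset.univ : Finset (V × V × V × V)).filter
        (fun q => IsPath4 E q.1 q.2.1 q.2.2.1 q.2.2.2 ∧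
          ({q.1, q.2.1, q.2.2.1, q.2.2.2} : Finset V) = {p1, p2, p3, p4})) =
        {(a, b, c, d), (b, c, d, a), (c, d, a, b), (d, a, b, c)} := by
      ext q
      obtain ⟨q1, q2, q3, q4⟩ := q
      simp only [mem_filter, mem_univ, true_and, mem_insert, mem_singleton, Prod.mk.injEq]
      constructor
      · rintro ⟨hq, hqs⟩
        have := path_struct E h3 a b c d hpath q1 q2 q3 q4 hq (hqs.trans hset.symm)
        tauto
      · rintro (⟨rfl, rfl, rfl, rfl⟩ | ⟨rfl, rfl, rfl, rfl⟩ | ⟨rfl, rfl, rfl, rfl⟩ |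
          ⟨rfl, rfl, rfl, rfl⟩)
        · exact ⟨hpath, hset⟩
        · exact ⟨⟨nbc, nbd, Ne.symm nab, ncd, Ne.symm nac, Ne.symm nad, e2, e3, e4⟩,
            hrot1.trans hset⟩
        · exact ⟨⟨ncd, Ne.symm nac, Ne.symm nbc, Ne.symm nad, Ne.symm nbd, nab, e3, e4, e1⟩,
            hrot2.trans hset⟩
        · exact ⟨⟨Ne.symm nad, Ne.symm nbd, Ne.symm ncd, nab, nac, nbc, e4, e1, e2⟩,
            hrot3.trans hset⟩
    rw [hfil]
    rw [Finset.card_insert_of_notMem (by simp [Prod.ext_iff, nab, nac, nad]),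
      Finset.card_insert_of_notMem (by simp [Prod.ext_iff, nbc, nbd]),
      Finset.card_insert_of_notMem (by simp [Prod.ext_iff, ncd]),
      Finset.card_singleton]
  · rw [if_neg hS]
    by_cases hH : HPred E (p1, p2, p3, p4)
    · rw [if_pos hH]
      obtain ⟨a, b, c, d, hpath, hset⟩ := hH
      obtain ⟨nab, nac, nad, nbc, nbd, ncd, e1, e2, e3⟩ := hpath
      have hpath : IsPath4 E a b c d := ⟨nab, nac, nad, nbc, nbd, ncd, e1, e2, e3⟩
      obtain ⟨d1, d2, d3, d4, d5, d6⟩ := distinct_of_vset nab nac nad nbc nbd ncd hset.symm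
      have hnda : ¬ E d a := fun e4 =>
        hS ⟨d1, d2, d3, d4, d5, d6, a, b, c, d,
          ⟨nab, nac, nad, nbc, nbd, ncd, e1, e2, e3, e4⟩, hset⟩
      have hfil : ((Finset.univ : Finset (V × V × V × V)).filter
          (fun q => IsPath4 E q.1 q.2.1 q.2.2.1 q.2.2.2 ∧
            ({q.1, q.2.1, q.2.2.1, q.2.2.2} : Finset V) = {p1, p2, p3, p4})) =
          {(a, b, c, d)} := by
        ext q
        obtain ⟨q1, q2, q3, q4⟩ := q
        simp only [mem_filter, mem_univ, true_and, mem_singleton, Prod.mk.injEq]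
        constructor
        · rintro ⟨hq, hqs⟩
          have := path_struct E h3 a b c d hpath q1 q2 q3 q4 hq (hqs.trans hset.symm)
          tauto
        · rintro ⟨rfl, rfl, rfl, rfl⟩
          exact ⟨hpath, hset⟩
      rw [hfil, Finset.card_singleton]
    · rw [if_neg hH, Finset.card_eq_zero, Finset.filter_eq_empty_iff]
      rintro ⟨q1, q2, q3, q4⟩ -
      rintro ⟨hq, hqs⟩
      exact hH ⟨q1, q2, q3, q4, hq, hqs⟩

end Aux

theorem p4_identity (n : ℕ) (E : Fin n → Fin n → Prop) [DecidableRel E]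
    (h3 : ThreeFree E) :
    (24 * p4Count n E : ℤ) = (n : ℤ) ^ 4 + 3 * (sCount n E : ℤ) - (nCount n E : ℤ) := by
  classical
  have step1 : 24 * p4Count n E =
      ∑ q : Fin n × Fin n × Fin n × Fin n,
        if IsPath4 E q.1 q.2.1 q.2.2.1 q.2.2.2 then 24 else 0 := by
    rw [p4Count, Finset.card_filter, Finset.mul_sum]
    exact Finset.sum_congr rfl fun q _ => by split <;> simp
  have step2 : ∀ q : Fin n × Fin n × Fin n × Fin n,
      (if IsPath4 E q.1 q.2.1 q.2.2.1 q.2.2.2 then 24 else 0) =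
      ∑ p : Fin n × Fin n × Fin n × Fin n,
        if IsPath4 E q.1 q.2.1 q.2.2.1 q.2.2.2 ∧
          ({q.1, q.2.1, q.2.2.1, q.2.2.2} : Finset (Fin n)) = {p.1, p.2.1, p.2.2.1, p.2.2.2}
        then 1 else 0 := by
    intro q
    by_cases hq : IsPath4 E q.1 q.2.1 q.2.2.1 q.2.2.2
    · rw [if_pos hq, ← Finset.card_filter]
      obtain ⟨d1, d2, d3, d4, d5, d6, -, -, -⟩ := id hq
      rw [show ((Finset.univ : Finset (Fin n × Fin n × Fin n × Fin n))).filter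
          (fun p => IsPath4 E q.1 q.2.1 q.2.2.1 q.2.2.2 ∧
            ({q.1, q.2.1, q.2.2.1, q.2.2.2} : Finset (Fin n)) =
              {p.1, p.2.1, p.2.2.1, p.2.2.2}) =
          ((Finset.univ : Finset (Fin n × Fin n × Fin n × Fin n))).filter
          (fun p => ({p.1, p.2.1, p.2.2.1, p.2.2.2} : Finset (Fin n)) =
            {q.1, q.2.1, q.2.2.1, q.2.2.2}) from
        Finset.filter_congr fun p _ => ⟨fun h => h.2.symm, fun h => ⟨hq, h.symm⟩⟩]
      exact (card_perm4 q.1 q.2.1 q.2.2.1 q.2.2.2 d1 d2 d3 d4 d5 d6).symm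
    · rw [if_neg hq]
      symm
      apply Finset.sum_eq_zero
      intro p _
      rw [if_neg]
      tauto
  have step3 : ∀ p : Fin n × Fin n × Fin n × Fin n,
      (∑ q : Fin n × Fin n × Fin n × Fin n,
        if IsPath4 E q.1 q.2.1 q.2.2.1 q.2.2.2 ∧
          ({q.1, q.2.1, q.2.2.1, q.2.2.2} : Finset (Fin n)) = {p.1, p.2.1, p.2.2.1, p.2.2.2}
        then 1 else 0) = if SPred E p then 4 else if HPred E p then 1 else 0 := by
    intro p
    rw [← Finset.card_filter]
    exact fiber_eq E h3 p
  have hmain : 24 * p4Count n E = ∑ p : Fin n × Fin n × Fin n × Fin n,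
      if SPred E p then 4 else if HPred E p then 1 else 0 := by
    rw [step1]
    rw [Finset.sum_congr rfl fun q _ => step2 q]
    rw [Finset.sum_comm]
    exact Finset.sum_congr rfl fun p _ => step3 p
  have hsplit : ∀ p : Fin n × Fin n × Fin n × Fin n,
      (if SPred E p then 4 else if HPred E p then 1 else 0) =
      (if SPred E p then 4 else 0) + (if HPred E p ∧ ¬ SPred E p then 1 else 0) := by
    intro p
    by_cases h1 : SPred E p <;> by_cases h2 : HPred E p <;> simp [h1, h2]
  have hsum : 24 * p4Count n E =
      4 * ((Finset.univ : Finset (Fin n × Fin n × Fin n × Fin n)).filter (SPred E)).card +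
      ((Finset.univ : Finset (Fin n × Fin n × Fin n × Fin n)).filter
        (fun p => HPred E p ∧ ¬ SPred E p)).card := by
    rw [hmain, Finset.sum_congr rfl fun p _ => hsplit p, Finset.sum_add_distrib]
    congr 1
    · rw [Finset.card_filter, Finset.mul_sum]
      exact Finset.sum_congr rfl fun p _ => by split <;> simp
    · rw [Finset.card_filter]
  have hpart : ((Finset.univ : Finset (Fin n × Fin n × Fin n × Fin n)).filter (SPred E)).card +
      ((Finset.univ : Finset (Fin n × Fin n × Fin n × Fin n)).filter
        (fun p => HPred E p ∧ ¬ SPred E p)).card +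
      ((Finset.univ : Finset (Fin n × Fin n × Fin n × Fin n)).filter
        (fun p => ¬ HPred E p)).card = n ^ 4 := by
    have h1 := Finset.card_filter_add_card_filter_not
      (s := (Finset.univ : Finset (Fin n × Fin n × Fin n × Fin n))) (HPred E)
    have h2 := Finset.card_filter_add_card_filter_not
      (s := (Finset.univ : Finset (Fin n × Fin n × Fin n × Fin n)).filter (HPred E)) (SPred E)
    have h3 : ((Finset.univ : Finset (Fin n × Fin n × Fin n × Fin n)).filter
        (HPred E)).filter (SPred E) =
        (Finset.univ : Finset (Fin n × Fin n × Fin n × Fin n)).filter (SPred E) := by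
      rw [Finset.filter_filter]
      exact Finset.filter_congr fun p _ =>
        ⟨fun h => h.2, fun h => ⟨sPred_imp_hPred E p h, h⟩⟩
    have h4 : ((Finset.univ : Finset (Fin n × Fin n × Fin n × Fin n)).filter
        (HPred E)).filter (fun p => ¬ SPred E p) =
        (Finset.univ : Finset (Fin n × Fin n × Fin n × Fin n)).filter
          (fun p => HPred E p ∧ ¬ SPred E p) := by
      rw [Finset.filter_filter]
    have h5 : ((Finset.univ : Finset (Fin n × Fin n × Fin n × Fin n))).card = n ^ 4 := by
      simp [Finset.card_univ]
      ring
    rw [h3, h4] at h2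
    omega
  have hS : ((Finset.univ : Finset (Fin n × Fin n × Fin n × Fin n)).filter (SPred E)).card =
      sCount n E := by
    apply congrArg Finset.card
    exact Finset.filter_congr fun p _ => Iff.rfl
  have hN : ((Finset.univ : Finset (Fin n × Fin n × Fin n × Fin n)).filter
      (fun p => ¬ HPred E p)).card = nCount n E := by
    apply congrArg Finset.card
    exact Finset.filter_congr fun p _ => Iff.rfl
  have hn4 : ((n : ℤ)) ^ 4 = ((n ^ 4 : ℕ) : ℤ) := by push_cast; ring
  rw [hn4]
  omega
end

section
/- If G is a 3-free digraph on n vertices in which every vertex has out-degree at least d, then the number of directed 4-vertex walks (equivalently, directed 4-vertex paths, since G is 3-free) is at least d^3·n; consequently, by the bound P_4(G) ≤ (4/75)n^4, some vertex of G has out-degree at most (4/75)^{1/3}·n. -/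
set_option linter.unusedSectionVars false
set_option maxHeartbeats 1000000


/-- Out-degree of a vertex. -/
def outdeg (n : ℕ) (E : Fin n → Fin n → Prop) [DecidableRel E] (v : Fin n) : ℕ :=
  (Finset.univ.filter fun w => E v w).card


section Core
variable {n : ℕ} {E : Fin n → Fin n → Prop}

lemma mem4 {a b c d t : Fin n} :
    t ∈ ({a, b, c, d} : Finset (Fin n)) ↔ t = a ∨ t = b ∨ t = c ∨ t = d := by
  simp [Finset.mem_insert]

/-- If two 4-paths have the same vertex set, they are equal or the set carries a 4-cycle. -/
lemma K1 (h3 : ThreeFree E) {a b c d q1 q2 q3 q4 : Fin n}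
    (hP : IsPath4 E a b c d) (hQ : IsPath4 E q1 q2 q3 q4)
    (hset : ({a, b, c, d} : Finset (Fin n)) = {q1, q2, q3, q4}) :
    (q1 = a ∧ q2 = b ∧ q3 = c ∧ q4 = d) ∨ IsCycle4 E a b c d := by
  obtain ⟨hirr, hdig, htri⟩ := h3
  obtain ⟨hab, hac, had, hbc, hbd, hcd, Eab, Ebc, Ecd⟩ := hP
  obtain ⟨q12, q13, q14, q23, q24, q34, Eq12, Eq23, Eq34⟩ := hQ
  by_cases hda : E d a
  · exact Or.inr ⟨hab, hac, had, hbc, hbd, hcd, Eab, Ebc, Ecd, hda⟩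
  left
  -- memberships
  have hmem : ∀ t : Fin n, t ∈ ({q1, q2, q3, q4} : Finset (Fin n)) →
      t = a ∨ t = b ∨ t = c ∨ t = d := by
    intro t ht; rw [← hset] at ht; exact mem4.mp ht
  have hmem' : ∀ t : Fin n, t ∈ ({a, b, c, d} : Finset (Fin n)) →
      t = q1 ∨ t = q2 ∨ t = q3 ∨ t = q4 := by
    intro t ht; rw [hset] at ht; exact mem4.mp ht
  have hq1 := hmem q1 (by simp)
  have hq2 := hmem q2 (by simp)
  have hq3 := hmem q3 (by simp)
  have hq4 := hmem q4 (by simp)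
  have hda' := hmem' d (by simp)
  have hc' := hmem' c (by simp)
  have hb' := hmem' b (by simp)
  have ha' := hmem' a (by simp)
  -- successor facts
  have succD : ∀ t : Fin n, (t = a ∨ t = b ∨ t = c ∨ t = d) → E d t → False := by
    rintro t (rfl | rfl | rfl | rfl) het
    · exact hda het
    · exact htri _ _ _ ⟨Ebc, Ecd, het⟩
    · exact hdig _ _ ⟨Ecd, het⟩
    · exact hirr _ het
  have succC : ∀ t : Fin n, (t = a ∨ t = b ∨ t = c ∨ t = d) → E c t → t = d := by
    rintro t (rfl | rfl | rfl | rfl) het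
    · exact absurd ⟨Eab, Ebc, het⟩ (htri _ _ _)
    · exact absurd ⟨Ebc, het⟩ (hdig _ _)
    · exact absurd het (hirr _)
    · rfl
  have succB : ∀ t : Fin n, (t = a ∨ t = b ∨ t = c ∨ t = d) → E b t → t = c ∨ t = d := by
    rintro t (rfl | rfl | rfl | rfl) het
    · exact absurd ⟨Eab, het⟩ (hdig _ _)
    · exact absurd het (hirr _)
    · exact Or.inl rfl
    · exact Or.inr rfl
  -- d = q4
  have hd4 : d = q4 := by
    rcases hda' with h | h | h | h
    · exact absurd Eq12 (fun he => succD q2 hq2 (h ▸ he))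
    · exact absurd Eq23 (fun he => succD q3 hq3 (h ▸ he))
    · exact absurd Eq34 (fun he => succD q4 hq4 (h ▸ he))
    · exact h
  -- c = q3
  have hc3 : c = q3 := by
    rcases hc' with h | h | h | h
    · exfalso
      have : q2 = d := succC q2 hq2 (h ▸ Eq12)
      rw [this, hd4] at q24; exact q24 rfl
    · exfalso
      have : q3 = d := succC q3 hq3 (h ▸ Eq23)
      rw [this, hd4] at q34; exact q34 rfl
    · exact h
    · exact absurd (h.trans hd4.symm) hcd
  -- b = q2
  have hb2 : b = q2 := by
    rcases hb' with h | h | h | h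
    · exfalso
      rcases succB q2 hq2 (h ▸ Eq12) with h2 | h2
      · exact q23 (h2.trans hc3)
      · exact q24 (h2.trans hd4)
    · exact h
    · exact absurd (h.trans hc3.symm) hbc
    · exact absurd (h.trans hd4.symm) hbd
  -- a = q1
  have ha1 : a = q1 := by
    rcases ha' with h | h | h | h
    · exact h
    · exact absurd (h.trans hb2.symm) hab
    · exact absurd (h.trans hc3.symm) hac
    · exact absurd (h.trans hd4.symm) had
  exact ⟨ha1.symm, hb2.symm, hc3.symm, hd4.symm⟩

/-- In a 3-free digraph, a path with the same vertex set as a 4-cycle and the same start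
coincides with the cycle. -/
lemma K2 (h3 : ThreeFree E) {a b c d q1 q2 q3 q4 : Fin n}
    (hC : IsCycle4 E a b c d) (hQ : IsPath4 E q1 q2 q3 q4)
    (hset : ({a, b, c, d} : Finset (Fin n)) = {q1, q2, q3, q4})
    (h1 : q1 = a) : q1 = a ∧ q2 = b ∧ q3 = c ∧ q4 = d := by
  obtain ⟨hirr, hdig, htri⟩ := h3
  obtain ⟨hab, hac, had, hbc, hbd, hcd, Eab, Ebc, Ecd, Eda⟩ := hC
  obtain ⟨q12, q13, q14, q23, q24, q34, Eq12, Eq23, Eq34⟩ := hQ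
  have hmem : ∀ t : Fin n, t ∈ ({q1, q2, q3, q4} : Finset (Fin n)) →
      t = a ∨ t = b ∨ t = c ∨ t = d := by
    intro t ht; rw [← hset] at ht; exact mem4.mp ht
  have hq2 := hmem q2 (by simp)
  have hq3 := hmem q3 (by simp)
  have hq4 := hmem q4 (by simp)
  -- forbidden chords etc.
  have hEac : ¬ E a c := fun h => htri _ _ _ ⟨h, Ecd, Eda⟩
  have hEad : ¬ E a d := fun h => hdig _ _ ⟨h, Eda⟩
  have hEbd : ¬ E b d := fun h => htri _ _ _ ⟨h, Eda, Eab⟩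
  have h2 : q2 = b := by
    rcases hq2 with h | h | h | h
    · exact absurd (h1.trans h.symm)  q12
    · exact h
    · exact absurd (h ▸ h1 ▸ Eq12) hEac
    · exact absurd (h ▸ h1 ▸ Eq12) hEad
  have h3' : q3 = c := by
    rcases hq3 with h | h | h | h
    · exact absurd (h1.trans h.symm)  q13
    · exact absurd (h2.trans h.symm)  q23
    · exact h
    · exact absurd (h ▸ h2 ▸ Eq23) hEbd
  have h4 : q4 = d := by
    rcases hq4 with h | h | h | h
    · exact absurd (h1.trans h.symm)  q14
    · exact absurd (h2.trans h.symm)  q24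
    · exact absurd (h3'.trans h.symm)  q34
    · exact h
  exact ⟨h1, h2, h3', h4⟩

end Core


section Fiber
variable {n : ℕ} {E : Fin n → Fin n → Prop} [DecidableRel E]

/-- the vertex set of a 4-tuple -/
def vset (p : Fin n × Fin n × Fin n × Fin n) : Finset (Fin n) :=
  {p.1, p.2.1, p.2.2.1, p.2.2.2}

def CycSet (E : Fin n → Fin n → Prop) [DecidableRel E] (T : Finset (Fin n)) : Prop :=
  ∃ w x y z : Fin n, IsCycle4 E w x y z ∧ ({w, x, y, z} : Finset (Fin n)) = T

instance (T : Finset (Fin n)) : Decidable (CycSet E T) := by unfold CycSet; infer_instance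

lemma vset_card {p : Fin n × Fin n × Fin n × Fin n}
    (hp : IsPath4 E p.1 p.2.1 p.2.2.1 p.2.2.2) : (vset p).card = 4 := by
  obtain ⟨h1, h2, h3, h4, h5, h6, _, _, _⟩ := hp
  rw [vset, Finset.card_insert_of_notMem (by simp [h1, h2, h3]),
    Finset.card_insert_of_notMem (by simp [h4, h5]),
    Finset.card_insert_of_notMem (by simp [h6]), Finset.card_singleton]

lemma fiber_card_le (h3 : ThreeFree E) (T : Finset (Fin n)) (hT : T.card = 4) :
    (((Finset.univ : Finset (Fin n × Fin n × Fin n × Fin n)).filter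
      (fun p => IsPath4 E p.1 p.2.1 p.2.2.1 p.2.2.2)).filter (fun p => vset p = T)).card
      ≤ if CycSet E T then 4 else 1 := by
  classical
  set S := (((Finset.univ : Finset (Fin n × Fin n × Fin n × Fin n))).filter
      (fun p => IsPath4 E p.1 p.2.1 p.2.2.1 p.2.2.2)).filter (fun p => vset p = T) with hS
  have hSmem : ∀ p ∈ S, IsPath4 E p.1 p.2.1 p.2.2.1 p.2.2.2 ∧ vset p = T := by
    intro p hp
    simp only [hS, Finset.mem_filter, Finset.mem_univ, true_and] at hp
    exact hp
  by_cases hcyc : CycSet E T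
  · rw [if_pos hcyc]
    rw [← hT]
    apply Finset.card_le_card_of_injOn (fun p => p.1)
    · intro p hp
      have := (hSmem p hp).2
      rw [← this]
      simp [vset]
    · intro p hp p' hp' hfst
      obtain ⟨hPp, hTp⟩ := hSmem p hp
      obtain ⟨hPp', hTp'⟩ := hSmem p' hp'
      by_contra hne
      have hset : ({p.1, p.2.1, p.2.2.1, p.2.2.2} : Finset (Fin n))
          = {p'.1, p'.2.1, p'.2.2.1, p'.2.2.2} := by
        have := hTp.trans hTp'.symm
        simpa [vset] using this
      rcases K1 h3 hPp hPp' hset with ⟨e1, e2, e3, e4⟩ | hcy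
      · apply hne
        obtain ⟨a1, a2, a3, a4⟩ := p
        obtain ⟨b1, b2, b3, b4⟩ := p'
        simp only at e1 e2 e3 e4
        simp [e1, e2, e3, e4]
      · -- cycle on p's labels; p' starts at same vertex, so p' = p
        have := K2 h3 hcy hPp' hset hfst.symm
        apply hne
        obtain ⟨e1, e2, e3, e4⟩ := this
        obtain ⟨a1, a2, a3, a4⟩ := p
        obtain ⟨b1, b2, b3, b4⟩ := p'
        simp only at e1 e2 e3 e4
        simp [e1, e2, e3, e4]
  · rw [if_neg hcyc]
    rw [Finset.card_le_one]
    intro p hp p' hp'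
    obtain ⟨hPp, hTp⟩ := hSmem p hp
    obtain ⟨hPp', hTp'⟩ := hSmem p' hp'
    by_contra hne
    have hset : ({p.1, p.2.1, p.2.2.1, p.2.2.2} : Finset (Fin n))
        = {p'.1, p'.2.1, p'.2.2.1, p'.2.2.2} := by
      have := hTp.trans hTp'.symm
      simpa [vset] using this
    rcases K1 h3 hPp hPp' hset with ⟨e1, e2, e3, e4⟩ | hcy
    · apply hne
      obtain ⟨a1, a2, a3, a4⟩ := p
      obtain ⟨b1, b2, b3, b4⟩ := p'
      simp only at e1 e2 e3 e4
      simp [e1, e2, e3, e4]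
    · exact hcyc ⟨_, _, _, _, hcy, hTp⟩

lemma p4_le_choose_add (h3 : ThreeFree E) :
    p4Count n E ≤ Nat.choose n 4 +
      3 * ((Finset.univ.powersetCard 4 : Finset (Finset (Fin n))).filter (CycSet E)).card := by
  classical
  set S4 := (Finset.univ.powersetCard 4 : Finset (Finset (Fin n))) with hS4
  have hmap : ∀ p ∈ (Finset.univ : Finset (Fin n × Fin n × Fin n × Fin n)).filter
      (fun p => IsPath4 E p.1 p.2.1 p.2.2.1 p.2.2.2), vset p ∈ S4 := by
    intro p hp
    simp only [Finset.mem_filter, Finset.mem_univ, true_and] at hp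
    rw [hS4, Finset.mem_powersetCard]
    exact ⟨Finset.subset_univ _, vset_card hp⟩
  rw [p4Count, Finset.card_eq_sum_card_fiberwise hmap]
  calc ∑ T ∈ S4, (((Finset.univ : Finset (Fin n × Fin n × Fin n × Fin n)).filter
        (fun p => IsPath4 E p.1 p.2.1 p.2.2.1 p.2.2.2)).filter (fun p => vset p = T)).card
      ≤ ∑ T ∈ S4, if CycSet E T then 4 else 1 := by
        apply Finset.sum_le_sum
        intro T hT
        exact fiber_card_le h3 T (Finset.mem_powersetCard.mp hT).2
    _ = ∑ T ∈ S4.filter (CycSet E), (if CycSet E T then 4 else 1)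
        + ∑ T ∈ S4.filter (fun T => ¬ CycSet E T), (if CycSet E T then 4 else 1) := by
        rw [Finset.sum_filter_add_sum_filter_not]
    _ = 4 * (S4.filter (CycSet E)).card + (S4.filter (fun T => ¬ CycSet E T)).card := by
        rw [Finset.sum_ite_of_true, Finset.sum_ite_of_false, Finset.sum_const, Finset.sum_const]
        · simp [mul_comm]
        · intro T hT; exact (Finset.mem_filter.mp hT).2
        · intro T hT; exact (Finset.mem_filter.mp hT).2
    _ ≤ Nat.choose n 4 + 3 * (S4.filter (CycSet E)).card := by
        have hsplit : (S4.filter (CycSet E)).card + (S4.filter (fun T => ¬ CycSet E T)).card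
            = S4.card := Finset.card_filter_add_card_filter_not _
        have : S4.card = Nat.choose n 4 := by
          rw [hS4, Finset.card_powersetCard, Finset.card_univ, Fintype.card_fin]
        omega

end Fiber

section Mantel
variable {n : ℕ} {E : Fin n → Fin n → Prop} [DecidableRel E]

lemma pair_eq {a b c d : Fin n} (hab : a ≠ b)
    (h : ({a, b} : Finset (Fin n)) = {c, d}) : (a = c ∧ b = d) ∨ (a = d ∧ b = c) := by
  have ha : a ∈ ({c, d} : Finset (Fin n)) := h ▸ (by simp)
  have hb : b ∈ ({c, d} : Finset (Fin n)) := h ▸ (by simp)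
  have hc : c ∈ ({a, b} : Finset (Fin n)) := h.symm ▸ (by simp)
  simp only [Finset.mem_insert, Finset.mem_singleton] at ha hb hc
  rcases ha with h1 | h1 <;> rcases hb with h2 | h2
  · exact absurd (h1.trans h2.symm) hab
  · exact Or.inl ⟨h1, h2⟩
  · exact Or.inr ⟨h1, h2⟩
  · exact absurd (h1.trans h2.symm) hab

lemma cyc_rot {w x y z : Fin n} (hc : IsCycle4 E w x y z) : IsCycle4 E x y z w := by
  obtain ⟨h1, h2, h3, h4, h5, h6, e1, e2, e3, e4⟩ := hc
  exact ⟨h4, h5, h1.symm, h6, h2.symm, h3.symm, e2, e3, e4, e1⟩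

/-- the set of non-adjacent unordered pairs -/
def Qpairs (n : ℕ) (E : Fin n → Fin n → Prop) [DecidableRel E] : Finset (Finset (Fin n)) :=
  ((Finset.univ : Finset (Fin n)).powersetCard 2).filter
    (fun s => ∀ x ∈ s, ∀ y ∈ s, ¬ E x y)

/-- two non-adjacent pairs are partnered if they are the diagonals of a directed 4-cycle -/
def Partnered (E : Fin n → Fin n → Prop) (e f : Finset (Fin n)) : Prop :=
  ∃ w x y z : Fin n, IsCycle4 E w x y z ∧ e = {w, y} ∧ f = {x, z}

instance (e f : Finset (Fin n)) : Decidable (Partnered E e f) := by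
  unfold Partnered; infer_instance

lemma partnered_symm {e f : Finset (Fin n)} (h : Partnered E e f) : Partnered E f e := by
  obtain ⟨w, x, y, z, hc, he, hf⟩ := h
  exact ⟨x, y, z, w, cyc_rot hc, hf, by rw [he, Finset.pair_comm]⟩

lemma diag_mem_Qpairs (h3 : ThreeFree E) {w x y z : Fin n} (hc : IsCycle4 E w x y z) :
    ({w, y} : Finset (Fin n)) ∈ Qpairs n E := by
  obtain ⟨hirr, hdig, htri⟩ := h3
  obtain ⟨h1, h2, h3', h4, h5, h6, e1, e2, e3, e4⟩ := hc
  rw [Qpairs, Finset.mem_filter]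
  constructor
  · rw [Finset.mem_powersetCard]
    refine ⟨Finset.subset_univ _, ?_⟩
    rw [Finset.card_insert_of_notMem (by simp [h2]), Finset.card_singleton]
  · intro s hs t ht
    simp only [Finset.mem_insert, Finset.mem_singleton] at hs ht
    rcases hs with rfl | rfl <;> rcases ht with rfl | rfl
    · exact hirr _
    · exact fun h => htri _ _ _ ⟨h, e3, e4⟩
    · exact fun h => htri _ _ _ ⟨h, e1, e2⟩
    · exact hirr _

lemma diag_union {w x y z : Fin n} :
    ({w, y} : Finset (Fin n)) ∪ {x, z} = {w, x, y, z} := by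
  ext t
  simp only [Finset.mem_union, Finset.mem_insert, Finset.mem_singleton]
  tauto

lemma diag_ne {w x y z : Fin n} (hc : IsCycle4 E w x y z) :
    ({w, y} : Finset (Fin n)) ≠ {x, z} := by
  obtain ⟨h1, h2, h3', h4, h5, h6, _⟩ := hc
  intro h
  have : w ∈ ({x, z} : Finset (Fin n)) := h ▸ (by simp)
  simp only [Finset.mem_insert, Finset.mem_singleton] at this
  rcases this with rfl | rfl
  · exact h1 rfl
  · exact h3' rfl

/-- The partner relation is triangle-free. -/
lemma no_ptriangle (h3 : ThreeFree E) {e f g : Finset (Fin n)}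
    (hef : Partnered E e f) (heg : Partnered E e g) (hfg : Partnered E f g) : False := by
  obtain ⟨hirr, hdig, htri⟩ := h3
  obtain ⟨u, x, v, z, hc1, he1, hf1⟩ := hef
  obtain ⟨u2, s, v2, t, hc2, he2, hg2⟩ := heg
  obtain ⟨x3, s3, z3, t3, hc3, hf3, hg3⟩ := hfg
  obtain ⟨huxn, huv, huz, hxv, hxz, hvz, Eux, Exv, Evz, Ezu⟩ := hc1
  obtain ⟨_, hu2v2, _, _, _, _, Eu2s, Esv2, Ev2t, Etu2⟩ := hc2
  obtain ⟨_, hx3z3, _, _, hs3t3, _, Ex3s3, Es3z3, Ez3t3, Et3x3⟩ := hc3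
  -- align e-labels
  have hee : ({u, v} : Finset (Fin n)) = {u2, v2} := he1.symm.trans he2
  have hff : ({x, z} : Finset (Fin n)) = {x3, z3} := hf1.symm.trans hf3
  have hgg : ({s, t} : Finset (Fin n)) = {s3, t3} := hg2.symm.trans hg3
  rcases pair_eq huv hee with ⟨rfl, rfl⟩ | ⟨hu, hv⟩
  · -- case 1 : E u s, E s v, E v t, E t u ; forbidden: edges between s and z
    rcases pair_eq hxz hff with ⟨rfl, rfl⟩ | ⟨hx, hz⟩
    · rcases pair_eq (by rintro rfl; exact hdig _ _ ⟨Eu2s, Etu2⟩ : s ≠ t) hgg with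
        ⟨rfl, rfl⟩ | ⟨hs, ht⟩
      · exact htri _ _ _ ⟨Eu2s, Es3z3, Ezu⟩
      · subst hs; subst ht
        exact htri _ _ _ ⟨Evz, Ez3t3, Esv2⟩
    · subst hx; subst hz
      rcases pair_eq (by rintro rfl; exact hdig _ _ ⟨Eu2s, Etu2⟩ : s ≠ t) hgg with
        ⟨rfl, rfl⟩ | ⟨hs, ht⟩
      · exact htri _ _ _ ⟨Evz, Ex3s3, Esv2⟩
      · subst hs; subst ht
        exact htri _ _ _ ⟨Eu2s, Et3x3, Ezu⟩
  · -- case 2 : u2 = v, v2 = u : E v s, E s u, E u t, E t v ; forbidden: edges between x and s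
    subst hu; subst hv
    rcases pair_eq hxz hff with ⟨rfl, rfl⟩ | ⟨hx, hz⟩
    · rcases pair_eq (by rintro rfl; exact hdig _ _ ⟨Eu2s, Etu2⟩ : s ≠ t) hgg with
        ⟨rfl, rfl⟩ | ⟨hs, ht⟩
      · exact htri _ _ _ ⟨Eux, Ex3s3, Esv2⟩
      · subst hs; subst ht
        exact htri _ _ _ ⟨Et3x3, Exv, Eu2s⟩
    · subst hx; subst hz
      rcases pair_eq (by rintro rfl; exact hdig _ _ ⟨Eu2s, Etu2⟩ : s ≠ t) hgg with
        ⟨rfl, rfl⟩ | ⟨hs, ht⟩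
      · exact htri _ _ _ ⟨Es3z3, Exv, Eu2s⟩
      · subst hs; subst ht
        exact htri _ _ _ ⟨Eux, Ez3t3, Esv2⟩

end Mantel

section MantelCount
variable {n : ℕ} {E : Fin n → Fin n → Prop} [DecidableRel E]

noncomputable def dg (E : Fin n → Fin n → Prop) [DecidableRel E]
    (T : Finset (Fin n)) : Finset (Fin n) × Finset (Fin n) :=
  if h : CycSet E T then
    ({h.choose, h.choose_spec.choose_spec.choose},
     {h.choose_spec.choose, h.choose_spec.choose_spec.choose_spec.choose})
  else (∅, ∅)

lemma dg_spec {T : Finset (Fin n)} (h : CycSet E T) :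
    ∃ w x y z : Fin n, IsCycle4 E w x y z ∧ ({w, x, y, z} : Finset (Fin n)) = T ∧
      dg E T = ({w, y}, {x, z}) := by
  refine ⟨h.choose, h.choose_spec.choose, h.choose_spec.choose_spec.choose,
    h.choose_spec.choose_spec.choose_spec.choose,
    h.choose_spec.choose_spec.choose_spec.choose_spec.1,
    h.choose_spec.choose_spec.choose_spec.choose_spec.2, ?_⟩
  rw [dg, dif_pos h]

/-- ordered partnered pairs -/
noncomputable def Opairs (n : ℕ) (E : Fin n → Fin n → Prop) [DecidableRel E] :
    Finset (Finset (Fin n) × Finset (Fin n)) :=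
  ((Qpairs n E) ×ˢ (Qpairs n E)).filter (fun p => p.1 ≠ p.2 ∧ Partnered E p.1 p.2)

lemma two_C_le_O (h3 : ThreeFree E) :
    2 * ((Finset.univ.powersetCard 4 : Finset (Finset (Fin n))).filter (CycSet E)).card
      ≤ (Opairs n E).card := by
  classical
  have hcard : (((Finset.univ.powersetCard 4 : Finset (Finset (Fin n))).filter (CycSet E))
      ×ˢ (Finset.univ : Finset Bool)).card
      = 2 * ((Finset.univ.powersetCard 4 : Finset (Finset (Fin n))).filter (CycSet E)).card := by
    rw [Finset.card_product]
    simp [mul_comm]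
  rw [← hcard]
  apply Finset.card_le_card_of_injOn (fun p => if p.2 then dg E p.1 else (dg E p.1).swap)
  · rintro ⟨T, b⟩ hTb
    simp only [Finset.mem_coe, Finset.mem_product, Finset.mem_filter, Finset.mem_univ, and_true] at hTb
    obtain ⟨hT4, hcyc⟩ := hTb
    obtain ⟨w, x, y, z, hc, hun, hdg⟩ := dg_spec hcyc
    have he : ({w, y} : Finset (Fin n)) ∈ Qpairs n E := diag_mem_Qpairs h3 hc
    have hf : ({x, z} : Finset (Fin n)) ∈ Qpairs n E := by
      have := diag_mem_Qpairs h3 (cyc_rot (cyc_rot hc))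
      -- cyc_rot twice : IsCycle4 y z w x, diag {y, w}... use rotation once instead
      exact (diag_mem_Qpairs h3 (cyc_rot hc))
    have hne : ({w, y} : Finset (Fin n)) ≠ {x, z} := diag_ne hc
    have hpart : Partnered E ({w, y} : Finset (Fin n)) {x, z} := ⟨w, x, y, z, hc, rfl, rfl⟩
    cases b <;> simp only [if_true, if_false, Bool.false_eq_true, hdg, Prod.swap] <;>
      rw [Opairs, Finset.mem_coe, Finset.mem_filter, Finset.mem_product]
    · exact ⟨⟨hf, he⟩, Ne.symm hne, partnered_symm hpart⟩
    · exact ⟨⟨he, hf⟩, hne, hpart⟩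
  · rintro ⟨T, b⟩ hTb ⟨T', b'⟩ hTb' heq
    simp only [Finset.mem_coe, Finset.mem_product, Finset.mem_filter, Finset.mem_univ,
      and_true] at hTb hTb'
    obtain ⟨w, x, y, z, hc, hun, hdg⟩ := dg_spec hTb.2
    obtain ⟨w', x', y', z', hc', hun', hdg'⟩ := dg_spec hTb'.2
    have hunion : ∀ (T₀ : Finset (Fin n)) (b₀ : Bool), CycSet E T₀ →
        (if b₀ then dg E T₀ else (dg E T₀).swap).1 ∪
        (if b₀ then dg E T₀ else (dg E T₀).swap).2 = T₀ := by
      intro T₀ b₀ h₀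
      obtain ⟨w₀, x₀, y₀, z₀, hc₀, hun₀, hdg₀⟩ := dg_spec h₀
      cases b₀ <;> simp only [if_true, if_false, Bool.false_eq_true, hdg₀, Prod.swap]
      · rw [Finset.union_comm, diag_union]; exact hun₀
      · rw [diag_union]; exact hun₀
    have heq2 : (if b = true then dg E T else (dg E T).swap)
        = (if b' = true then dg E T' else (dg E T').swap) := heq
    have hTT : T = T' := by
      have h1 := hunion T b hTb.2
      have h2 := hunion T' b' hTb'.2
      rw [heq2] at h1
      exact h1.symm.trans h2
    subst hTT
    have hne : ({w, y} : Finset (Fin n)) ≠ {x, z} := diag_ne hc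
    cases b <;> cases b'
    · rfl
    · exfalso
      simp only [if_true, if_false, Bool.false_eq_true, hdg, Prod.swap] at heq2
      simp only [Prod.mk.injEq] at heq2
      exact hne heq2.2
    · exfalso
      simp only [if_true, if_false, Bool.false_eq_true, hdg, Prod.swap] at heq2
      simp only [Prod.mk.injEq] at heq2
      exact hne heq2.1
    · rfl

end MantelCount

section MantelBound
variable {n : ℕ} {E : Fin n → Fin n → Prop} [DecidableRel E]

lemma mantel (h3 : ThreeFree E) :
    2 * (Opairs n E).card ≤ (Qpairs n E).card ^ 2 := by
  classical
  set Q := Qpairs n E with hQ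
  set O := Opairs n E with hO
  set D : Finset (Fin n) → ℕ := fun e => (Q.filter (fun f => e ≠ f ∧ Partnered E e f)).card
    with hD
  have hOmem : ∀ p : Finset (Fin n) × Finset (Fin n), p ∈ O ↔
      p.1 ∈ Q ∧ p.2 ∈ Q ∧ p.1 ≠ p.2 ∧ Partnered E p.1 p.2 := by
    intro p
    rw [hO, Opairs, Finset.mem_filter, Finset.mem_product]
    tauto
  have hsym : ∀ p : Finset (Fin n) × Finset (Fin n), p ∈ O → (p.2, p.1) ∈ O := by
    intro p hp
    rw [hOmem] at hp ⊢
    exact ⟨hp.2.1, hp.1, hp.2.2.1.symm, partnered_symm hp.2.2.2⟩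
  have hfib1 : ∀ e ∈ Q, (O.filter (fun p => p.1 = e)).card = D e := by
    intro e he
    apply Finset.card_bij (fun p _ => p.2)
    · intro p hp
      simp only [Finset.mem_filter] at hp
      obtain ⟨hpO, hp1⟩ := hp
      rw [hOmem] at hpO
      rw [Finset.mem_filter]
      exact ⟨hpO.2.1, hp1 ▸ hpO.2.2.1, hp1 ▸ hpO.2.2.2⟩
    · intro p hp p' hp' hps
      simp only [Finset.mem_filter] at hp hp'
      have := hp.2.trans hp'.2.symm
      exact Prod.ext this hps
    · intro f hf
      simp only [Finset.mem_filter] at hf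
      refine ⟨(e, f), ?_, rfl⟩
      simp only [Finset.mem_filter]
      exact ⟨(hOmem (e, f)).mpr ⟨he, hf.1, hf.2.1, hf.2.2⟩, trivial⟩
  have hfib2 : ∀ e ∈ Q, (O.filter (fun p => p.2 = e)).card = D e := by
    intro e he
    apply Finset.card_bij (fun p _ => p.1)
    · intro p hp
      simp only [Finset.mem_filter] at hp
      obtain ⟨hpO, hp2⟩ := hp
      have := hsym p hpO
      rw [hOmem] at this
      rw [Finset.mem_filter]
      exact ⟨this.2.1, hp2 ▸ this.2.2.1, hp2 ▸ this.2.2.2⟩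
    · intro p hp p' hp' hps
      simp only [Finset.mem_filter] at hp hp'
      have := hp.2.trans hp'.2.symm
      exact Prod.ext hps this
    · intro f hf
      simp only [Finset.mem_filter] at hf
      refine ⟨(f, e), ?_, rfl⟩
      simp only [Finset.mem_filter]
      exact ⟨(hOmem (f, e)).mpr ⟨hf.1, he, fun h => hf.2.1 h.symm, partnered_symm hf.2.2⟩, trivial⟩
  have hmapsto : ∀ p ∈ O, p.1 ∈ Q := fun p hp => ((hOmem p).mp hp).1
  have hmapsto2 : ∀ p ∈ O, p.2 ∈ Q := fun p hp => ((hOmem p).mp hp).2.1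
  have hOsum : O.card = ∑ e ∈ Q, D e := by
    rw [Finset.card_eq_sum_card_fiberwise hmapsto]
    exact Finset.sum_congr rfl hfib1
  have hsum1 : ∑ p ∈ O, D p.1 = ∑ e ∈ Q, D e * D e := by
    rw [← Finset.sum_fiberwise_of_maps_to hmapsto (fun p => D p.1)]
    apply Finset.sum_congr rfl
    intro e he
    have : ∑ p ∈ O.filter (fun p => p.1 = e), D p.1
        = ∑ p ∈ O.filter (fun p => p.1 = e), D e := by
      apply Finset.sum_congr rfl
      intro p hp
      rw [(Finset.mem_filter.mp hp).2]
    rw [this, Finset.sum_const, hfib1 e he, smul_eq_mul]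
  have hsum2 : ∑ p ∈ O, D p.2 = ∑ e ∈ Q, D e * D e := by
    rw [← Finset.sum_fiberwise_of_maps_to hmapsto2 (fun p => D p.2)]
    apply Finset.sum_congr rfl
    intro e he
    have : ∑ p ∈ O.filter (fun p => p.2 = e), D p.2
        = ∑ p ∈ O.filter (fun p => p.2 = e), D e := by
      apply Finset.sum_congr rfl
      intro p hp
      rw [(Finset.mem_filter.mp hp).2]
    rw [this, Finset.sum_const, hfib2 e he, smul_eq_mul]
  have hkey : ∀ p ∈ O, D p.1 + D p.2 ≤ Q.card := by
    intro p hp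
    rw [hOmem] at hp
    obtain ⟨h1, h2, hne, hpart⟩ := hp
    have hdisj : Disjoint (Q.filter (fun f => p.1 ≠ f ∧ Partnered E p.1 f))
        (Q.filter (fun f => p.2 ≠ f ∧ Partnered E p.2 f)) := by
      rw [Finset.disjoint_left]
      intro g hg1 hg2
      simp only [Finset.mem_filter] at hg1 hg2
      exact no_ptriangle h3 hpart hg1.2.2 hg2.2.2
    calc D p.1 + D p.2
        = ((Q.filter (fun f => p.1 ≠ f ∧ Partnered E p.1 f)) ∪
           (Q.filter (fun f => p.2 ≠ f ∧ Partnered E p.2 f))).card := by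
          rw [Finset.card_union_of_disjoint hdisj]
      _ ≤ Q.card := Finset.card_le_card (by
          apply Finset.union_subset <;> exact Finset.filter_subset _ _)
  have hNat : 2 * ∑ e ∈ Q, D e * D e ≤ O.card * Q.card := by
    have : ∑ p ∈ O, (D p.1 + D p.2) ≤ ∑ _p ∈ O, Q.card := Finset.sum_le_sum hkey
    rw [Finset.sum_add_distrib, hsum1, hsum2, Finset.sum_const, smul_eq_mul] at this
    omega
  -- Cauchy-Schwarz over ℝ
  have hCS : ((O.card : ℝ)) ^ 2 ≤ (Q.card : ℝ) * ∑ e ∈ Q, (D e : ℝ) ^ 2 := by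
    have := sq_sum_le_card_mul_sum_sq (s := Q) (f := fun e => (D e : ℝ))
    have hcast : ((O.card : ℝ)) = ∑ e ∈ Q, (D e : ℝ) := by
      rw [hOsum]; push_cast; ring
    rw [hcast]
    exact_mod_cast this
  have hNatR : 2 * ∑ e ∈ Q, (D e : ℝ) ^ 2 ≤ (O.card : ℝ) * Q.card := by
    have := hNat
    have : ((2 * ∑ e ∈ Q, D e * D e : ℕ) : ℝ) ≤ ((O.card * Q.card : ℕ) : ℝ) := by
      exact_mod_cast this
    push_cast at this
    calc 2 * ∑ e ∈ Q, (D e : ℝ) ^ 2 = 2 * ∑ e ∈ Q, (D e : ℝ) * D e := by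
          congr 1; apply Finset.sum_congr rfl; intro e _; ring
      _ ≤ (O.card : ℝ) * Q.card := this
  have hfinal : 2 * (O.card : ℝ) ≤ (Q.card : ℝ) ^ 2 := by
    rcases Nat.eq_zero_or_pos O.card with h0 | hpos
    · rw [h0]; push_cast; nlinarith [sq_nonneg ((Q.card : ℝ))]
    · have hOpos : (0 : ℝ) < O.card := by exact_mod_cast hpos
      have h1 : 2 * (O.card : ℝ) ^ 2 ≤ (Q.card : ℝ) ^ 2 * O.card := by
        nlinarith [hCS, hNatR, hOpos]
      nlinarith [h1, hOpos]
  exact_mod_cast hfinal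

end MantelBound

section Edges
variable {n : ℕ} {E : Fin n → Fin n → Prop} [DecidableRel E]

def EdgesF (n : ℕ) (E : Fin n → Fin n → Prop) [DecidableRel E] : Finset (Fin n × Fin n) :=
  (Finset.univ : Finset (Fin n × Fin n)).filter (fun p => E p.1 p.2)

lemma edges_card_eq_sum : (EdgesF n E).card = ∑ v : Fin n, outdeg n E v := by
  classical
  rw [EdgesF, Finset.card_eq_sum_card_fiberwise
    (f := Prod.fst) (t := Finset.univ) (fun p _ => Finset.mem_univ _)]
  apply Finset.sum_congr rfl
  intro v _
  rw [outdeg]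
  apply Finset.card_bij (fun p _ => p.2)
  · intro p hp
    simp only [Finset.mem_filter, Finset.mem_univ, true_and] at hp ⊢
    exact hp.2 ▸ hp.1
  · intro p hp p' hp' hps
    simp only [Finset.mem_filter, Finset.mem_univ, true_and] at hp hp'
    exact Prod.ext (hp.2.trans hp'.2.symm) hps
  · intro w hw
    simp only [Finset.mem_filter, Finset.mem_univ, true_and] at hw
    exact ⟨(v, w), by simp [hw], rfl⟩

lemma edges_add_qpairs (h3 : ThreeFree E) :
    (EdgesF n E).card + (Qpairs n E).card = Nat.choose n 2 := by
  classical
  obtain ⟨hirr, hdig, htri⟩ := h3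
  have hE : (EdgesF n E).card
      = (((Finset.univ : Finset (Fin n)).powersetCard 2).filter
        (fun s => ¬ ∀ x ∈ s, ∀ y ∈ s, ¬ E x y)).card := by
    apply Finset.card_bij (fun p _ => ({p.1, p.2} : Finset (Fin n)))
    · intro p hp
      simp only [EdgesF, Finset.mem_filter, Finset.mem_univ, true_and] at hp
      have hne : p.1 ≠ p.2 := by rintro h; exact hirr _ (h ▸ hp)
      rw [Finset.mem_filter, Finset.mem_powersetCard]
      refine ⟨⟨Finset.subset_univ _, ?_⟩, ?_⟩
      · rw [Finset.card_insert_of_notMem (by simp [hne]), Finset.card_singleton]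
      · push_neg
        exact ⟨p.1, by simp, p.2, by simp, hp⟩
    · intro p hp p' hp' hps
      simp only [EdgesF, Finset.mem_filter, Finset.mem_univ, true_and] at hp hp'
      have hne : p.1 ≠ p.2 := by rintro h; exact hirr _ (h ▸ hp)
      rcases pair_eq hne hps with ⟨h1, h2⟩ | ⟨h1, h2⟩
      · exact Prod.ext h1 h2
      · exact absurd ⟨hp, h1 ▸ h2 ▸ hp'⟩ (hdig _ _)
    · intro s hs
      simp only [Finset.mem_filter, Finset.mem_powersetCard] at hs
      obtain ⟨⟨_, hcard⟩, hne⟩ := hs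
      push_neg at hne
      obtain ⟨a, ha, b, hb, hab⟩ := hne
      refine ⟨(a, b), ?_, ?_⟩
      · simp [EdgesF, hab]
      · -- {a, b} = s
        have hanb : a ≠ b := by rintro rfl; exact hirr _ hab
        apply Finset.eq_of_subset_of_card_le
        · intro t ht
          simp only [Finset.mem_insert, Finset.mem_singleton] at ht
          rcases ht with rfl | rfl <;> assumption
        · rw [hcard, Finset.card_insert_of_notMem (by simp [hanb]), Finset.card_singleton]
  rw [hE, Qpairs]
  rw [add_comm, Finset.card_filter_add_card_filter_not]
  rw [Finset.card_powersetCard, Finset.card_univ, Fintype.card_fin]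

end Edges

section Part1
variable {n : ℕ} {E : Fin n → Fin n → Prop} [DecidableRel E]

lemma walk_isPath4 (h3 : ThreeFree E) {w x y z : Fin n}
    (h1 : E w x) (h2 : E x y) (h4 : E y z) : IsPath4 E w x y z := by
  obtain ⟨hirr, hdig, htri⟩ := h3
  refine ⟨?_, ?_, ?_, ?_, ?_, ?_, h1, h2, h4⟩
  · rintro rfl; exact hirr _ h1
  · rintro rfl; exact hdig _ _ ⟨h2, h1⟩
  · rintro rfl; exact htri _ _ _ ⟨h1, h2, h4⟩
  · rintro rfl; exact hirr _ h2
  · rintro rfl; exact hdig _ _ ⟨h4, h2⟩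
  · rintro rfl; exact hirr _ h4

lemma part1 (h3 : ThreeFree E) (d : ℕ) (hd : ∀ v, d ≤ outdeg n E v) :
    d ^ 3 * n ≤ p4Count n E := by
  classical
  set g : Fin n → Fin d → Fin n := fun v i => (Finset.univ.filter fun w => E v w).orderEmbOfCardLe (hd v) i with hg
  have hgE : ∀ v i, E v (g v i) := by
    intro v i
    have := Finset.orderEmbOfCardLe_mem (Finset.univ.filter fun w => E v w) (hd v) i
    exact (Finset.mem_filter.mp this).2
  have hginj : ∀ v, Function.Injective (g v) := fun v =>
    (Finset.orderEmbOfCardLe _ (hd v)).injective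
  set F : Fin n × Fin d × Fin d × Fin d → Fin n × Fin n × Fin n × Fin n :=
    fun p => (p.1, g p.1 p.2.1, g (g p.1 p.2.1) p.2.2.1, g (g (g p.1 p.2.1) p.2.2.1) p.2.2.2) with hF
  have hcard : (Finset.univ : Finset (Fin n × Fin d × Fin d × Fin d)).card = d ^ 3 * n := by
    simp [Finset.card_univ]; ring
  rw [← hcard, p4Count]
  apply Finset.card_le_card_of_injOn F
  · intro p _
    simp only [Finset.mem_coe, Finset.mem_filter, Finset.mem_univ, true_and, hF]
    exact walk_isPath4 h3 (hgE _ _) (hgE _ _) (hgE _ _)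
  · rintro ⟨v, i, j, k⟩ _ ⟨v', i', j', k'⟩ _ heq
    simp only [hF, Prod.mk.injEq] at heq
    obtain ⟨h1, h2, h3', h4⟩ := heq
    subst h1
    have e1 : i = i' := hginj _ h2
    subst e1
    have e2 : j = j' := hginj _ h3'
    subst e2
    have e3 : k = k' := hginj _ h4
    subst e3
    rfl

end Part1


section Main
variable {n : ℕ} {E : Fin n → Fin n → Prop} [DecidableRel E]

lemma choose4_bound (n : ℕ) : 24 * Nat.choose n 4 ≤ n ^ 4 := by
  have h1 : Nat.descFactorial n 4 = 24 * Nat.choose n 4 := by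
    rw [Nat.descFactorial_eq_factorial_mul_choose]
    norm_num [Nat.factorial]
  rw [← h1]
  exact Nat.descFactorial_le_pow n 4

lemma part2 (hn : 0 < n) (h3 : ThreeFree E) :
    ∃ v : Fin n, (outdeg n E v : ℝ) ≤ ((4 : ℝ) / 75) ^ ((1 : ℝ) / 3) * (n : ℝ) := by
  classical
  obtain ⟨v₀, _, hmin⟩ := Finset.exists_min_image (Finset.univ : Finset (Fin n))
    (outdeg n E) ⟨⟨0, hn⟩, Finset.mem_univ _⟩
  refine ⟨v₀, ?_⟩
  by_contra hcon
  push_neg at hcon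
  set c : ℝ := ((4 : ℝ) / 75) ^ ((1 : ℝ) / 3) with hcdef
  set d : ℕ := outdeg n E v₀ with hddef
  have hc0 : (0 : ℝ) ≤ c := Real.rpow_nonneg (by norm_num) _
  have hc3 : c ^ 3 = 4 / 75 := by
    rw [hcdef, ← Real.rpow_natCast (((4 : ℝ) / 75) ^ ((1 : ℝ) / 3)) 3,
      ← Real.rpow_mul (by norm_num : (0 : ℝ) ≤ (4 : ℝ) / 75)]
    norm_num
  have hrc : (3763 / 10000 : ℝ) ≤ c := by
    by_contra hrc
    push_neg at hrc
    have : c ^ 3 < (3763 / 10000 : ℝ) ^ 3 := by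
      apply pow_lt_pow_left₀ hrc hc0
      norm_num
    rw [hc3] at this
    norm_num at this
  have hd_all : ∀ v, d ≤ outdeg n E v := fun v => hmin v (Finset.mem_univ v)
  -- natural number facts
  set p4 : ℕ := p4Count n E with hp4
  set Cn : ℕ := ((Finset.univ.powersetCard 4 : Finset (Finset (Fin n))).filter
    (CycSet E)).card with hCn
  set qn : ℕ := (Qpairs n E).card with hqn
  set mn : ℕ := (EdgesF n E).card with hmn
  have hE : d ^ 3 * n ≤ p4 := part1 h3 d hd_all
  have hA : p4 ≤ Nat.choose n 4 + 3 * Cn := p4_le_choose_add h3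
  have hB : 4 * Cn ≤ qn ^ 2 := by
    have ha := two_C_le_O (E := E) h3
    have hb := mantel (E := E) h3
    rw [← hCn] at ha
    rw [← hqn] at hb
    omega
  have hC : mn + qn = Nat.choose n 2 := edges_add_qpairs h3
  have hD : n * d ≤ mn := by
    rw [hmn, edges_card_eq_sum]
    calc n * d = ∑ _v : Fin n, d := by simp [mul_comm]
      _ ≤ ∑ v : Fin n, outdeg n E v := Finset.sum_le_sum (fun v _ => hd_all v)
  have hF : 24 * Nat.choose n 4 ≤ n ^ 4 := choose4_bound n
  clear_value p4 Cn qn mn d c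
  -- real versions
  have hnr0 : (0 : ℝ) < (n : ℝ) := by exact_mod_cast hn
  have hdr0 : (0 : ℝ) ≤ (d : ℝ) := by positivity
  have hqr0 : (0 : ℝ) ≤ (qn : ℝ) := by positivity
  have hCr0 : (0 : ℝ) ≤ (Cn : ℝ) := by positivity
  have hQr : (mn : ℝ) + (qn : ℝ) = (n : ℝ) * ((n : ℝ) - 1) / 2 := by
    have h2 := Nat.cast_choose_two (K := ℝ) n
    have h1 : ((mn + qn : ℕ) : ℝ) = ((Nat.choose n 2 : ℕ) : ℝ) := by rw [hC]
    push_cast at h1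
    rw [h1, h2]
  have hmrge : (n : ℝ) * (d : ℝ) ≤ (mn : ℝ) := by exact_mod_cast hD
  have hcd : c * (n : ℝ) < (d : ℝ) := hcon
  rcases le_or_gt (n : ℝ) 4 with hn4 | hn5
  · -- small case : 2d ≤ n - 1 ≤ 2 r n ≤ 2 c n
    have h2d : 2 * ((n : ℝ) * (d : ℝ)) ≤ (n : ℝ) * ((n : ℝ) - 1) := by
      nlinarith [hmrge, hQr, hqr0]
    have hdle : 2 * (d : ℝ) ≤ (n : ℝ) - 1 := by nlinarith [h2d, hnr0]
    have hdrn : (d : ℝ) ≤ (3763 / 10000 : ℝ) * (n : ℝ) := by nlinarith [hdle, hn4]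
    nlinarith [hcd, hdrn, hrc, hnr0]
  · -- main case : n ≥ 5
    have hn5' : (5 : ℝ) ≤ (n : ℝ) := by
      have h1 : (4 : ℕ) < n := by exact_mod_cast hn5
      have h2 : (5 : ℕ) ≤ n := h1
      exact_mod_cast h2
    have hEr : (d : ℝ) ^ 3 * (n : ℝ) ≤ (p4 : ℝ) := by exact_mod_cast hE
    have hAr : (p4 : ℝ) ≤ (Nat.choose n 4 : ℝ) + 3 * (Cn : ℝ) := by exact_mod_cast hA
    have hBr : 4 * (Cn : ℝ) ≤ (qn : ℝ) ^ 2 := by exact_mod_cast hB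
    have hFr : 24 * (Nat.choose n 4 : ℝ) ≤ (n : ℝ) ^ 4 := by exact_mod_cast hF
    have S1 : 24 * ((d : ℝ) ^ 3 * (n : ℝ)) ≤ (n : ℝ) ^ 4 + 18 * (qn : ℝ) ^ 2 := by
      nlinarith [hEr, hAr, hBr, hFr]
    have hrd : (3763 / 10000 : ℝ) * (n : ℝ) < (d : ℝ) := by
      calc (3763 / 10000 : ℝ) * (n : ℝ) ≤ c * (n : ℝ) := by nlinarith [hrc, hnr0]
        _ < (d : ℝ) := hcd
    have S2 : (qn : ℝ) ≤ (n : ℝ) * ((n : ℝ) - 1) / 2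
        - (3763 / 10000 : ℝ) * (n : ℝ) * (n : ℝ) := by
      nlinarith [hQr, hmrge, hrd, hnr0]
    have S3 : (qn : ℝ) ^ 2 ≤ ((n : ℝ) * ((n : ℝ) - 1) / 2
        - (3763 / 10000 : ℝ) * (n : ℝ) * (n : ℝ)) ^ 2 :=
      pow_le_pow_left₀ hqr0 S2 2
    have S4 : (32 / 25) * (n : ℝ) ^ 4 < 24 * ((d : ℝ) ^ 3 * (n : ℝ)) := by
      have hd3 : (4 / 75) * (n : ℝ) ^ 3 < (d : ℝ) ^ 3 := by
        have h1 : (c * (n : ℝ)) ^ 3 < (d : ℝ) ^ 3 := by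
          apply pow_lt_pow_left₀ hcd (by positivity)
          norm_num
        calc (4 / 75) * (n : ℝ) ^ 3 = c ^ 3 * (n : ℝ) ^ 3 := by rw [hc3]
          _ = (c * (n : ℝ)) ^ 3 := by ring
          _ < (d : ℝ) ^ 3 := h1
      nlinarith [hd3, hnr0]
    have hfinal : (n : ℝ) ^ 4 + 18 * ((n : ℝ) * ((n : ℝ) - 1) / 2
        - (3763 / 10000 : ℝ) * (n : ℝ) * (n : ℝ)) ^ 2 ≤ (32 / 25) * (n : ℝ) ^ 4 := by
      have hx : (0 : ℝ) ≤ (n : ℝ) * (n : ℝ) * ((n : ℝ) - 5) := by nlinarith [hn5', hnr0]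
      nlinarith [hx, sq_nonneg ((n : ℝ) * (n : ℝ)), sq_nonneg (n : ℝ), hn5', hnr0]
    linarith [S1, S3, S4, hfinal]

end Main

theorem min_outdegree_bound (n : ℕ) (hn : 0 < n)
    (E : Fin n → Fin n → Prop) [DecidableRel E] (h3 : ThreeFree E)
    (d : ℕ) (hd : ∀ v, d ≤ outdeg n E v) :
    d ^ 3 * n ≤ p4Count n E ∧
      ∃ v : Fin n, (outdeg n E v : ℝ) ≤ ((4 : ℝ) / 75) ^ ((1 : ℝ) / 3) * (n : ℝ) := by
  exact ⟨part1 h3 d hd, part2 hn h3⟩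
end

section
/- Let G be a 2-free circular interval digraph on n vertices, given by a cyclic vertex ordering v_1,...,v_n such that for each i the out-neighbors of v_i are v_{i+1},...,v_{i+a_i} and the in-neighbors are v_{i−b_i},...,v_{i−1} (indices mod n). If X is a set of edges of G all of maximum length β_G, then G \ X is also a 2-free circular interval digraph. -/
/-- `E` is a circular interval digraph with respect to the standard circular order of
`Fin n`: whenever `u, v, w` are distinct and in clockwise order (i.e. `v` lies strictly
between `u` and `w` clockwise) and `u → w` is an edge, then `u → v` and `v → w` are edges. -/
def CircInterval (n : ℕ) (E : Fin n → Fin n → Prop) : Prop :=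
  ∀ u v w : Fin n, u ≠ v → v ≠ w → u ≠ w →
    cdist n u v < cdist n u w → E u w → E u v ∧ E v w

lemma cdist_eq (n : ℕ) (u v : Fin n) :
    cdist n u v = if (u : ℕ) ≤ v then (v : ℕ) - u else (v : ℕ) + n - u := by
  have hu := u.isLt
  have hv := v.isLt
  unfold cdist
  split
  · rw [Nat.mod_eq_sub_mod (by omega), Nat.mod_eq_of_lt (by omega)]
    omega
  · rw [Nat.mod_eq_of_lt (by omega)]

lemma cdist_key (n : ℕ) (u v w : Fin n) (huv : u ≠ v) (hvw : v ≠ w)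
    (h : cdist n u v < cdist n u w) : cdist n v w < cdist n u w := by
  have hu := u.isLt
  have hv := v.isLt
  have hw := w.isLt
  have h1 : (u : ℕ) ≠ v := fun e => huv (Fin.ext e)
  have h2 : (v : ℕ) ≠ w := fun e => hvw (Fin.ext e)
  simp only [cdist_eq] at h ⊢
  split at h <;> split at h <;> split <;> omega

theorem remove_longest_edges (n : ℕ) (E : Fin n → Fin n → Prop)
    (h2 : TwoFree E) (hCI : CircInterval n E)
    (X : Set (Fin n × Fin n))
    (hX : ∀ p ∈ X, E p.1 p.2 ∧ ∀ a b : Fin n, E a b → cdist n a b ≤ cdist n p.1 p.2) :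
    TwoFree (fun u v => E u v ∧ (u, v) ∉ X) ∧
      CircInterval n (fun u v => E u v ∧ (u, v) ∉ X) := by
  refine ⟨⟨fun v hv => h2.1 v hv.1, fun u v h => h2.2 u v ⟨h.1.1, h.2.1⟩⟩, ?_⟩
  intro u v w huv hvw huw hlt hE
  obtain ⟨hEuv, hEvw⟩ := hCI u v w huv hvw huw hlt hE.1
  have hvwlt : cdist n v w < cdist n u w := cdist_key n u v w huv hvw hlt
  refine ⟨⟨hEuv, fun hmem => ?_⟩, ⟨hEvw, fun hmem => ?_⟩⟩
  · exact absurd ((hX _ hmem).2 u w hE.1) (by simpa using hlt.not_ge)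
  · exact absurd ((hX _ hmem).2 u w hE.1) (by simpa using hvwlt.not_ge)
end
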